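/- arXiv:1202.2277 — 4 statements merged into one kernel-verified Lean document; each statement's English description precedes it below -/
import Mathlib

section
/- Let a < 1 be a real number, let μ ∈ ℝ, and let F be a probability measure on ℝ supported in [a,1]. Then D_inf(F,μ;𝒜_a) = D_inf(F,μ;𝒜); that is, the infimum of D(F‖G) over probability measures G supported in [a,1] with E(G) > μ equals the infimum of D(F‖G) over probability measures G supported in (-∞,1] with E(G) > μ. -/
open MeasureTheory ProbabilityTheory Set Filter
open scoped ENNReal NNReal Classical BoundedContinuousFunction

noncomputable section

/-- Kullback–Leibler divergence `D(F‖G)` between measures on ℝ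
(`+∞` unless `F ≪ G` and `log (dF/dG)` is `F`-integrable). -/
def KL (F G : Measure ℝ) : ℝ≥0∞ :=
  if F ≪ G ∧ Integrable (fun x => Real.log (F.rnDeriv G x).toReal) F
  then ENNReal.ofReal (∫ x, Real.log (F.rnDeriv G x).toReal ∂F) else ⊤

/-- `D_inf(F,μ;𝒜)`: infimum of `D(F‖G)` over probability measures `G` supported in
`(-∞,1]` with (finite) mean `E(G) > μ`.  (For `G` supported in `(-∞,1]` the mean is
well defined in `[-∞,1]`, and `E(G) > μ` holds iff `G` has integrable identity with
`∫ x dG > μ`.) -/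
def DinfSemi (F : Measure ℝ) (μ : ℝ) : ℝ≥0∞ :=
  ⨅ G ∈ {G : Measure ℝ | IsProbabilityMeasure G ∧ G (Set.Ioi 1) = 0 ∧
      Integrable (fun x : ℝ => x) G ∧ μ < ∫ x, x ∂G}, KL F G

/-- `D_inf(F,μ;𝒜_a)`: infimum of `D(F‖G)` over probability measures `G` supported in
`[a,1]` with mean `E(G) > μ`. -/
def DinfBdd (a : ℝ) (F : Measure ℝ) (μ : ℝ) : ℝ≥0∞ :=
  ⨅ G ∈ {G : Measure ℝ | IsProbabilityMeasure G ∧ G (Set.Icc a 1) = 1 ∧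
      μ < ∫ x, x ∂G}, KL F G

/-- `L(ν;F,μ) = ∫ log(1-(x-μ)ν) dF(x)`, as an extended real number in `[-∞,∞)`:
the value is `⊥ = -∞` when the integrand equals `-∞` on a non-`F`-null set or when
its (necessarily negative, for `F` supported in `(-∞,1]` with finite mean) part fails
to be integrable. -/
def LL (F : Measure ℝ) (μ ν : ℝ) : EReal :=
  if Integrable (fun x => Real.log (1 - (x - μ) * ν)) F ∧ F {x | 1 - (x - μ) * ν ≤ 0} = 0
  then ((∫ x, Real.log (1 - (x - μ) * ν) ∂F : ℝ) : EReal)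
  else ⊥

/-- `D̃_inf(F,μ) = sup_{0 ≤ ν ≤ 1/(1-μ)} L(ν;F,μ)`. -/
def Dtilde (F : Measure ℝ) (μ : ℝ) : EReal :=
  ⨆ ν ∈ Set.Icc (0 : ℝ) (1 - μ)⁻¹, LL F μ ν

/-- The moment generating function of `F` is finite in a neighborhood of the origin. -/
def MGFNearZero (F : Measure ℝ) : Prop :=
  ∃ ε > (0 : ℝ), ∀ l : ℝ, |l| < ε → Integrable (fun x => Real.exp (l * x)) F

/-- Fenchel–Legendre transform `Λ*(x) = sup_λ {λx - log ∫ e^{λu} dF(u)}` of the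
logarithmic moment generating function of `F`. -/
def Legendre (F : Measure ℝ) (x : ℝ) : EReal :=
  ⨆ l : ℝ, ((l * x : ℝ) : EReal) -
    ENNReal.log (∫⁻ y, ENNReal.ofReal (Real.exp (l * y)) ∂F)

/-- Empirical distribution `F̂_t = (1/t) ∑_{i<t} δ_{X_i}`. -/
def empMeas {Ω : Type*} [MeasurableSpace Ω] (X : ℕ → Ω → ℝ) (t : ℕ) (ω : Ω) : Measure ℝ :=
  (t : ℝ≥0∞)⁻¹ • ∑ i ∈ Finset.range t, Measure.dirac (X i ω)

/-- Empirical mean `μ̂_t = (1/t) ∑_{i<t} X_i`. -/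
def empMean {Ω : Type*} (X : ℕ → Ω → ℝ) (t : ℕ) (ω : Ω) : ℝ :=
  (∑ i ∈ Finset.range t, X i ω) / t

end

/-- For `a < 1`, `μ ∈ ℝ` and a probability measure `F` supported in
`[a,1]`, the infimum of `D(F‖G)` over probability measures `G` supported in `[a,1]`
with `E(G) > μ` equals the infimum over probability measures `G` supported in
`(-∞,1]` with `E(G) > μ`. -/
theorem stmt0 (a : ℝ) (ha : a < 1) (μ : ℝ) (F : Measure ℝ) [IsProbabilityMeasure F]
    (hF : F (Set.Icc a 1) = 1) :
    DinfBdd a F μ = DinfSemi F μ := by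
  have hS : MeasurableSet (Set.Icc a 1) := measurableSet_Icc
  apply le_antisymm
  · -- DinfBdd ≤ DinfSemi : given G supported in (-∞,1], condition it on [a,1]
    unfold DinfSemi
    refine le_iInf₂ fun G hG => ?_
    obtain ⟨hGp, hGIoi, hGint, hGmean⟩ := hG
    haveI := hGp
    by_cases hKL : F ≪ G ∧ Integrable (fun x => Real.log (F.rnDeriv G x).toReal) F
    · obtain ⟨hac, hintlog⟩ := hKL
      set c : ℝ≥0∞ := G (Set.Icc a 1) with hc
      have hcT : c ≠ ⊤ := (measure_lt_top G _).ne
      have hc1 : c ≤ 1 := prob_le_one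
      have hc0 : c ≠ 0 := by
        intro h
        have : F (Set.Icc a 1) = 0 := hac h
        rw [hF] at this; exact one_ne_zero this
      set r : ℝ := c.toReal with hrdef
      have hr0 : 0 < r := ENNReal.toReal_pos hc0 hcT
      have hr1 : r ≤ 1 := by
        have := ENNReal.toReal_mono (by simp) hc1
        simpa using this
      set G' : Measure ℝ := c⁻¹ • G.restrict (Set.Icc a 1) with hG'
      have hG'S : G' (Set.Icc a 1) = 1 := by
        rw [hG', Measure.smul_apply, Measure.restrict_apply hS, Set.inter_self,
          smul_eq_mul, ← hc, ENNReal.inv_mul_cancel hc0 hcT]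
      have hG'p : IsProbabilityMeasure G' := by
        constructor
        rw [hG', Measure.smul_apply, Measure.restrict_apply MeasurableSet.univ,
          Set.univ_inter, smul_eq_mul, ← hc, ENNReal.inv_mul_cancel hc0 hcT]
      haveI := hG'p
      -- compare the means
      have haeS : (Set.Icc a 1)ᶜ =ᵐ[G] Set.Iio a := by
        refine MeasureTheory.ae_eq_set.2 ?_
        constructor
        · refine measure_mono_null (fun x hx => ?_) hGIoi
          obtain ⟨hx1, hx2⟩ := hx
          have h2 : a ≤ x := not_lt.1 hx2
          by_contra h
          exact hx1 ⟨h2, not_lt.1 h⟩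
        · refine measure_mono_null (fun x hx => ?_) (measure_empty (μ := G))
          obtain ⟨hx1, hx2⟩ := hx
          exact (hx2 fun h => absurd hx1 (not_lt.2 h.1)).elim
      have hmassIio : G (Set.Iio a) = 1 - c := by
        have h1 : G (Set.Icc a 1)ᶜ = G (Set.Iio a) := measure_congr haeS
        rw [← h1, measure_compl hS (measure_ne_top G _), measure_univ, ← hc]
      have hmassIioR : (G (Set.Iio a)).toReal = 1 - r := by
        rw [hmassIio, ENNReal.toReal_sub_of_le hc1 (by simp)]
        simp [hrdef]
      set I : ℝ := ∫ x in Set.Icc a 1, x ∂G with hI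
      have hsplit : ∫ x, x ∂G = I + ∫ x in (Set.Icc a 1)ᶜ, x ∂G :=
        (integral_add_compl hS hGint).symm
      have hcompl : ∫ x in (Set.Icc a 1)ᶜ, x ∂G = ∫ x in Set.Iio a, x ∂G :=
        setIntegral_congr_set haeS
      have hIiobound : ∫ x in Set.Iio a, x ∂G ≤ a * (1 - r) := by
        have h1 : ∫ x in Set.Iio a, x ∂G ≤ ∫ _x in Set.Iio a, a ∂G := by
          refine setIntegral_mono_on hGint.integrableOn (integrableOn_const (measure_ne_top G _))
            measurableSet_Iio (fun x hx => le_of_lt hx)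
        rw [setIntegral_const, measureReal_def, hmassIioR, smul_eq_mul, mul_comm] at h1
        exact h1
      have hIlow : a * r ≤ I := by
        have h1 : ∫ _x in Set.Icc a 1, a ∂G ≤ I := by
          refine setIntegral_mono_on (integrableOn_const (measure_ne_top G _)) hGint.integrableOn
            hS (fun x hx => hx.1)
        rw [setIntegral_const, measureReal_def, smul_eq_mul, mul_comm] at h1
        exact h1
      have hmuI : μ * r < I := by
        have hμlt : μ < I + ∫ x in Set.Iio a, x ∂G := by
          rw [← hcompl, ← hsplit]; exact hGmean
        rcases lt_or_ge μ a with hcase | hcase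
        · nlinarith
        · nlinarith
      have hG'mean : μ < ∫ x, x ∂G' := by
        have : ∫ x, x ∂G' = r⁻¹ * I := by
          rw [hG', integral_smul_measure, ENNReal.toReal_inv, ← hrdef, ← hI, smul_eq_mul]
        rw [this]
        have := mul_lt_mul_of_pos_left hmuI (inv_pos.2 hr0)
        calc μ = r⁻¹ * (μ * r) := by field_simp
          _ < r⁻¹ * I := this
      -- compare the KL divergences
      set f : ℝ → ℝ≥0∞ := F.rnDeriv G with hfdef
      have hfmeas : Measurable f := Measure.measurable_rnDeriv F G
      have hFrestr : F.restrict (Set.Icc a 1) = F := by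
        refine Measure.restrict_eq_self_of_ae_mem ?_
        rw [MeasureTheory.ae_iff]
        have : {x : ℝ | ¬ x ∈ Set.Icc a 1} = (Set.Icc a 1)ᶜ := rfl
        rw [this, measure_compl hS (measure_ne_top F _), measure_univ, hF, tsub_self]
      have key : F = G'.withDensity (fun x => c * f x) := by
        have h0 : (fun x => c * f x) = c • f := rfl
        rw [hG', withDensity_smul_measure, h0, withDensity_smul c hfmeas, smul_smul,
          ENNReal.inv_mul_cancel hc0 hcT, one_smul, ← restrict_withDensity hS,
          Measure.withDensity_rnDeriv_eq F G hac, hFrestr]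
      have hacG' : F ≪ G' := by
        rw [key]; exact withDensity_absolutelyContinuous G' _
      have hrn : F.rnDeriv G' =ᵐ[G'] fun x => c * f x := by
        nth_rewrite 1 [key]
        exact Measure.rnDeriv_withDensity G' (hfmeas.const_mul c)
      have hrnF : ∀ᵐ x ∂F, F.rnDeriv G' x = c * f x := hacG'.ae_le hrn
      have hpos : ∀ᵐ x ∂F, 0 < f x := Measure.rnDeriv_pos hac
      have hfin : ∀ᵐ x ∂F, f x < ⊤ := hac.ae_le (Measure.rnDeriv_lt_top F G)
      have heq : (fun x => Real.log (F.rnDeriv G' x).toReal)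
          =ᵐ[F] fun x => Real.log r + Real.log ((f x).toReal) := by
        filter_upwards [hrnF, hpos, hfin] with x h1 h2 h3
        rw [h1, ENNReal.toReal_mul, ← hrdef,
          Real.log_mul (ne_of_gt hr0) (ne_of_gt (ENNReal.toReal_pos h2.ne' h3.ne))]
      have hint' : Integrable (fun x => Real.log (F.rnDeriv G' x).toReal) F :=
        ((integrable_const (Real.log r)).add hintlog).congr heq.symm
      have hKLle : KL F G' ≤ KL F G := by
        simp only [KL]
        rw [if_pos (And.intro hacG' hint'), if_pos (And.intro hac hintlog)]
        refine ENNReal.ofReal_le_ofReal ?_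
        rw [integral_congr_ae heq, integral_add (integrable_const _) hintlog,
          integral_const, probReal_univ]
        have : Real.log r ≤ 0 := Real.log_nonpos hr0.le hr1
        simp only [ENNReal.toReal_one, one_smul]
        linarith
      refine le_trans ?_ hKLle
      unfold DinfBdd
      exact iInf₂_le G' ⟨hG'p, hG'S, hG'mean⟩
    · simp only [KL, if_neg hKL]
      exact le_top
  · -- DinfSemi ≤ DinfBdd : measures supported in [a,1] are supported in (-∞,1]
    unfold DinfBdd
    refine le_iInf₂ fun G hG => ?_
    obtain ⟨hGp, hGS, hGmean⟩ := hG
    haveI := hGp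
    have hcompl : G (Set.Icc a 1)ᶜ = 0 := by
      rw [measure_compl hS (measure_ne_top G _), measure_univ, hGS, tsub_self]
    have haemem : ∀ᵐ x ∂G, x ∈ Set.Icc a 1 := by
      rw [MeasureTheory.ae_iff]
      exact hcompl
    have hGIoi : G (Set.Ioi 1) = 0 := by
      refine measure_mono_null (fun x hx => ?_) hcompl
      simp only [Set.mem_Ioi] at hx
      simp only [Set.mem_compl_iff, Set.mem_Icc]
      exact fun h => absurd hx (not_lt.2 h.2)
    have hGint : Integrable (fun x : ℝ => x) G := by
      refine Integrable.mono' (integrable_const (max |a| 1)) measurable_id.aestronglyMeasurable ?_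
      filter_upwards [haemem] with x hx
      have h1 := le_max_left |a| (1 : ℝ)
      have h2 := le_max_right |a| (1 : ℝ)
      have h3 := neg_abs_le a
      rw [Real.norm_eq_abs, abs_le]
      exact ⟨by linarith [hx.1], by linarith [hx.2]⟩
    unfold DinfSemi
    exact iInf₂_le G ⟨hGp, hGIoi, hGint, hGmean⟩
end

section
/- Let F be a probability measure on ℝ supported in (-∞,1] whose moment generating function is finite in a neighborhood of 0, and let μ < 1. Then D_inf(F,μ;𝒜) = D̃_inf(F,μ); that is, inf{D(F‖G) : G a probability measure supported in (-∞,1] with E(G) > μ} = sup_{0≤ν≤1/(1−μ)} ∫ log(1−(x−μ)ν) dF(x). -/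
set_option maxHeartbeats 1000000


open MeasureTheory ProbabilityTheory Set Filter
open scoped ENNReal NNReal Classical BoundedContinuousFunction

noncomputable section
namespace Stmt1Aux

lemma ae_le_one' (F : Measure ℝ) (hF : F (Set.Ioi 1) = 0) : ∀ᵐ x ∂F, x ≤ 1 := by
  rw [ae_iff]
  convert hF using 2
  ext x; simp [not_le]

lemma int_id' (F : Measure ℝ) [IsProbabilityMeasure F] (hmgf : ∃ ε > (0:ℝ), ∀ l : ℝ, |l| < ε → Integrable (fun x => Real.exp (l * x)) F) :
    Integrable (fun x : ℝ => x) F := by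
  obtain ⟨ε, hε, h⟩ := hmgf
  have h1 := h (ε/2) (by rw [abs_of_pos (by linarith)]; linarith)
  have h2 := h (-(ε/2)) (by rw [abs_of_neg (by linarith)]; simp; linarith)
  have hb : Integrable (fun x : ℝ => (Real.exp (ε/2*x) + Real.exp (-(ε/2)*x)) / (ε/2)) F := by
    exact (h1.add h2).div_const _
  refine hb.mono ?_ ?_
  · exact (measurable_id).aestronglyMeasurable
  · refine Eventually.of_forall fun x => ?_
    have hexp : |ε/2 * x| ≤ Real.exp (ε/2*x) + Real.exp (-(ε/2)*x) := by
      rcases le_or_gt 0 (ε/2*x) with hc | hc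
      · rw [abs_of_nonneg hc]
        have := Real.add_one_le_exp (ε/2*x)
        have := Real.exp_nonneg (-(ε/2)*x)
        linarith [Real.exp_nonneg (ε/2*x)]
      · rw [abs_of_neg hc]
        have := Real.add_one_le_exp (-(ε/2)*x)
        have : -(ε/2*x) + 1 ≤ Real.exp (-(ε/2)*x) := by
          rw [neg_mul] at this ⊢; linarith
        linarith [Real.exp_nonneg (ε/2*x), Real.exp_nonneg (-(ε/2)*x)]
    rw [Real.norm_eq_abs, Real.norm_eq_abs]
    rw [abs_of_nonneg (by positivity : (0:ℝ) ≤ (Real.exp (ε/2*x) + Real.exp (-(ε/2)*x)) / (ε/2))]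
    rw [abs_mul, abs_of_pos (by linarith : (0:ℝ) < ε/2)] at hexp
    rw [le_div_iff₀ (by linarith : (0:ℝ) < ε/2)]
    linarith

lemma partA_core (F G : Measure ℝ) [IsProbabilityMeasure F] [IsProbabilityMeasure G]
    (hG1 : ∀ᵐ x ∂G, x ≤ 1)
    (hGint : Integrable (fun x : ℝ => x) G) (μ : ℝ)
    {ν : ℝ} (hν0 : 0 ≤ ν) (hνb : ν * (1 - μ) ≤ 1) (hGmean : μ < ∫ x, x ∂G)
    (hint : Integrable (fun x => Real.log (1 - (x - μ) * ν)) F)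
    (hnull : F {x | 1 - (x - μ) * ν ≤ 0} = 0)
    (hac : F ≪ G) (hKLint : Integrable (fun x => Real.log (F.rnDeriv G x).toReal) F) :
    ∫ x, Real.log (1 - (x - μ) * ν) ∂F ≤ ∫ x, Real.log (F.rnDeriv G x).toReal ∂F := by
  set h : ℝ → ℝ := fun x => 1 - (x - μ) * ν with hh
  have hhmeas : Measurable h := by fun_prop
  have hhpos : ∀ᵐ x ∂F, 0 < h x := by
    rw [ae_iff]; convert hnull using 2; ext x; simp [hh, not_lt]
  set ρ : ℝ → ℝ := fun x => (F.rnDeriv G x).toReal with hρ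
  have hρmeas : Measurable ρ := (Measure.measurable_rnDeriv F G).ennreal_toReal
  have hρpos : ∀ᵐ x ∂F, 0 < F.rnDeriv G x := Measure.rnDeriv_pos hac
  have hρlt : ∀ᵐ x ∂F, F.rnDeriv G x < ⊤ := hac.ae_le (Measure.rnDeriv_lt_top F G)
  have hρpos' : ∀ᵐ x ∂F, 0 < ρ x := by
    filter_upwards [hρpos, hρlt] with x h1 h2
    exact ENNReal.toReal_pos h1.ne' h2.ne
  set k : ℝ → ℝ := fun x => h x / ρ x with hk
  have hkmeas : Measurable k := hhmeas.div hρmeas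
  -- h is nonneg G-a.e.
  have hhnonnegG : ∀ᵐ x ∂G, 0 ≤ h x := by
    filter_upwards [hG1] with x hx
    have : (x - μ) * ν ≤ (1 - μ) * ν := by
      apply mul_le_mul_of_nonneg_right _ hν0; linarith
    simp only [hh]; nlinarith
  -- h is G-integrable
  have hInt2 : Integrable (fun x : ℝ => (x - μ) * ν) G := by
    have h' : (fun x : ℝ => (x - μ) * ν) = fun x => ν * x - ν * μ := by ext x; ring
    rw [h']
    exact (hGint.const_mul ν).sub (integrable_const _)
  have hhintG : Integrable h G := by
    have : h = (fun _ => (1:ℝ)) - fun x => (x - μ) * ν := by ext x; simp [hh]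
    rw [this]
    exact (integrable_const 1).sub hInt2
  -- ∫ h dG ≤ 1
  have hintG_le : ∫ x, h x ∂G ≤ 1 := by
    have : ∫ x, h x ∂G = 1 - ((∫ x, x ∂G) - μ) * ν := by
      show ∫ x, (1 - (x - μ) * ν) ∂G = _
      rw [integral_sub (integrable_const 1) hInt2, integral_const]
      simp only [measure_univ, ENNReal.toReal_one, smul_eq_mul, one_mul]
      rw [integral_mul_const, integral_sub hGint (integrable_const μ), integral_const]
      simp [measure_univ]
    rw [this]
    nlinarith [mul_nonneg (by linarith : (0:ℝ) ≤ (∫ x, x ∂G) - μ) hν0]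
  -- key lintegral bound
  have key : ∫⁻ x, ENNReal.ofReal (k x) ∂F ≤ 1 := by
    have e1 : ∫⁻ x, ENNReal.ofReal (k x) ∂F
        = ∫⁻ x, F.rnDeriv G x * ENNReal.ofReal (k x) ∂G :=
      (lintegral_rnDeriv_mul hac (by fun_prop : AEMeasurable (fun x => ENNReal.ofReal (k x)) G)).symm
    have e2 : ∫⁻ x, F.rnDeriv G x * ENNReal.ofReal (k x) ∂G
        ≤ ∫⁻ x, ENNReal.ofReal (h x) ∂G := by
      apply lintegral_mono_ae
      filter_upwards [Measure.rnDeriv_lt_top F G, hhnonnegG] with x hlt hh0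
      rcases eq_or_ne (F.rnDeriv G x) 0 with h0 | h0
      · simp [h0]
      · have htr : (F.rnDeriv G x).toReal > 0 := ENNReal.toReal_pos h0 hlt.ne
        have : ENNReal.ofReal (k x) = ENNReal.ofReal (h x) / F.rnDeriv G x := by
          rw [hk]
          rw [ENNReal.ofReal_div_of_pos htr, ENNReal.ofReal_toReal hlt.ne]
        rw [this, ENNReal.mul_div_cancel h0 hlt.ne]
    have e3 : ∫⁻ x, ENNReal.ofReal (h x) ∂G = ENNReal.ofReal (∫ x, h x ∂G) :=
      (ofReal_integral_eq_lintegral_ofReal hhintG hhnonnegG).symm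
    calc ∫⁻ x, ENNReal.ofReal (k x) ∂F ≤ ENNReal.ofReal (∫ x, h x ∂G) := by
          rw [e1, ← e3]; exact e2
      _ ≤ ENNReal.ofReal 1 := ENNReal.ofReal_le_ofReal hintG_le
      _ = 1 := ENNReal.ofReal_one
  have hknonneg : ∀ᵐ x ∂F, 0 ≤ k x := by
    filter_upwards [hhpos, hρpos'] with x h1 h2
    exact le_of_lt (div_pos h1 h2)
  -- k integrable
  have hkint : Integrable k F := by
    refine ⟨hkmeas.aestronglyMeasurable, ?_⟩
    rw [hasFiniteIntegral_def]
    have : ∫⁻ x, ‖k x‖ₑ ∂F = ∫⁻ x, ENNReal.ofReal (k x) ∂F := by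
      apply lintegral_congr_ae
      filter_upwards [hknonneg] with x hx
      rw [← Real.enorm_eq_ofReal hx]
    rw [this]
    exact lt_of_le_of_lt key ENNReal.one_lt_top
  -- ∫ k ≤ 1
  have hkint_le : ∫ x, k x ∂F ≤ 1 := by
    rw [integral_eq_lintegral_of_nonneg_ae hknonneg hkmeas.aestronglyMeasurable]
    calc (∫⁻ x, ENNReal.ofReal (k x) ∂F).toReal ≤ (1 : ℝ≥0∞).toReal :=
          ENNReal.toReal_mono (by simp) key
      _ = 1 := by simp
  -- pointwise log bound
  have hptwise : ∀ᵐ x ∂F, Real.log (h x) - Real.log (ρ x) ≤ k x - 1 := by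
    filter_upwards [hhpos, hρpos'] with x h1 h2
    rw [← Real.log_div h1.ne' h2.ne']
    exact Real.log_le_sub_one_of_pos (div_pos h1 h2)
  have hsubint : Integrable (fun x => Real.log (h x) - Real.log (ρ x)) F := hint.sub hKLint
  have hsubint2 : Integrable (fun x => k x - 1) F := hkint.sub (integrable_const 1)
  have final : ∫ x, (Real.log (h x) - Real.log (ρ x)) ∂F ≤ ∫ x, (k x - 1) ∂F :=
    integral_mono_ae hsubint hsubint2 hptwise
  rw [integral_sub hint hKLint, integral_sub hkint (integrable_const 1), integral_const] at final
  simp only [measure_univ, probReal_univ, ENNReal.toReal_one, smul_eq_mul, one_mul] at final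
  linarith

-- helper: EReal vs iInf of ENNReal
lemma le_coe_ennreal_iInf {ι : Sort*} {f : ι → ℝ≥0∞} {e : EReal}
    (h : ∀ i, e ≤ (f i : EReal)) : e ≤ ((⨅ i, f i : ℝ≥0∞) : EReal) := by
  induction e using EReal.rec with
  | bot => exact bot_le
  | top =>
    have htop : ∀ i, f i = ⊤ := fun i => by
      have := h i
      rw [top_le_iff] at this
      exact EReal.coe_ennreal_eq_top_iff.mp this
    rw [iInf_eq_top.mpr htop, EReal.coe_ennreal_top]
  | coe r =>
    rcases le_or_gt r 0 with hr | hr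
    · exact le_trans (EReal.coe_nonpos.mpr hr) (EReal.coe_ennreal_nonneg _)
    · have hiff : ((ENNReal.ofReal r : ℝ≥0∞) : EReal) = (r : EReal) := by
        rw [EReal.coe_ennreal_ofReal, max_eq_left hr.le]
      have h2 : ∀ i, ENNReal.ofReal r ≤ f i := fun i => by
        rw [← EReal.coe_ennreal_le_coe_ennreal_iff, hiff]
        exact h i
      rw [← hiff, EReal.coe_ennreal_le_coe_ennreal_iff]
      exact le_iInf h2

lemma logh_int (F : Measure ℝ) [IsProbabilityMeasure F]
    (haele : ∀ᵐ x ∂F, x ≤ 1) (hxint : Integrable (fun x : ℝ => x) F) (μ : ℝ)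
    {ν : ℝ} (hν0 : 0 ≤ ν) (hνb : ν * (1 - μ) < 1) :
    Integrable (fun x => Real.log (1 - (x - μ) * ν)) F := by
  set δ : ℝ := 1 - (1 - μ) * ν with hδ
  have hδ0 : 0 < δ := by simp only [hδ]; nlinarith
  have hδh : ∀ᵐ x ∂F, δ ≤ 1 - (x - μ) * ν := by
    filter_upwards [haele] with x hx
    have : (x - μ) * ν ≤ (1 - μ) * ν := mul_le_mul_of_nonneg_right (by linarith) hν0
    simp only [hδ]; linarith
  have hbd : Integrable (fun x => ν * |x| + (|Real.log δ| + ν * |μ|)) F :=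
    (hxint.abs.const_mul ν).add (integrable_const _)
  refine Integrable.mono' hbd ((Real.measurable_log.comp (by fun_prop)).aestronglyMeasurable) ?_
  filter_upwards [hδh, haele] with x hx hx1
  have hxpos : 0 < 1 - (x - μ) * ν := lt_of_lt_of_le hδ0 hx
  rw [Real.norm_eq_abs, abs_le]
  constructor
  · have h1 : Real.log δ ≤ Real.log (1 - (x - μ) * ν) := Real.log_le_log hδ0 hx
    have h2 : -|Real.log δ| ≤ Real.log δ := neg_abs_le _
    have h3 : (0:ℝ) ≤ ν * |x| := by positivity
    have h4 : (0:ℝ) ≤ ν * |μ| := by positivity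
    linarith
  · have h1 : Real.log (1 - (x - μ) * ν) ≤ (1 - (x - μ) * ν) - 1 :=
      Real.log_le_sub_one_of_pos hxpos
    have h3 : (μ - x) * ν ≤ (|μ| + |x|) * ν := by
      apply mul_le_mul_of_nonneg_right _ hν0
      have := le_abs_self μ; have := neg_abs_le x; linarith
    have h4 : (0:ℝ) ≤ |Real.log δ| := abs_nonneg _
    nlinarith
lemma hnull_set (F : Measure ℝ) (hF1 : F (Set.Ioi 1) = 0) (μ : ℝ) (hμ : μ < 1)
    {ν : ℝ} (hν0 : 0 ≤ ν) (hνb : ν * (1 - μ) < 1) :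
    F {x | 1 - (x - μ) * ν ≤ 0} = 0 := by
  apply measure_mono_null _ hF1
  intro x hx
  simp only [Set.mem_setOf_eq] at hx
  simp only [Set.mem_Ioi]
  by_contra hc
  push_neg at hc
  have : (x - μ) * ν ≤ (1 - μ) * ν := mul_le_mul_of_nonneg_right (by linarith) hν0
  nlinarith

lemma gcont (F : Measure ℝ) [IsProbabilityMeasure F] (haele : ∀ᵐ x ∂F, x ≤ 1) {μ : ℝ} (hμ : μ < 1)
    {b : ℝ} (hb0 : 0 ≤ b) (hbb : b * (1 - μ) < 1) :
    ContinuousOn (fun ν => ∫ x, (1 - (x - μ) * ν)⁻¹ ∂F) (Set.Icc 0 b) := by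
  set δ : ℝ := 1 - (1 - μ) * b with hδ
  have hδ0 : 0 < δ := by simp only [hδ]; nlinarith
  have hkey : ∀ ν' ∈ Set.Icc 0 b, ∀ᵐ x ∂F, δ ≤ 1 - (x - μ) * ν' := by
    intro ν' hν'
    filter_upwards [haele] with x hx
    have h1 : (x - μ) * ν' ≤ (1 - μ) * ν' := mul_le_mul_of_nonneg_right (by linarith) hν'.1
    have h2 : (1 - μ) * ν' ≤ (1 - μ) * b := mul_le_mul_of_nonneg_left hν'.2 (by linarith)
    simp only [hδ]; linarith
  intro ν hν
  apply continuousWithinAt_of_dominated (bound := fun _ => δ⁻¹)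
  · exact Eventually.of_forall fun ν' => (by fun_prop : Measurable fun x : ℝ => (1 - (x - μ) * ν')⁻¹).aestronglyMeasurable
  · have : ∀ᶠ ν' in nhdsWithin ν (Set.Icc 0 b), ν' ∈ Set.Icc 0 b := eventually_mem_nhdsWithin
    filter_upwards [this] with ν' hν'
    filter_upwards [hkey ν' hν'] with x hx
    have hxpos : 0 < 1 - (x - μ) * ν' := lt_of_lt_of_le hδ0 hx
    rw [Real.norm_eq_abs, abs_of_nonneg (le_of_lt (inv_pos.mpr hxpos))]
    exact inv_anti₀ hδ0 hx
  · exact integrable_const _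
  · filter_upwards [hkey ν hν] with x hx
    have hxpos : 0 < 1 - (x - μ) * ν := lt_of_lt_of_le hδ0 hx
    apply ContinuousAt.continuousWithinAt
    exact ((continuous_const.sub ((continuous_const).mul continuous_id)).continuousAt).inv₀ hxpos.ne'

lemma select (F : Measure ℝ) [IsProbabilityMeasure F] (hF1 : F (Set.Ioi 1) = 0)
    (μ : ℝ) (hμ : μ < 1) {t : ℝ} (ht0 : 0 < t) (ht1 : t < 1) :
    ∃ ν : ℝ, 0 < ν ∧ ν * (1 - μ) < 1 ∧
      (1 - t) * (∫ x, (1 - (x - μ) * ν)⁻¹ ∂F) ≤ 1 ∧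
      (1 - t) * ((∫ x, (1 - (x - μ) * ν)⁻¹ ∂F) * (1 - μ)
        + (1 - ∫ x, (1 - (x - μ) * ν)⁻¹ ∂F) / ν) < 1 - μ := by
  have hμ1 : (0:ℝ) < 1 - μ := by linarith
  have haele : ∀ᵐ x ∂F, x ≤ 1 := by
    rw [ae_iff]; convert hF1 using 2; ext x; simp [not_le]
  set g : ℝ → ℝ := fun ν => ∫ x, (1 - (x - μ) * ν)⁻¹ ∂F with hg
  set nb : ℝ := (1 - t/2) * (1 - μ)⁻¹ with hnb
  have hnb0 : 0 < nb := by
    apply mul_pos (by linarith) (inv_pos.mpr hμ1)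
  have hnbb : nb * (1 - μ) = 1 - t/2 := by
    rw [hnb, mul_assoc, inv_mul_cancel₀ hμ1.ne', mul_one]
  have hnbb' : nb * (1 - μ) < 1 := by rw [hnbb]; linarith
  -- g nonneg
  have hgnn : ∀ ν', 0 ≤ ν' → ν' * (1 - μ) < 1 → 0 ≤ g ν' := by
    intro ν' h0 h1
    apply integral_nonneg_of_ae
    filter_upwards [haele] with x hx
    have : (x - μ) * ν' ≤ (1 - μ) * ν' := mul_le_mul_of_nonneg_right (by linarith) h0
    have hxpos : 0 < 1 - (x - μ) * ν' := by nlinarith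
    positivity
  by_cases hA : g nb ≤ (1 - t)⁻¹
  · refine ⟨nb, hnb0, hnbb', ?_, ?_⟩
    · calc (1 - t) * g nb ≤ (1 - t) * (1 - t)⁻¹ := by
            apply mul_le_mul_of_nonneg_left hA (by linarith)
        _ = 1 := mul_inv_cancel₀ (by linarith)
    · have hβ : nb⁻¹ = (1 - μ) / (1 - t/2) := by
        rw [hnb, mul_inv, inv_inv, mul_comm]
        rfl
      have hβgt : (1 - μ) < nb⁻¹ := by
        rw [hβ]
        rw [lt_div_iff₀ (by linarith)]
        nlinarith
      have hgnn' : 0 ≤ g nb := hgnn nb hnb0.le hnbb'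
      have hdiv : (1 - g nb) / nb = (1 - g nb) * nb⁻¹ := div_eq_mul_inv _ _
      rw [hdiv]
      rcases le_or_gt (g nb) 1 with hg1 | hg1
      · have key : g nb * (1 - μ) + (1 - g nb) * nb⁻¹ ≤ nb⁻¹ := by nlinarith
        have hnbinv : (1 - t) * nb⁻¹ < 1 - μ := by
          rw [hβ, ← mul_div_assoc, div_lt_iff₀ (by linarith : (0:ℝ) < 1 - t/2)]
          nlinarith
        nlinarith [hgnn']
      · have key : g nb * (1 - μ) + (1 - g nb) * nb⁻¹ < 1 - μ := by nlinarith
        nlinarith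
  · push_neg at hA
    have hcont : ContinuousOn g (Set.Icc 0 nb) := gcont F haele hμ hnb0.le hnbb'
    have hg0 : g 0 = 1 := by
      rw [hg]
      simp
    have hmem : (1 - t)⁻¹ ∈ Set.Icc (g 0) (g nb) := by
      constructor
      · rw [hg0]
        have hpos : (0:ℝ) < 1 - t := by linarith
        nlinarith [mul_inv_cancel₀ hpos.ne', inv_pos.mpr hpos]
      · exact hA.le
    obtain ⟨ν₁, hν₁mem, hgν₁⟩ := intermediate_value_Icc hnb0.le hcont hmem
    have hν₁pos : 0 < ν₁ := by
      rcases eq_or_lt_of_le hν₁mem.1 with he | hl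
      · exfalso
        rw [← he] at hgν₁
        rw [hg0] at hgν₁
        have hpos : (0:ℝ) < 1 - t := by linarith
        have hc := mul_inv_cancel₀ hpos.ne'
        rw [← hgν₁, mul_one] at hc
        linarith
      · exact hl
    refine ⟨ν₁, hν₁pos, ?_, ?_, ?_⟩
    · calc ν₁ * (1 - μ) ≤ nb * (1 - μ) := mul_le_mul_of_nonneg_right hν₁mem.2 (by linarith)
        _ < 1 := hnbb'
    · show (1 - t) * g ν₁ ≤ 1
      rw [hgν₁, mul_inv_cancel₀ (by linarith : (1:ℝ) - t ≠ 0)]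
    · show (1 - t) * (g ν₁ * (1 - μ) + (1 - g ν₁) / ν₁) < 1 - μ
      rw [hgν₁]
      have hq : (1 - t) * (1 - t)⁻¹ = 1 := mul_inv_cancel₀ (by linarith)
      have hid : (1 - t) * ((1 - t)⁻¹ * (1 - μ) + (1 - (1 - t)⁻¹) / ν₁)
          = (1 - μ) - t / ν₁ := by
        rw [mul_add, ← mul_assoc, hq, one_mul, mul_div_assoc', mul_sub, mul_one, hq]
        ring
      rw [hid]
      have : 0 < t / ν₁ := div_pos ht0 hν₁pos
      linarith
lemma partB_core (F : Measure ℝ) [IsProbabilityMeasure F] (hF1 : F (Set.Ioi 1) = 0)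
    (hxint : Integrable (fun x : ℝ => x) F) (μ : ℝ) (hμ : μ < 1)
    {ν t : ℝ} (hν0 : 0 < ν) (hνb : ν * (1 - μ) < 1) (ht0 : 0 < t) (ht1 : t < 1)
    (hgle : (1 - t) * (∫ x, (1 - (x - μ) * ν)⁻¹ ∂F) ≤ 1)
    (hmean : (1 - t) * ((∫ x, (1 - (x - μ) * ν)⁻¹ ∂F) * (1 - μ)
        + (1 - ∫ x, (1 - (x - μ) * ν)⁻¹ ∂F) / ν) < 1 - μ) :
    ∃ G : Measure ℝ, (IsProbabilityMeasure G ∧ G (Set.Ioi 1) = 0 ∧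
        Integrable (fun x : ℝ => x) G ∧ μ < ∫ x, x ∂G) ∧
      KL F G ≤ ENNReal.ofReal ((∫ x, Real.log (1 - (x - μ) * ν) ∂F) - Real.log (1 - t)) := by
  have hμ1 : (0:ℝ) < 1 - μ := by linarith
  set h : ℝ → ℝ := fun x => 1 - (x - μ) * ν with hh
  have hhmeas : Measurable h := by fun_prop
  set δ : ℝ := 1 - (1 - μ) * ν with hδ
  have hδ0 : 0 < δ := by simp only [hδ]; nlinarith
  have hone : ∀ x : ℝ, x ≤ 1 → δ ≤ h x := by
    intro x hx
    simp only [hδ, hh]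
    have : (x - μ) * ν ≤ (1 - μ) * ν := by
      apply mul_le_mul_of_nonneg_right _ hν0.le; linarith
    linarith
  have haele : ∀ᵐ x ∂F, x ≤ 1 := by
    rw [ae_iff]; convert hF1 using 2; ext x; simp [not_le]
  have hδh : ∀ᵐ x ∂F, δ ≤ h x := by filter_upwards [haele] with x hx using hone x hx
  -- integrability of h⁻¹
  have hinvmeas : Measurable (fun x => (h x)⁻¹) := hhmeas.inv
  have hinvint : Integrable (fun x => (h x)⁻¹) F := by
    refine Integrable.mono' (integrable_const δ⁻¹) hinvmeas.aestronglyMeasurable ?_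
    filter_upwards [hδh] with x hx
    have hx0 : 0 < h x := lt_of_lt_of_le hδ0 hx
    rw [Real.norm_eq_abs, abs_of_nonneg (le_of_lt (inv_pos.mpr hx0))]
    exact inv_anti₀ hδ0 hx
  set gv : ℝ := ∫ x, (h x)⁻¹ ∂F with hgv
  have hinvnonneg : ∀ᵐ x ∂F, 0 ≤ (h x)⁻¹ := by
    filter_upwards [hδh] with x hx
    exact le_of_lt (inv_pos.mpr (lt_of_lt_of_le hδ0 hx))
  have hgv0 : 0 ≤ gv := integral_nonneg_of_ae hinvnonneg
  -- the measures
  set G0 : Measure ℝ := F.withDensity (fun x => ENNReal.ofReal (h x)⁻¹) with hG0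
  set c₁ : ℝ≥0∞ := ENNReal.ofReal (1 - t) with hc₁
  set c₂ : ℝ≥0∞ := 1 - ENNReal.ofReal (1 - t) * ENNReal.ofReal gv with hc₂
  set G : Measure ℝ := c₁ • G0 + c₂ • Measure.dirac 1 with hGdef
  have hdmeas : Measurable (fun x => ENNReal.ofReal (h x)⁻¹) := by fun_prop
  have hG0univ : G0 univ = ENNReal.ofReal gv := by
    rw [hG0, withDensity_apply _ MeasurableSet.univ, Measure.restrict_univ,
      ← ofReal_integral_eq_lintegral_ofReal hinvint hinvnonneg]
  have hprod : c₁ * ENNReal.ofReal gv = ENNReal.ofReal ((1 - t) * gv) := by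
    rw [hc₁, ENNReal.ofReal_mul (by linarith)]
  have hprodle : c₁ * ENNReal.ofReal gv ≤ 1 := by
    rw [hprod]; exact ENNReal.ofReal_le_one.mpr hgle
  have hGuniv : G univ = 1 := by
    simp only [hGdef, Measure.add_apply, Measure.smul_apply, smul_eq_mul]
    rw [hG0univ, Measure.dirac_apply' _ MeasurableSet.univ]
    simp only [mem_univ, indicator_of_mem, Pi.one_apply, mul_one]
    rw [hc₂, ← hc₁, add_comm]
    exact tsub_add_cancel_of_le hprodle
  have hGprob : IsProbabilityMeasure G := ⟨hGuniv⟩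
  have hc₁top : c₁ ≠ ⊤ := ENNReal.ofReal_ne_top
  have hc₂top : c₂ ≠ ⊤ := by
    rw [hc₂]
    exact (tsub_le_self.trans_lt ENNReal.one_lt_top).ne
  -- support
  have hGIoi : G (Set.Ioi 1) = 0 := by
    simp only [hGdef, Measure.add_apply, Measure.smul_apply, smul_eq_mul]
    rw [hG0, withDensity_apply _ measurableSet_Ioi, setLIntegral_measure_zero _ _ hF1,
      Measure.dirac_apply' _ measurableSet_Ioi]
    simp
  -- integrability of x under G0 and G
  have hxG0aux : Integrable (fun x => x * (ENNReal.ofReal (h x)⁻¹).toReal) F := by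
    refine Integrable.mono' (hxint.abs.mul_const δ⁻¹) ?_ ?_
    · exact (measurable_id.mul hdmeas.ennreal_toReal).aestronglyMeasurable
    · filter_upwards [hδh] with x hx
      have hx0 : 0 < h x := lt_of_lt_of_le hδ0 hx
      rw [Real.norm_eq_abs, abs_mul, ENNReal.toReal_ofReal (le_of_lt (inv_pos.mpr hx0)),
        abs_of_nonneg (le_of_lt (inv_pos.mpr hx0))]
      exact mul_le_mul_of_nonneg_left (inv_anti₀ hδ0 hx) (abs_nonneg x)
  have hxG0 : Integrable (fun x : ℝ => x) G0 := by
    rw [hG0, integrable_withDensity_iff hdmeas (Eventually.of_forall fun x => ENNReal.ofReal_lt_top)]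
    exact hxG0aux
  have hxdirac : Integrable (fun x : ℝ => x) (Measure.dirac (1:ℝ)) := by
    refine ⟨measurable_id.aestronglyMeasurable, ?_⟩
    rw [hasFiniteIntegral_def, lintegral_dirac]
    exact ENNReal.coe_lt_top
  have hxG : Integrable (fun x : ℝ => x) G := by
    rw [hGdef]
    exact (hxG0.smul_measure hc₁top).add_measure (hxdirac.smul_measure hc₂top)
  -- mean computation
  have hident : ∀ᵐ x ∂F, (((h x)⁻¹).toNNReal : ℝ≥0) • x = μ * (h x)⁻¹ + ((h x)⁻¹ - 1) / ν := by
    filter_upwards [hδh] with x hx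
    have hxpos : 0 < h x := lt_of_lt_of_le hδ0 hx
    have hx0 : h x ≠ 0 := hxpos.ne'
    have hcoe : ((((h x)⁻¹).toNNReal : ℝ≥0) : ℝ) = (h x)⁻¹ :=
      Real.coe_toNNReal _ (le_of_lt (inv_pos.mpr hxpos))
    rw [NNReal.smul_def, smul_eq_mul, hcoe]
    have hxv : (x - μ) * ν = 1 - h x := by simp [hh]
    have e1 : (x - μ) * (h x)⁻¹ * ν = (h x)⁻¹ - 1 := by
      have e0 : (x - μ) * (h x)⁻¹ * ν = (1 - h x) * (h x)⁻¹ := by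
        rw [← hxv]; ring
      rw [e0, sub_mul, one_mul, mul_inv_cancel₀ hx0]
    rw [← e1, mul_div_assoc, div_self hν0.ne', mul_one]
    ring
  have hmeanG0 : ∫ x, x ∂G0 = μ * gv + (gv - 1) / ν := by
    have hfnn : (fun x => ENNReal.ofReal (h x)⁻¹) = (fun x => ((((h x)⁻¹).toNNReal : ℝ≥0) : ℝ≥0∞)) := by
      ext x; rfl
    rw [hG0, hfnn, integral_withDensity_eq_integral_smul (by fun_prop) (fun x : ℝ => x)]
    rw [integral_congr_ae hident]
    have hint1 : Integrable (fun x => μ * (h x)⁻¹) F := hinvint.const_mul μ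
    have hint2 : Integrable (fun x => ((h x)⁻¹ - 1) / ν) F :=
      (hinvint.sub (integrable_const 1)).div_const ν
    rw [integral_add hint1 hint2, integral_const_mul, integral_div,
      integral_sub hinvint (integrable_const 1), integral_const]
    simp [measure_univ, ← hgv]
  -- value of c₂.toReal
  have hc₂r : c₂.toReal = 1 - (1 - t) * gv := by
    rw [hc₂, ENNReal.toReal_sub_of_le hprodle ENNReal.one_ne_top, hprod,
      ENNReal.toReal_ofReal (by nlinarith), ENNReal.toReal_one]
  have hc₁r : c₁.toReal = 1 - t := by
    rw [hc₁, ENNReal.toReal_ofReal (by linarith)]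
  have hmeanG : ∫ x, x ∂G = (1 - t) * (μ * gv + (gv - 1) / ν) + (1 - (1 - t) * gv) := by
    rw [hGdef, integral_add_measure (hxG0.smul_measure hc₁top) (hxdirac.smul_measure hc₂top),
      integral_smul_measure, integral_smul_measure, integral_dirac, hmeanG0, hc₂r, hc₁r]
    simp
  have hmeangt : μ < ∫ x, x ∂G := by
    rw [hmeanG]
    have hrw : (gv - 1) / ν = -((1 - gv) / ν) := by ring
    have hrw2 : (1 - gv) / ν = (1 - gv) / ν := rfl
    nlinarith [hmean]
  -- the density of F with respect to G
  set φ : ℝ → ℝ≥0∞ := fun x => if x = 1 then F {1} / G {1} else ENNReal.ofReal (h x / (1 - t))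
    with hφ
  have hφmeas : Measurable φ :=
    Measurable.ite measurableSet_eq measurable_const (by fun_prop)
  have hG0atom : G0 {1} = ENNReal.ofReal δ⁻¹ * F {1} := by
    rw [hG0, withDensity_apply _ (measurableSet_singleton 1), lintegral_singleton' hdmeas]
  have hGatomge : c₁ * G0 {1} ≤ G {1} := by
    rw [hGdef]
    simp only [Measure.add_apply, Measure.smul_apply, smul_eq_mul]
    exact le_add_right le_rfl
  have hG1ne0 : F {1} ≠ 0 → G {1} ≠ 0 := by
    intro hFne hGeq
    rw [hGeq] at hGatomge
    have : c₁ * G0 {1} = 0 := le_antisymm hGatomge zero_le'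
    rw [hG0atom] at this
    rcases mul_eq_zero.mp this with hc | hc
    · exact (ENNReal.ofReal_pos.mpr (by linarith)).ne' hc
    · rcases mul_eq_zero.mp hc with hc' | hc'
      · exact (ENNReal.ofReal_pos.mpr (inv_pos.mpr hδ0)).ne' hc'
      · exact hFne hc'
  have hwd : G.withDensity φ = F := by
    ext A hA
    rw [withDensity_apply _ hA]
    have hS : MeasurableSet (A \ {1}) := hA.diff (measurableSet_singleton 1)
    have hT : MeasurableSet (A ∩ {1}) := hA.inter (measurableSet_singleton 1)
    have hsplit : A = (A \ {1}) ∪ (A ∩ {1}) := (Set.diff_union_inter A {1}).symm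
    have hdisj : Disjoint (A \ {1}) (A ∩ {1}) := by
      rw [Set.disjoint_left]
      rintro x ⟨hxA, hx1⟩ ⟨_, hx1'⟩
      exact hx1 hx1'
    rw [show ∫⁻ x in A, φ x ∂G = ∫⁻ x in (A \ {1}) ∪ (A ∩ {1}), φ x ∂G by rw [← hsplit],
      lintegral_union hT hdisj]
    have hpart1 : ∫⁻ x in A \ {1}, φ x ∂G = F (A \ {1}) := by
      rw [hGdef, Measure.restrict_add, Measure.restrict_smul, Measure.restrict_smul,
        lintegral_add_measure, lintegral_smul_measure, lintegral_smul_measure]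
      have hdirac0 : (Measure.dirac (1:ℝ)).restrict (A \ {1}) = 0 := by
        rw [Measure.restrict_eq_zero, Measure.dirac_apply' _ hS]
        simp
      rw [hdirac0, lintegral_zero_measure, smul_zero, add_zero]
      rw [hG0, restrict_withDensity hS, lintegral_withDensity_eq_lintegral_mul _ hdmeas hφmeas]
      have hcongr : ∫⁻ x in A \ {1}, (ENNReal.ofReal (h x)⁻¹ * φ x) ∂F
          = ∫⁻ _ in A \ {1}, ENNReal.ofReal (1 - t)⁻¹ ∂F := by
        apply lintegral_congr_ae
        filter_upwards [ae_restrict_mem hS, ae_restrict_of_ae hδh] with x hxS hxδ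
        have hx0 : h x ≠ 0 := (lt_of_lt_of_le hδ0 hxδ).ne'
        have hxne1 : x ≠ 1 := hxS.2
        rw [hφ]
        simp only [if_neg hxne1]
        rw [← ENNReal.ofReal_mul (le_of_lt (inv_pos.mpr (lt_of_lt_of_le hδ0 hxδ)))]
        congr 1
        field_simp
      calc c₁ * ∫⁻ x in A \ {1}, ((fun x => ENNReal.ofReal (h x)⁻¹) * φ) x ∂F
          = c₁ * ∫⁻ _ in A \ {1}, ENNReal.ofReal (1 - t)⁻¹ ∂F := by
            rw [← hcongr]; rfl
        _ = c₁ * (ENNReal.ofReal (1 - t)⁻¹ * F (A \ {1})) := by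
            rw [lintegral_const, Measure.restrict_apply_univ]
        _ = F (A \ {1}) := by
            rw [← mul_assoc, hc₁, ← ENNReal.ofReal_mul (by linarith),
              mul_inv_cancel₀ (by linarith : (1:ℝ) - t ≠ 0), ENNReal.ofReal_one, one_mul]
    have hpart2 : ∫⁻ x in A ∩ {1}, φ x ∂G = F (A ∩ {1}) := by
      by_cases h1A : (1:ℝ) ∈ A
      · have hTeq : A ∩ {1} = {1} := Set.inter_eq_self_of_subset_right
          (Set.singleton_subset_iff.mpr h1A)
        rw [hTeq, lintegral_singleton' hφmeas]
        rw [hφ]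
        simp only [eq_self_iff_true, if_true]
        by_cases hF1z : F {1} = 0
        · simp [hF1z]
        · rw [ENNReal.div_mul_cancel (hG1ne0 hF1z) (measure_ne_top G {1})]
      · have hTeq : A ∩ {1} = ∅ := by
          ext x; simp only [Set.mem_inter_iff, Set.mem_singleton_iff, Set.mem_empty_iff_false,
            iff_false, not_and]
          rintro hxA rfl; exact h1A hxA
        rw [hTeq]
        simp
    rw [hpart1, hpart2, add_comm]
    exact measure_inter_add_diff A (measurableSet_singleton 1)
  -- absolute continuity and rnDeriv
  haveI := hGprob
  have hac : F ≪ G := hwd ▸ withDensity_absolutelyContinuous G φ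
  have hrnφ : F.rnDeriv G =ᵐ[G] φ := by
    rw [← hwd]
    exact Measure.rnDeriv_withDensity G hφmeas
  have hrnφF : F.rnDeriv G =ᵐ[F] φ := hac.ae_le hrnφ
  have hδ1 : h 1 = δ := by simp [hh, hδ]
  set κ : ℝ := Real.log ((F {1} / G {1}).toReal) - Real.log (δ / (1 - t)) with hκ
  -- a.e. description of log φ
  have hψeq : ∀ᵐ x ∂F, Real.log ((φ x).toReal)
      = Real.log (h x / (1 - t)) + Set.indicator {(1:ℝ)} (fun _ => κ) x := by
    filter_upwards [hδh] with x hx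
    by_cases hx1 : x = 1
    · subst hx1
      rw [hφ]
      simp only [eq_self_iff_true, if_true]
      rw [Set.indicator_of_mem (Set.mem_singleton 1), hκ, hδ1]
      ring
    · rw [hφ]
      simp only [if_neg hx1]
      rw [Set.indicator_of_notMem (by simpa using hx1), add_zero,
        ENNReal.toReal_ofReal (div_nonneg (le_of_lt (lt_of_lt_of_le hδ0 hx)) (by linarith))]
  -- integrability of log h
  have hlogh_int : Integrable (fun x => Real.log (h x)) F := by
    have hbd : Integrable (fun x => ν * |x| + (|Real.log δ| + ν * |μ|)) F :=
      (hxint.abs.const_mul ν).add (integrable_const _)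
    refine Integrable.mono' hbd ((Real.measurable_log.comp hhmeas).aestronglyMeasurable) ?_
    filter_upwards [hδh, haele] with x hx hx1
    have hxpos : 0 < h x := lt_of_lt_of_le hδ0 hx
    rw [Real.norm_eq_abs, abs_le]
    constructor
    · have : Real.log δ ≤ Real.log (h x) := Real.log_le_log hδ0 hx
      have h2 : -|Real.log δ| ≤ Real.log δ := neg_abs_le _
      have h3 : (0:ℝ) ≤ ν * |x| := by positivity
      have h4 : (0:ℝ) ≤ ν * |μ| := by positivity
      linarith
    · have h1 : Real.log (h x) ≤ h x - 1 := Real.log_le_sub_one_of_pos hxpos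
      have h2 : h x - 1 = (μ - x) * ν := by simp [hh]; ring
      have h3 : (μ - x) * ν ≤ (|μ| + |x|) * ν := by
        apply mul_le_mul_of_nonneg_right _ hν0.le
        have := abs_nonneg x
        have := le_abs_self μ
        have := neg_abs_le x
        linarith
      have h4 : (0:ℝ) ≤ |Real.log δ| := abs_nonneg _
      nlinarith
  -- integrability of log (h/(1-t)) and the indicator
  have hlogdiv_eq : ∀ᵐ x ∂F, Real.log (h x / (1 - t)) = Real.log (h x) - Real.log (1 - t) := by
    filter_upwards [hδh] with x hx
    exact Real.log_div (lt_of_lt_of_le hδ0 hx).ne' (by linarith)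
  have hlogdiv_int : Integrable (fun x => Real.log (h x / (1 - t))) F :=
    (Integrable.congr (hlogh_int.sub (integrable_const (Real.log (1 - t))))
      (hlogdiv_eq.mono fun x hx => hx.symm))
  have hκind_int : Integrable (Set.indicator {(1:ℝ)} (fun _ => κ)) F :=
    (integrable_const κ).indicator (measurableSet_singleton 1)
  have hψint : Integrable (fun x => Real.log ((φ x).toReal)) F :=
    Integrable.congr (hlogdiv_int.add hκind_int) (hψeq.mono fun x hx => hx.symm)
  have hKLint : Integrable (fun x => Real.log (F.rnDeriv G x).toReal) F := by
    refine hψint.congr ?_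
    filter_upwards [hrnφF] with x hx
    rw [hx]
  -- bound on the atom term
  have hκterm : κ * (F {1}).toReal ≤ 0 := by
    by_cases hF1z : F {1} = 0
    · simp [hF1z]
    · have hG1z : G {1} ≠ 0 := hG1ne0 hF1z
      have hG1top : G {1} ≠ ⊤ := measure_ne_top G {1}
      set q : ℝ≥0∞ := ENNReal.ofReal ((1 - t) * δ⁻¹) with hq
      have hq0 : q ≠ 0 := (ENNReal.ofReal_pos.mpr (mul_pos (by linarith) (inv_pos.mpr hδ0))).ne'
      have hqtop : q ≠ ⊤ := ENNReal.ofReal_ne_top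
      have hge : q * F {1} ≤ G {1} := by
        refine le_trans (le_of_eq ?_) hGatomge
        rw [hG0atom, hc₁, ← mul_assoc, ← ENNReal.ofReal_mul (by linarith), hq]
      have hdivle : F {1} / G {1} ≤ F {1} / (q * F {1}) :=
        ENNReal.div_le_div_left hge (F {1})
      have hcancel : F {1} / (q * F {1}) = q⁻¹ := by
        rw [div_eq_mul_inv, ENNReal.mul_inv (Or.inl hq0) (Or.inl hqtop), ← mul_assoc,
          mul_comm (F {1}) q⁻¹, mul_assoc, ENNReal.mul_inv_cancel hF1z (measure_ne_top F {1}),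
          mul_one]
      have hqinv : q⁻¹ = ENNReal.ofReal (δ / (1 - t)) := by
        rw [hq, ← ENNReal.ofReal_inv_of_pos (mul_pos (by linarith) (inv_pos.mpr hδ0))]
        congr 1
        field_simp
      have hr1le : (F {1} / G {1}).toReal ≤ δ / (1 - t) := by
        have := hdivle.trans_eq (hcancel.trans hqinv)
        calc (F {1} / G {1}).toReal ≤ (ENNReal.ofReal (δ / (1 - t))).toReal :=
              ENNReal.toReal_mono ENNReal.ofReal_ne_top this
          _ = δ / (1 - t) := ENNReal.toReal_ofReal (div_nonneg hδ0.le (by linarith))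
      have hr1pos : 0 < (F {1} / G {1}).toReal := by
        apply ENNReal.toReal_pos
        · exact (ENNReal.div_pos hF1z hG1top).ne'
        · exact (ENNReal.div_lt_top (measure_ne_top F {1}) hG1z).ne
      have hκle : κ ≤ 0 := by
        rw [hκ, sub_nonpos]
        exact Real.log_le_log hr1pos hr1le
      exact mul_nonpos_of_nonpos_of_nonneg hκle ENNReal.toReal_nonneg
  -- conclusion
  refine ⟨G, ⟨hGprob, hGIoi, hxG, hmeangt⟩, ?_⟩
  rw [KL, if_pos ⟨hac, hKLint⟩]
  apply ENNReal.ofReal_le_ofReal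
  have e1 : ∫ x, Real.log (F.rnDeriv G x).toReal ∂F = ∫ x, Real.log ((φ x).toReal) ∂F := by
    apply integral_congr_ae
    filter_upwards [hrnφF] with x hx
    rw [hx]
  have e2 : ∫ x, Real.log ((φ x).toReal) ∂F
      = (∫ x, Real.log (h x / (1 - t)) ∂F) + κ * (F {1}).toReal := by
    rw [integral_congr_ae hψeq, integral_add hlogdiv_int hκind_int]
    congr 1
    rw [integral_indicator_const _ (measurableSet_singleton 1)]
    simp [mul_comm]; exact Or.inl rfl
  have e3 : ∫ x, Real.log (h x / (1 - t)) ∂F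
      = (∫ x, Real.log (h x) ∂F) - Real.log (1 - t) := by
    rw [integral_congr_ae hlogdiv_eq,
      integral_sub hlogh_int (integrable_const (Real.log (1 - t))), integral_const]
    simp [measure_univ]
  rw [e1, e2, e3]
  linarith [hκterm]
end Stmt1Aux
end
/-- For a probability measure `F` supported in `(-∞,1]` with finite
moment generating function near `0` and `μ < 1`, `D_inf(F,μ;𝒜) = D̃_inf(F,μ)`. -/
theorem stmt1 (F : Measure ℝ) [IsProbabilityMeasure F] (hF : F (Set.Ioi 1) = 0)
    (hmgf : MGFNearZero F) (μ : ℝ) (hμ : μ < 1) :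
    (DinfSemi F μ : EReal) = Dtilde F μ := by
  classical
  have hμ1 : (0:ℝ) < 1 - μ := by linarith
  have haeleF : ∀ᵐ x ∂F, x ≤ 1 := by
    rw [ae_iff]; convert hF using 2; ext x; simp [not_le]
  have hxint : Integrable (fun x : ℝ => x) F := Stmt1Aux.int_id' F hmgf
  -- the value of LL at 0 is 0
  have hLL0 : LL F μ 0 = (0 : EReal) := by
    rw [LL, if_pos ⟨Stmt1Aux.logh_int F haeleF hxint μ le_rfl (by nlinarith),
      Stmt1Aux.hnull_set F hF μ hμ le_rfl (by nlinarith)⟩]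
    norm_num
  have h0le : (0 : EReal) ≤ Dtilde F μ := by
    rw [← hLL0, Dtilde]
    exact le_iSup₂ (f := fun ν _ => LL F μ ν) 0 ⟨le_rfl, by positivity⟩
  apply le_antisymm
  · -- hard direction: DinfSemi ≤ Dtilde
    have key : ∀ ε : ℝ, 0 < ε → (DinfSemi F μ : EReal) ≤ Dtilde F μ + (ε : EReal) := by
      intro ε hε
      set t : ℝ := 1 - Real.exp (-ε) with ht
      have hexp : Real.exp (-ε) < 1 := by
        rw [← Real.exp_zero]
        exact Real.exp_lt_exp.mpr (by linarith)
      have ht0 : 0 < t := by simp only [ht]; linarith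
      have ht1 : t < 1 := by
        have := Real.exp_pos (-ε); simp only [ht]; linarith
      have hlog : Real.log (1 - t) = -ε := by
        simp only [ht, sub_sub_cancel, Real.log_exp]
      obtain ⟨ν, hν0, hνb, hgle, hmean⟩ := Stmt1Aux.select F hF μ hμ ht0 ht1
      obtain ⟨G, hGmem, hKLle⟩ := Stmt1Aux.partB_core F hF hxint μ hμ hν0 hνb ht0 ht1 hgle hmean
      have hD : DinfSemi F μ ≤ KL F G := by
        rw [DinfSemi]
        exact iInf₂_le G hGmem
      set Lν : ℝ := ∫ x, Real.log (1 - (x - μ) * ν) ∂F with hLν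
      have hνle : ν ≤ (1 - μ)⁻¹ := by
        have h2 := mul_le_mul_of_nonneg_right hνb.le (le_of_lt (inv_pos.mpr hμ1))
        rwa [one_mul, mul_assoc, mul_inv_cancel₀ hμ1.ne', mul_one] at h2
      have hLL : LL F μ ν = (Lν : EReal) := by
        rw [LL, if_pos ⟨Stmt1Aux.logh_int F haeleF hxint μ hν0.le hνb,
          Stmt1Aux.hnull_set F hF μ hμ hν0.le hνb⟩]
      have hLLle : (Lν : EReal) ≤ Dtilde F μ := by
        rw [← hLL, Dtilde]
        exact le_iSup₂ (f := fun ν' _ => LL F μ ν') ν ⟨hν0.le, hνle⟩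
      calc (DinfSemi F μ : EReal) ≤ (KL F G : EReal) :=
            EReal.coe_ennreal_le_coe_ennreal_iff.mpr hD
        _ ≤ ((ENNReal.ofReal (Lν - Real.log (1 - t)) : ℝ≥0∞) : EReal) :=
            EReal.coe_ennreal_le_coe_ennreal_iff.mpr hKLle
        _ = ((max (Lν - Real.log (1 - t)) 0 : ℝ) : EReal) := EReal.coe_ennreal_ofReal
        _ = ((max (Lν + ε) 0 : ℝ) : EReal) := by rw [hlog, sub_neg_eq_add]
        _ ≤ ((max Lν 0 + ε : ℝ) : EReal) := EReal.coe_le_coe_iff.mpr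
            (max_le (add_le_add_left (le_max_left _ _) ε) (by linarith [le_max_right Lν 0]))
        _ = ((max Lν 0 : ℝ) : EReal) + (ε : EReal) := EReal.coe_add _ _
        _ ≤ Dtilde F μ + (ε : EReal) := by
            refine add_le_add_left ?_ _
            rcases max_cases Lν 0 with ⟨hmax, _⟩ | ⟨hmax, _⟩
            · rw [hmax]; exact hLLle
            · rw [hmax]; exact h0le
    rcases eq_or_ne (Dtilde F μ) ⊤ with htop | htop
    · rw [htop]; exact le_top
    · have hbot : Dtilde F μ ≠ ⊥ := by
        intro hb
        rw [hb] at h0le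
        simp at h0le
      have hrr : (((Dtilde F μ).toReal : ℝ) : EReal) = Dtilde F μ := EReal.coe_toReal htop hbot
      rw [← hrr]
      refine EReal.le_of_forall_lt_iff_le.mp (fun z hz => ?_)
      have hrz : (Dtilde F μ).toReal < z := EReal.coe_lt_coe_iff.mp hz
      have hk := key (z - (Dtilde F μ).toReal) (by linarith)
      rw [← hrr] at hk
      calc (DinfSemi F μ : EReal)
          ≤ (((Dtilde F μ).toReal : ℝ) : EReal) + ((z - (Dtilde F μ).toReal : ℝ) : EReal) := hk
        _ = (((Dtilde F μ).toReal + (z - (Dtilde F μ).toReal) : ℝ) : EReal) :=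
            (EReal.coe_add _ _).symm
        _ = (z : EReal) := by norm_num
  · -- easy direction: Dtilde ≤ DinfSemi
    rw [Dtilde]
    apply iSup₂_le
    intro ν hν
    rw [DinfSemi]
    apply Stmt1Aux.le_coe_ennreal_iInf
    intro G
    apply Stmt1Aux.le_coe_ennreal_iInf
    intro hG
    obtain ⟨hGprob, hG1, hGint, hGmean⟩ := hG
    haveI := hGprob
    by_cases hcond : Integrable (fun x => Real.log (1 - (x - μ) * ν)) F ∧
        F {x | 1 - (x - μ) * ν ≤ 0} = 0
    · rw [LL, if_pos hcond, KL]
      split_ifs with hKL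
      · obtain ⟨hac, hKLi⟩ := hKL
        have haeleG : ∀ᵐ x ∂G, x ≤ 1 := by
          rw [ae_iff]; convert hG1 using 2; ext x; simp [not_le]
        have hνb : ν * (1 - μ) ≤ 1 := by
          have h2 := mul_le_mul_of_nonneg_right hν.2 (le_of_lt hμ1)
          rwa [inv_mul_cancel₀ hμ1.ne'] at h2
        have hle := Stmt1Aux.partA_core F G haeleG hGint μ hν.1 hνb hGmean
          hcond.1 hcond.2 hac hKLi
        calc ((∫ x, Real.log (1 - (x - μ) * ν) ∂F : ℝ) : EReal)
            ≤ ((max (∫ x, Real.log (F.rnDeriv G x).toReal ∂F) 0 : ℝ) : EReal) :=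
              EReal.coe_le_coe_iff.mpr (le_max_of_le_left hle)
          _ = ((ENNReal.ofReal (∫ x, Real.log (F.rnDeriv G x).toReal ∂F) : ℝ≥0∞) : EReal) :=
              (EReal.coe_ennreal_ofReal).symm
      · rw [EReal.coe_ennreal_top]
        exact le_top
    · rw [LL, if_neg hcond]
      exact bot_le
end

section
/- Let F be a probability measure supported in (-∞,1] with finite moment generating function near 0, let μ < E(F), and let u > D̃_inf(F,μ). Then limsup_{t→∞} (1/t)·log P(D̃_inf(F̂_t,μ) ≥ u and μ̂_t ≤ μ) ≤ −max{u, Λ*(μ)}. -/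
open MeasureTheory ProbabilityTheory Set Filter
open scoped ENNReal NNReal Classical BoundedContinuousFunction

section Aux

lemma aux_int_id {F : Measure ℝ} [IsProbabilityMeasure F] (hmgf : MGFNearZero F) :
    Integrable (fun x : ℝ => x) F := by
  obtain ⟨ε, hε, h⟩ := hmgf
  set l := ε / 2 with hl
  have hl0 : 0 < l := by positivity
  have h1 : Integrable (fun x => Real.exp (l * x)) F := h l (by rw [abs_of_pos hl0]; simpa [hl] using half_lt_self hε)
  have h2 : Integrable (fun x => Real.exp (-l * x)) F := h (-l) (by rw [abs_neg, abs_of_pos hl0]; simpa [hl] using half_lt_self hε)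
  refine Integrable.mono' ((h1.add h2).div_const l) aestronglyMeasurable_id (ae_of_all _ fun x => ?_)
  have key : l * |x| ≤ Real.exp (l * x) + Real.exp (-l * x) := by
    have h3 : l * |x| ≤ Real.exp (l * |x|) := le_trans (by linarith [Real.add_one_le_exp (l * |x|)]) le_rfl
    rcases le_or_gt 0 x with hx | hx
    · rw [abs_of_nonneg hx] at h3 ⊢
      have := (Real.exp_pos (-l * x)).le; linarith
    · rw [abs_of_neg hx] at h3 ⊢
      have := (Real.exp_pos (l * x)).le
      have : l * -x ≤ Real.exp (-l * x) := by rw [neg_mul] at *; rw [mul_neg] at h3 ⊢; linarith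
      linarith [(Real.exp_pos (l * x)).le]
  rw [Real.norm_eq_abs, le_div_iff₀ hl0, mul_comm]
  simpa [Pi.add_apply] using key

lemma aux_ae_le_one {F : Measure ℝ} (hsupp : F (Set.Ioi 1) = 0) : ∀ᵐ x ∂F, x ≤ 1 := by
  rw [ae_iff]; convert hsupp using 2; ext x; simp [not_le]

lemma integrable_dirac'' {f : ℝ → ℝ} (hf : StronglyMeasurable f) (a : ℝ) :
    Integrable f (Measure.dirac a) := by
  refine ⟨hf.aestronglyMeasurable, ?_⟩
  unfold HasFiniteIntegral
  rw [lintegral_dirac' _ hf.measurable.enorm]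
  exact ENNReal.coe_lt_top

lemma emp_integral {Ω : Type*} [MeasurableSpace Ω] (X : ℕ → Ω → ℝ) (t : ℕ) (ω : Ω)
    (f : ℝ → ℝ) (hf : StronglyMeasurable f) :
    ∫ x, f x ∂(empMeas X t ω) = (∑ i ∈ Finset.range t, f (X i ω)) / t := by
  rw [empMeas, integral_smul_measure,
    integral_finset_sum_measure (fun i _ => integrable_dirac'' hf _)]
  simp only [fun i => integral_dirac' f (X i ω) hf]
  rw [ENNReal.toReal_inv, ENNReal.toReal_natCast, smul_eq_mul, inv_mul_eq_div]

lemma emp_null {Ω : Type*} [MeasurableSpace Ω] (X : ℕ → Ω → ℝ) {t : ℕ} (ht : 0 < t) (ω : Ω)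
    {S : Set ℝ} (hS : MeasurableSet S) (h : empMeas X t ω S = 0) :
    ∀ i ∈ Finset.range t, X i ω ∉ S := by
  rw [empMeas, Measure.smul_apply, Measure.finset_sum_apply] at h
  have htne : ((t : ℝ≥0∞))⁻¹ ≠ 0 := by simp
  rw [smul_eq_mul, mul_eq_zero] at h
  rcases h with h | h
  · exact absurd h htne
  · intro i hi hmem
    have := (Finset.sum_eq_zero_iff.mp h) i hi
    rw [Measure.dirac_apply' _ hS] at this
    simp [Set.indicator_of_mem hmem] at this

end Aux

section Chernoff

variable {Ω : Type*} [MeasurableSpace Ω] (P : Measure Ω) [IsProbabilityMeasure P]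
  (F : Measure ℝ) [IsProbabilityMeasure F] (X : ℕ → Ω → ℝ)

/-- Generic Chernoff bound for sums of i.i.d. transformed variables, at exponent 1. -/
lemma chernoff_aux (hX : ∀ i, Measurable (X i))
    (hindep : iIndepFun X P)
    (hdist : ∀ i, Measure.map (X i) P = F) (g : ℝ → ℝ) (hg : Measurable g)
    (hgint : Integrable (fun x => Real.exp (g x)) F)
    {B : ℝ} (hB : ∫ x, Real.exp (g x) ∂F ≤ B) (t : ℕ) (s : ℝ) :
    P {ω | (t : ℝ) * s ≤ ∑ i ∈ Finset.range t, g (X i ω)} ≤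
      ENNReal.ofReal (Real.exp (-((t : ℝ) * s)) * B ^ t) := by
  set Y : ℕ → Ω → ℝ := fun i ω => g (X i ω) with hY
  have hYmeas : ∀ i, Measurable (Y i) := fun i => hg.comp (hX i)
  have hYindep : iIndepFun Y P :=
    hindep.comp (fun _ => g) (fun _ => hg)
  have hYint : ∀ i, Integrable (fun ω => Real.exp (1 * Y i ω)) P := by
    intro i
    simp only [one_mul]
    have : Integrable (fun x => Real.exp (g x)) (Measure.map (X i) P) := by rw [hdist i]; exact hgint
    exact (integrable_map_measure (Measurable.aestronglyMeasurable (by fun_prop))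
      (hX i).aemeasurable).mp this
  have hmgf_i : ∀ i, mgf (Y i) P 1 = ∫ x, Real.exp (g x) ∂F := by
    intro i
    have hmap : ∫ x, Real.exp (g x) ∂F = ∫ ω, Real.exp (g (X i ω)) ∂P := by
      rw [← hdist i]
      exact integral_map (hX i).aemeasurable (Measurable.aestronglyMeasurable (by fun_prop))
    rw [mgf]
    simp only [one_mul, hY]
    exact hmap.symm
  have hsum_int : Integrable (fun ω => Real.exp (1 * (∑ i ∈ Finset.range t, Y i) ω)) P :=
    hYindep.integrable_exp_mul_sum hYmeas (fun i _ => hYint i)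
  have hcher := measure_ge_le_exp_mul_mgf (μ := P) (X := ∑ i ∈ Finset.range t, Y i)
    (t := 1) ((t : ℝ) * s) zero_le_one hsum_int
  rw [hYindep.mgf_sum hYmeas] at hcher
  have hprod : ∏ i ∈ Finset.range t, mgf (Y i) P 1 = (∫ x, Real.exp (g x) ∂F) ^ t := by
    rw [Finset.prod_congr rfl fun i _ => hmgf_i i, Finset.prod_const, Finset.card_range]
  rw [hprod] at hcher
  have hsetEq : {ω | (t : ℝ) * s ≤ ∑ i ∈ Finset.range t, g (X i ω)} =
      {ω | (t : ℝ) * s ≤ (∑ i ∈ Finset.range t, Y i) ω} := by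
    ext ω; simp [Finset.sum_apply, hY]
  rw [hsetEq, ← ENNReal.ofReal_toReal (measure_ne_top P _)]
  refine ENNReal.ofReal_le_ofReal (hcher.trans ?_)
  have h0 : 0 ≤ ∫ x, Real.exp (g x) ∂F := integral_nonneg fun x => (Real.exp_pos _).le
  have := pow_le_pow_left₀ h0 hB t
  have hexp : Real.exp (-1 * ((t:ℝ) * s)) = Real.exp (-((t:ℝ)*s)) := by norm_num
  rw [hexp]
  exact mul_le_mul_of_nonneg_left this (Real.exp_pos _).le

/-- Chernoff bound for the lower tail of the sum, exponent `l ≤ 0`. -/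
lemma chernoff_mean (hX : ∀ i, Measurable (X i))
    (hindep : iIndepFun X P)
    (hdist : ∀ i, Measure.map (X i) P = F) (l : ℝ) (hl : l ≤ 0) (hlint : Integrable (fun x => Real.exp (l * x)) F)
    (t : ℕ) (μ : ℝ) :
    P {ω | ∑ i ∈ Finset.range t, X i ω ≤ (t : ℝ) * μ} ≤
      ENNReal.ofReal (Real.exp ((t : ℝ) *
        (Real.log (∫ x, Real.exp (l * x) ∂F) - l * μ))) := by
  have hXint : ∀ i, Integrable (fun ω => Real.exp (l * X i ω)) P := by
    intro i
    have : Integrable (fun x => Real.exp (l * x)) (Measure.map (X i) P) := by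
      rw [hdist i]; exact hlint
    exact (integrable_map_measure (Measurable.aestronglyMeasurable (by fun_prop))
      (hX i).aemeasurable).mp this
  have hmgf_i : ∀ i, mgf (X i) P l = ∫ x, Real.exp (l * x) ∂F := by
    intro i
    have hmap : ∫ x, Real.exp (l * x) ∂F = ∫ ω, Real.exp (l * X i ω) ∂P := by
      rw [← hdist i]
      exact integral_map (hX i).aemeasurable (Measurable.aestronglyMeasurable (by fun_prop))
    rw [mgf]
    exact hmap.symm
  have hsum_int : Integrable (fun ω => Real.exp (l * (∑ i ∈ Finset.range t, X i) ω)) P :=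
    hindep.integrable_exp_mul_sum hX (fun i _ => hXint i)
  have hcher := measure_le_le_exp_mul_mgf (μ := P) (X := ∑ i ∈ Finset.range t, X i)
    (t := l) ((t : ℝ) * μ) hl hsum_int
  rw [hindep.mgf_sum hX] at hcher
  set M := ∫ x, Real.exp (l * x) ∂F with hM
  have hMpos : 0 < M := by
    have := mgf_pos' (μ := F) (X := fun x : ℝ => x) (t := l) (IsProbabilityMeasure.ne_zero F) hlint
    simpa [mgf] using this
  have hprod : ∏ i ∈ Finset.range t, mgf (X i) P l = M ^ t := by
    rw [Finset.prod_congr rfl fun i _ => hmgf_i i, Finset.prod_const, Finset.card_range]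
  rw [hprod] at hcher
  have hsetEq : {ω | (∑ i ∈ Finset.range t, X i) ω ≤ (t : ℝ) * μ} =
      {ω | ∑ i ∈ Finset.range t, X i ω ≤ (t : ℝ) * μ} := by
    ext ω; simp [Finset.sum_apply]
  rw [← hsetEq, ← ENNReal.ofReal_toReal (measure_ne_top P _)]
  refine ENNReal.ofReal_le_ofReal (hcher.trans (le_of_eq ?_))
  have hMt : M ^ t = Real.exp ((t:ℝ) * Real.log M) := by
    rw [Real.exp_nat_mul, Real.exp_log hMpos]
  rw [hMt, ← Real.exp_add]
  congr 1
  ring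

end Chernoff

section LimsupAux

lemma EReal_le_of_forall {L : EReal} {c : ℝ} (h : ∀ δ : ℝ, 0 < δ → L ≤ ((c + δ : ℝ) : EReal)) :
    L ≤ (c : EReal) := by
  by_contra hc
  push_neg at hc
  obtain ⟨r, hr1, hr2⟩ := EReal.exists_between_coe_real hc
  have hδ : (0:ℝ) < r - c := by exact_mod_cast sub_pos.mpr (EReal.coe_lt_coe_iff.mp hr1)
  have := h (r - c) hδ
  rw [show c + (r - c) = r by ring] at this
  exact absurd (lt_of_le_of_lt this hr2) (lt_irrefl _)

lemma limsup_aux (p : ℕ → ℝ≥0∞) (C c : ℝ) (hC : 1 ≤ C)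
    (h : ∀ t : ℕ, 1 ≤ t → p t ≤ ENNReal.ofReal (C * Real.exp (t * c))) :
    Filter.limsup (fun t : ℕ => (((t : ℝ)⁻¹ : ℝ) : EReal) * ENNReal.log (p t)) Filter.atTop
      ≤ (c : EReal) := by
  apply EReal_le_of_forall
  intro δ hδ
  have hlogC : 0 ≤ Real.log C := Real.log_nonneg hC
  obtain ⟨N, hN⟩ : ∃ N : ℕ, 1 ≤ N ∧ Real.log C / δ ≤ N := by
    obtain ⟨N, hN⟩ := exists_nat_ge (Real.log C / δ)
    exact ⟨max N 1, le_max_right _ _, hN.trans (by exact_mod_cast le_max_left _ _)⟩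
  have hev : ∀ᶠ t : ℕ in atTop,
      (((t : ℝ)⁻¹ : ℝ) : EReal) * ENNReal.log (p t) ≤ ((c + δ : ℝ) : EReal) := by
    filter_upwards [eventually_ge_atTop N] with t ht
    have ht1 : 1 ≤ t := le_trans hN.1 ht
    have htpos : (0:ℝ) < t := by exact_mod_cast ht1
    have hCe : (0:ℝ) < C * Real.exp (t * c) := by positivity
    have hlog : ENNReal.log (p t) ≤ ((Real.log C + t * c : ℝ) : EReal) := by
      refine le_trans (ENNReal.log_le_log_iff.mpr (h t ht1)) ?_
      rw [ENNReal.log_ofReal_of_pos hCe, Real.log_mul (by positivity) (by positivity),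
        Real.log_exp]
    calc (((t : ℝ)⁻¹ : ℝ) : EReal) * ENNReal.log (p t)
        ≤ (((t : ℝ)⁻¹ : ℝ) : EReal) * ((Real.log C + t * c : ℝ) : EReal) :=
          mul_le_mul_of_nonneg_left hlog (by exact_mod_cast inv_nonneg.mpr htpos.le)
      _ = (((t:ℝ)⁻¹ * (Real.log C + t * c) : ℝ) : EReal) := by rw [← EReal.coe_mul]
      _ ≤ ((c + δ : ℝ) : EReal) := by
          apply EReal.coe_le_coe_iff.mpr
          have h1 : (t:ℝ)⁻¹ * (Real.log C + t * c) = Real.log C / t + c := by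
            field_simp
          rw [h1]
          have h2 : Real.log C / t ≤ δ := by
            rw [div_le_iff₀ htpos]
            have hNt : (N:ℝ) ≤ t := by exact_mod_cast ht
            have h3 : Real.log C ≤ N * δ := by
              have := (div_le_iff₀ hδ).mp hN.2; linarith
            nlinarith
          linarith
  calc Filter.limsup _ atTop ≤ Filter.limsup (fun _ : ℕ => ((c + δ : ℝ) : EReal)) atTop :=
        limsup_le_limsup hev
    _ = ((c + δ : ℝ) : EReal) := limsup_const _

end LimsupAux

section Cover

/-- Pointwise covering lemma: a point `ν` achieving a large empirical `L` value implies a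
large value at one of finitely many fixed grid points (or in the small-`ν` regime). -/
lemma cover_lemma {μ u ε ν a0 : ℝ} {K t : ℕ}
    (hε : 0 < ε) (ha0 : 0 < a0)
    (hK : (1 - μ)⁻¹ ≤ a0 * Real.exp (ε * K))
    (Y : ℕ → ℝ) (hν : ν ∈ Set.Icc 0 (1 - μ)⁻¹)
    (hpos : ∀ i ∈ Finset.range t, 0 < 1 - (Y i - μ) * ν)
    (hsum : (t : ℝ) * (u - ε) ≤ ∑ i ∈ Finset.range t, Real.log (1 - (Y i - μ) * ν)) :
    ((t : ℝ) * (u - 2 * ε) ≤ ∑ i ∈ Finset.range t, Real.log (1 + max (μ - Y i) 0 * a0)) ∨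
    (∃ k < K, (t : ℝ) * (u - 2 * ε) ≤
      ∑ i ∈ Finset.range t, Real.log (1 - (Y i - μ) * (a0 * Real.exp (ε * k)))) := by
  obtain ⟨hν0, hνmax⟩ := hν
  have ht0 : (0:ℝ) ≤ t := Nat.cast_nonneg t
  rcases le_or_gt ν a0 with hcase | hcase
  · -- small ν region
    left
    have hterm : ∀ i ∈ Finset.range t,
        Real.log (1 - (Y i - μ) * ν) ≤ Real.log (1 + max (μ - Y i) 0 * a0) := by
      intro i hi
      rcases le_or_gt (Y i) μ with hY | hY
      · have hmax : max (μ - Y i) 0 = μ - Y i := max_eq_left (by linarith)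
        rw [hmax]
        apply Real.log_le_log (hpos i hi)
        have h1 : 1 - (Y i - μ) * ν = 1 + (μ - Y i) * ν := by ring
        rw [h1]
        have : (μ - Y i) * ν ≤ (μ - Y i) * a0 := by
          apply mul_le_mul_of_nonneg_left hcase (by linarith)
        linarith
      · have hmax : max (μ - Y i) 0 = 0 := max_eq_right (by linarith)
        rw [hmax, zero_mul, add_zero, Real.log_one]
        apply Real.log_nonpos (hpos i hi).le
        nlinarith
    calc (t : ℝ) * (u - 2 * ε) ≤ (t:ℝ) * (u - ε) := by nlinarith
      _ ≤ ∑ i ∈ Finset.range t, Real.log (1 - (Y i - μ) * ν) := hsum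
      _ ≤ ∑ i ∈ Finset.range t, Real.log (1 + max (μ - Y i) 0 * a0) :=
          Finset.sum_le_sum hterm
  · -- grid region
    right
    set Pk : ℕ → Prop := fun n => a0 * Real.exp (ε * n) < ν with hPk
    have hP0 : Pk 0 := by simpa [hPk] using hcase
    have hPK : ¬ Pk K := not_lt.mpr (le_trans hνmax hK)
    set k := Nat.findGreatest Pk K with hk
    have hkK : k ≤ K := Nat.findGreatest_le K
    have hkP : Pk k := Nat.findGreatest_spec (Nat.zero_le K) hP0
    have hkltK : k < K := lt_of_le_of_ne hkK (fun h => hPK (h ▸ hkP))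
    have hnot : ¬ Pk (k + 1) := by
      apply Nat.findGreatest_is_greatest (Nat.lt_succ_of_le le_rfl) hkltK
    refine ⟨k, hkltK, ?_⟩
    set a := a0 * Real.exp (ε * k) with ha
    have hapos : 0 < a := by positivity
    have haν : a < ν := hkP
    have hνa : ν ≤ a * Real.exp ε := by
      have := not_lt.mp hnot
      calc ν ≤ a0 * Real.exp (ε * (k+1)) := by exact_mod_cast this
        _ = a * Real.exp ε := by rw [ha, mul_assoc, ← Real.exp_add]; ring_nf
    have hterm : ∀ i ∈ Finset.range t,
        Real.log (1 - (Y i - μ) * ν) ≤ Real.log (1 - (Y i - μ) * a) + ε := by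
      intro i hi
      rcases le_or_gt (Y i) μ with hY | hY
      · -- increasing part
        have hc : 0 ≤ μ - Y i := by linarith
        have harg : 0 < 1 - (Y i - μ) * a := by nlinarith
        have hstep : 1 - (Y i - μ) * ν ≤ Real.exp ε * (1 - (Y i - μ) * a) := by
          have h1 : 1 - (Y i - μ) * ν = 1 + (μ - Y i) * ν := by ring
          have h2 : 1 - (Y i - μ) * a = 1 + (μ - Y i) * a := by ring
          rw [h1, h2]
          have hre : 1 ≤ Real.exp ε := by
            rw [← Real.exp_zero]; exact Real.exp_le_exp.mpr hε.le
          have : (μ - Y i) * ν ≤ (μ - Y i) * (a * Real.exp ε) :=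
            mul_le_mul_of_nonneg_left hνa hc
          nlinarith
        calc Real.log (1 - (Y i - μ) * ν) ≤ Real.log (Real.exp ε * (1 - (Y i - μ) * a)) :=
              Real.log_le_log (hpos i hi) hstep
          _ = Real.log (1 - (Y i - μ) * a) + ε := by
              rw [Real.log_mul (Real.exp_pos ε).ne' harg.ne', Real.log_exp]; ring
      · -- decreasing part
        have hYν := hpos i hi
        have harg : 1 - (Y i - μ) * ν ≤ 1 - (Y i - μ) * a := by nlinarith
        have := Real.log_le_log hYν harg
        linarith [this, hε.le]
    have hsum2 : ∑ i ∈ Finset.range t, Real.log (1 - (Y i - μ) * ν) ≤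
        (∑ i ∈ Finset.range t, Real.log (1 - (Y i - μ) * a)) + t * ε := by
      calc ∑ i ∈ Finset.range t, Real.log (1 - (Y i - μ) * ν)
          ≤ ∑ i ∈ Finset.range t, (Real.log (1 - (Y i - μ) * a) + ε) := Finset.sum_le_sum hterm
        _ = (∑ i ∈ Finset.range t, Real.log (1 - (Y i - μ) * a)) + t * ε := by
            rw [Finset.sum_add_distrib, Finset.sum_const, Finset.card_range, nsmul_eq_mul]
    have : (t:ℝ) * (u - ε) ≤ (∑ i ∈ Finset.range t, Real.log (1 - (Y i - μ) * a)) + t * ε :=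
      le_trans hsum hsum2
    linarith [this]

end Cover

section Integrands

variable {F : Measure ℝ} [IsProbabilityMeasure F] {μ : ℝ}

lemma aux_null {a : ℝ} (hsupp : F (Set.Ioi 1) = 0) (hμ1 : μ < 1) (ha : 0 < a)
    (haν : a < (1 - μ)⁻¹) : F {x | 1 - (x - μ) * a ≤ 0} = 0 := by
  apply measure_mono_null _ hsupp
  intro x hx
  simp only [Set.mem_setOf_eq] at hx
  have h1μ : 0 < 1 - μ := by linarith
  have haμ : a * (1 - μ) < 1 := by
    have := (lt_inv_comm₀ ha h1μ).mpr
    nlinarith [(inv_pos.mpr h1μ).le, mul_lt_mul_of_pos_right haν h1μ, mul_inv_cancel₀ h1μ.ne']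
  have hxa : 1 ≤ (x - μ) * a := by linarith
  have : (1 - μ) * a < (x - μ) * a := by nlinarith
  have : 1 - μ < x - μ := lt_of_mul_lt_mul_right this ha.le
  simpa using show (1:ℝ) < x by linarith

lemma aux_ga (hsupp : F (Set.Ioi 1) = 0) (hint : Integrable (fun x : ℝ => x) F)
    (hμ1 : μ < 1) (hμE : μ ≤ ∫ x, x ∂F) {a : ℝ} (ha : 0 < a) (haν : a < (1 - μ)⁻¹) :
    Integrable (fun x => Real.exp (Real.log (1 - (x - μ) * a))) F ∧
      ∫ x, Real.exp (Real.log (1 - (x - μ) * a)) ∂F ≤ 1 := by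
  have hnull := aux_null hsupp hμ1 ha haν
  have hae : (fun x => Real.exp (Real.log (1 - (x - μ) * a))) =ᵐ[F] fun x => 1 - (x - μ) * a := by
    rw [Filter.EventuallyEq, ae_iff]
    apply measure_mono_null _ hnull
    intro x hx
    simp only [Set.mem_setOf_eq] at hx ⊢
    by_contra h
    push_neg at h
    exact hx (Real.exp_log h)
  have hIa : Integrable (fun x : ℝ => (x - μ) * a) F := by
    simpa using (hint.sub (integrable_const μ)).mul_const a
  have hIs : Integrable (fun x : ℝ => x - μ) F := by
    exact hint.sub (integrable_const μ)
  have hint2 : Integrable (fun x : ℝ => 1 - (x - μ) * a) F :=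
    Integrable.sub (integrable_const 1) hIa
  constructor
  · exact hint2.congr hae.symm
  · rw [integral_congr_ae hae]
    have : ∫ x, (1 - (x - μ) * a) ∂F = 1 - (∫ x, x ∂F - μ) * a := by
      rw [integral_sub (integrable_const 1) hIa, integral_const, integral_mul_const,
        integral_sub hint (integrable_const μ), integral_const]
      simp
    rw [this]
    nlinarith [sub_nonneg.mpr hμE]

lemma aux_g0 (hint : Integrable (fun x : ℝ => x) F) {a0 : ℝ} (ha0 : 0 ≤ a0) :
    Integrable (fun x => Real.exp (Real.log (1 + max (μ - x) 0 * a0))) F ∧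
      ∫ x, Real.exp (Real.log (1 + max (μ - x) 0 * a0)) ∂F
        = 1 + (∫ x, max (μ - x) 0 ∂F) * a0 := by
  have hintmax : Integrable (fun x : ℝ => max (μ - x) 0) F := by
    simpa using ((integrable_const μ).sub hint).pos_part
  have heq : (fun x => Real.exp (Real.log (1 + max (μ - x) 0 * a0)))
      = fun x : ℝ => 1 + max (μ - x) 0 * a0 := by
    funext x
    apply Real.exp_log
    have : 0 ≤ max (μ - x) 0 * a0 := mul_nonneg (le_max_right _ _) ha0
    linarith
  rw [heq]
  constructor
  · exact (integrable_const 1).add (hintmax.mul_const a0)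
  · rw [integral_add (integrable_const 1) (hintmax.mul_const a0), integral_const,
      integral_mul_const]
    simp

end Integrands

/-- Asymptotic upper large deviation bound (Lemma
`upper_asymptotic`): for i.i.d. samples `X_i ~ F` (`F` supported in `(-∞,1]` with
finite mgf near `0`), `μ < E(F)` and `u > D̃_inf(F,μ)`,
`limsup_{t→∞} (1/t) log P(D̃_inf(F̂_t,μ) ≥ u ∧ μ̂_t ≤ μ) ≤ -max{u, Λ*(μ)}`. -/
theorem stmt5 {Ω : Type*} [MeasurableSpace Ω] (P : Measure Ω) [IsProbabilityMeasure P]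
    (F : Measure ℝ) [IsProbabilityMeasure F] (hsupp : F (Set.Ioi 1) = 0)
    (hmgf : MGFNearZero F)
    (X : ℕ → Ω → ℝ) (hX : ∀ i, Measurable (X i))
    (hindep : iIndepFun X P)
    (hdist : ∀ i, Measure.map (X i) P = F)
    (μ u : ℝ) (hμ : μ < ∫ x, x ∂F) (hu : Dtilde F μ < (u : EReal)) :
    Filter.limsup (fun t : ℕ =>
        (((t : ℝ)⁻¹ : ℝ) : EReal) *
          ENNReal.log (P {ω | (u : EReal) ≤ Dtilde (empMeas X t ω) μ ∧ empMean X t ω ≤ μ}))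
      Filter.atTop
      ≤ -(max (u : EReal) (Legendre F μ)) := by
  -- basic integrability and support facts
  have hInt : Integrable (fun x : ℝ => x) F := aux_int_id hmgf
  have hEF1 : ∫ x, x ∂F ≤ 1 := by
    have h := integral_mono_ae hInt (integrable_const (1:ℝ)) (aux_ae_le_one hsupp)
    simpa using h
  have hμ1 : μ < 1 := lt_of_lt_of_le hμ hEF1
  have h1μ : (0:ℝ) < 1 - μ := by linarith
  have hνmax : (0:ℝ) < (1 - μ)⁻¹ := inv_pos.mpr h1μ
  -- u > 0
  have hLL0 : LL F μ 0 = (0 : EReal) := by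
    have hfun : (fun x : ℝ => Real.log (1 - (x - μ) * 0)) = fun _ => (0:ℝ) := by
      funext x; simp
    have hset : {x : ℝ | 1 - (x - μ) * 0 ≤ 0} = ∅ := by
      ext x; simp
    rw [LL, if_pos ⟨by rw [hfun]; exact integrable_const 0,
      by rw [hset]; exact measure_empty⟩, hfun]
    simp
  have hDF0 : (0 : EReal) ≤ Dtilde F μ := by
    rw [← hLL0, Dtilde]
    exact le_biSup _ ⟨le_rfl, hνmax.le⟩
  have hu0 : (0:ℝ) < u := by
    have h := lt_of_le_of_lt hDF0 hu
    exact_mod_cast h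
  set L := Filter.limsup (fun t : ℕ =>
      (((t : ℝ)⁻¹ : ℝ) : EReal) *
        ENNReal.log (P {ω | (u : EReal) ≤ Dtilde (empMeas X t ω) μ ∧ empMean X t ω ≤ μ}))
    Filter.atTop with hL
  -- the key finite-time bound
  have key : ∀ ε : ℝ, 0 < ε → ∃ C : ℝ, 1 ≤ C ∧ ∀ t : ℕ, 1 ≤ t →
      P {ω | (u : EReal) ≤ Dtilde (empMeas X t ω) μ ∧ empMean X t ω ≤ μ} ≤
        ENNReal.ofReal (C * Real.exp (t * (3 * ε - u))) := by
    intro ε hε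
    set M := ∫ x, max (μ - x) 0 ∂F with hMdef
    have hM0 : 0 ≤ M := integral_nonneg fun x => le_max_right _ _
    set a0 := (Real.exp ε - 1) / (M + 1) with ha0def
    have hexpε : 1 < Real.exp ε := by
      rw [← Real.exp_zero]; exact Real.exp_lt_exp.mpr hε
    have ha0 : 0 < a0 := by apply div_pos <;> linarith
    have hB0 : 1 + M * a0 ≤ Real.exp ε := by
      have h1 : a0 * (M + 1) = Real.exp ε - 1 := by
        rw [ha0def]; field_simp
      nlinarith
    have hKex : ∃ n : ℕ, (1 - μ)⁻¹ ≤ a0 * Real.exp (ε * n) := by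
      obtain ⟨n, hn⟩ := exists_nat_ge ((1 - μ)⁻¹ / (a0 * ε))
      refine ⟨n, ?_⟩
      have h2 : (1 - μ)⁻¹ ≤ a0 * ε * n := by
        have h3 := (div_le_iff₀ (by positivity : (0:ℝ) < a0 * ε)).mp hn
        nlinarith
      have h3 : ε * n + 1 ≤ Real.exp (ε * n) := by
        have := Real.add_one_le_exp (ε * n); linarith
      nlinarith [mul_le_mul_of_nonneg_left h3 ha0.le]
    set K := Nat.find hKex with hKdef
    have hK : (1 - μ)⁻¹ ≤ a0 * Real.exp (ε * K) := Nat.find_spec hKex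
    have hKmin : ∀ k, k < K → a0 * Real.exp (ε * k) < (1 - μ)⁻¹ := fun k hk =>
      lt_of_not_ge (Nat.find_min hKex hk)
    refine ⟨(K : ℝ) + 1, by have := Nat.cast_nonneg (α := ℝ) K; linarith, ?_⟩
    intro t ht
    have ht0 : (0:ℝ) < t := by exact_mod_cast ht
    set A0 : Set Ω := {ω | (t : ℝ) * (u - 2*ε) ≤
        ∑ i ∈ Finset.range t, Real.log (1 + max (μ - X i ω) 0 * a0)} with hA0
    set Ak : ℕ → Set Ω := fun k => {ω | (t : ℝ) * (u - 2*ε) ≤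
        ∑ i ∈ Finset.range t, Real.log (1 - (X i ω - μ) * (a0 * Real.exp (ε * k)))} with hAk
    have hsub : {ω | (u : EReal) ≤ Dtilde (empMeas X t ω) μ ∧ empMean X t ω ≤ μ} ⊆
        A0 ∪ ⋃ k ∈ Finset.range K, Ak k := by
      intro ω hω
      have hlt : ((u - ε : ℝ) : EReal) < Dtilde (empMeas X t ω) μ :=
        lt_of_lt_of_le (by exact_mod_cast sub_lt_self u hε) hω.1
      rw [Dtilde, lt_iSup_iff] at hlt
      obtain ⟨ν, hlt⟩ := hlt
      rw [lt_iSup_iff] at hlt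
      obtain ⟨hνmem, hlt⟩ := hlt
      rw [LL] at hlt
      split_ifs at hlt with hcond
      swap
      · exact absurd hlt (by simp)
      obtain ⟨hint', hnull'⟩ := hcond
      have hmeasset : MeasurableSet {x : ℝ | 1 - (x - μ) * ν ≤ 0} :=
        measurableSet_le (by fun_prop) measurable_const
      have hpos : ∀ i ∈ Finset.range t, 0 < 1 - (X i ω - μ) * ν := by
        intro i hi
        have h4 := emp_null X (by omega) ω hmeasset hnull' i hi
        simpa [not_le] using h4
      have hlog_meas : StronglyMeasurable (fun x : ℝ => Real.log (1 - (x - μ) * ν)) :=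
        (Real.measurable_log.comp (by fun_prop)).stronglyMeasurable
      rw [emp_integral X t ω _ hlog_meas] at hlt
      have hsumν : (t:ℝ) * (u - ε) ≤
          ∑ i ∈ Finset.range t, Real.log (1 - (X i ω - μ) * ν) := by
        have h5 : (u - ε : ℝ) <
            (∑ i ∈ Finset.range t, Real.log (1 - (X i ω - μ) * ν)) / t := by
          exact_mod_cast hlt
        rw [lt_div_iff₀ ht0] at h5
        nlinarith
      have hcov := cover_lemma hε ha0 hK (fun i => X i ω) hνmem hpos hsumν
      rcases hcov with h | ⟨k, hk, h⟩
      · exact Or.inl h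
      · exact Or.inr (Set.mem_biUnion (Finset.mem_range.mpr hk) h)
    have hb0 : P A0 ≤ ENNReal.ofReal (Real.exp (t * (3*ε - u))) := by
      obtain ⟨hgint, hgval⟩ := aux_g0 (μ := μ) hInt ha0.le
      have hch := chernoff_aux P F X hX hindep hdist
        (fun x => Real.log (1 + max (μ - x) 0 * a0))
        (Real.measurable_log.comp (by fun_prop)) hgint
        (B := Real.exp ε) (by rw [hgval]; linarith) t (u - 2*ε)
      refine le_trans hch (ENNReal.ofReal_le_ofReal ?_)
      rw [← Real.exp_nat_mul, ← Real.exp_add]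
      apply Real.exp_le_exp.mpr
      nlinarith
    have hbk : ∀ k, k < K → P (Ak k) ≤ ENNReal.ofReal (Real.exp (t * (3*ε - u))) := by
      intro k hk
      have hak : 0 < a0 * Real.exp (ε * k) := by positivity
      obtain ⟨hgint, hgval⟩ := aux_ga hsupp hInt hμ1 hμ.le hak (hKmin k hk)
      have hch := chernoff_aux P F X hX hindep hdist
        (fun x => Real.log (1 - (x - μ) * (a0 * Real.exp (ε * k))))
        (Real.measurable_log.comp (by fun_prop)) hgint
        (B := 1) hgval t (u - 2*ε)
      refine le_trans hch (ENNReal.ofReal_le_ofReal ?_)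
      rw [one_pow, mul_one]
      apply Real.exp_le_exp.mpr
      nlinarith
    calc P {ω | (u : EReal) ≤ Dtilde (empMeas X t ω) μ ∧ empMean X t ω ≤ μ}
        ≤ P (A0 ∪ ⋃ k ∈ Finset.range K, Ak k) := measure_mono hsub
      _ ≤ P A0 + P (⋃ k ∈ Finset.range K, Ak k) := measure_union_le _ _
      _ ≤ P A0 + ∑ k ∈ Finset.range K, P (Ak k) := by
          gcongr
          exact measure_biUnion_finset_le _ _
      _ ≤ ENNReal.ofReal (Real.exp (t * (3*ε - u))) +
            ∑ _k ∈ Finset.range K, ENNReal.ofReal (Real.exp (t * (3*ε - u))) := by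
          exact add_le_add hb0
            (Finset.sum_le_sum fun k hk => hbk k (Finset.mem_range.mp hk))
      _ = ENNReal.ofReal (((K : ℝ) + 1) * Real.exp (t * (3 * ε - u))) := by
          rw [Finset.sum_const, Finset.card_range, nsmul_eq_mul]
          rw [show ((K:ℝ) + 1) * Real.exp (t*(3*ε-u))
              = (K:ℝ) * Real.exp (t*(3*ε-u)) + Real.exp (t*(3*ε-u)) by ring]
          rw [ENNReal.ofReal_add (by positivity) (by positivity),
            ENNReal.ofReal_mul (by positivity), ENNReal.ofReal_natCast]
          rw [add_comm]
  -- Part 1: L ≤ -u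
  have hLu : L ≤ ((-u : ℝ) : EReal) := by
    apply EReal_le_of_forall
    intro δ hδ
    obtain ⟨C, hC1, hCb⟩ := key (δ/3) (by linarith)
    have h := limsup_aux _ C (3*(δ/3) - u) hC1 hCb
    rw [show (3*(δ/3) - u : ℝ) = -u + δ by ring] at h
    rw [hL]
    exact h
  -- Part 2: Chernoff bound on the mean event
  have hmean : ∀ l : ℝ, l ≤ 0 → Integrable (fun x => Real.exp (l * x)) F →
      L ≤ ((Real.log (∫ x, Real.exp (l * x) ∂F) - l * μ : ℝ) : EReal) := by
    intro l hl hlint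
    have hbd : ∀ t : ℕ, 1 ≤ t →
        P {ω | (u : EReal) ≤ Dtilde (empMeas X t ω) μ ∧ empMean X t ω ≤ μ} ≤
          ENNReal.ofReal (1 * Real.exp
            (t * (Real.log (∫ x, Real.exp (l * x) ∂F) - l * μ))) := by
      intro t ht
      have ht0 : (0:ℝ) < t := by exact_mod_cast ht
      have hsub : {ω | (u : EReal) ≤ Dtilde (empMeas X t ω) μ ∧ empMean X t ω ≤ μ} ⊆
          {ω | ∑ i ∈ Finset.range t, X i ω ≤ (t:ℝ) * μ} := by
        intro ω hω
        have h6 := hω.2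
        rw [empMean, div_le_iff₀ ht0] at h6
        simpa [mul_comm] using h6
      rw [one_mul]
      exact le_trans (measure_mono hsub) (chernoff_mean P F X hX hindep hdist l hl hlint t μ)
    have h := limsup_aux _ 1 _ le_rfl hbd
    rw [hL]
    exact h
  have huL : ((u:ℝ) : EReal) ≤ -L := by
    apply EReal.le_neg_of_le_neg
    rwa [← EReal.coe_neg]
  -- Part 3: Legendre ≤ -L
  have hLeg : Legendre F μ ≤ -L := by
    rw [Legendre]
    apply iSup_le
    intro l
    by_cases hlint : Integrable (fun x => Real.exp (l * x)) F
    · set Ml := ∫ x, Real.exp (l * x) ∂F with hMl_def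
      have hMl : 0 < Ml := by
        have h7 := mgf_pos' (μ := F) (X := fun x : ℝ => x) (t := l)
          (IsProbabilityMeasure.ne_zero F) hlint
        simpa [mgf] using h7
      have hlint_eq : ∫⁻ y, ENNReal.ofReal (Real.exp (l * y)) ∂F = ENNReal.ofReal Ml :=
        (ofReal_integral_eq_lintegral_ofReal hlint
          (ae_of_all _ fun x => (Real.exp_pos _).le)).symm
      rw [hlint_eq, ENNReal.log_ofReal_of_pos hMl]
      rw [show ((l * μ : ℝ) : EReal) - ((Real.log Ml : ℝ) : EReal)
          = ((l * μ - Real.log Ml : ℝ) : EReal) from (EReal.coe_sub _ _).symm]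
      rcases le_or_gt l 0 with hl | hl
      · have h1 := hmean l hl hlint
        apply EReal.le_neg_of_le_neg
        rw [← EReal.coe_neg]
        rw [show (-(l * μ - Real.log Ml) : ℝ) = Real.log Ml - l * μ by ring]
        exact h1
      · have hjen : l * (∫ x, x ∂F) ≤ Real.log Ml := by
          rw [Real.le_log_iff_exp_le hMl]
          set c := Real.exp (l * ∫ x, x ∂F) with hc
          have hcpos : (0:ℝ) < c := Real.exp_pos _
          have hptw : ∀ x : ℝ, c * (1 - l * ∫ y, y ∂F) + (c * l) * x ≤ Real.exp (l * x) := by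
            intro x
            have h1 : (l * x - l * ∫ y, y ∂F) + 1 ≤ Real.exp (l * x - l * ∫ y, y ∂F) :=
              Real.add_one_le_exp _
            have h2 : c * ((l * x - l * ∫ y, y ∂F) + 1)
                ≤ c * Real.exp (l * x - l * ∫ y, y ∂F) :=
              mul_le_mul_of_nonneg_left h1 hcpos.le
            rw [hc, ← Real.exp_add] at h2
            calc c * (1 - l * ∫ y, y ∂F) + (c * l) * x
                = c * ((l * x - l * ∫ y, y ∂F) + 1) := by ring
              _ ≤ Real.exp (l * (∫ x, x ∂F) + (l * x - l * ∫ y, y ∂F)) := h2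
              _ = Real.exp (l * x) := by congr 1; ring
          have hint2 : Integrable (fun x : ℝ => c * (1 - l * ∫ y, y ∂F) + (c * l) * x) F :=
            (integrable_const _).add (hInt.const_mul _)
          have h8 := integral_mono_ae hint2 hlint (ae_of_all _ hptw)
          rw [integral_add (integrable_const _) (hInt.const_mul _), integral_const,
            integral_const_mul] at h8
          simp only [probReal_univ, ENNReal.toReal_one, smul_eq_mul, one_mul] at h8
          calc Real.exp (l * ∫ x, x ∂F)
              = c * (1 - l * ∫ y, y ∂F) + c * l * ∫ x, x ∂F := by rw [hc]; ring
            _ ≤ Ml := h8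
        have hterm : (l * μ - Real.log Ml : ℝ) ≤ 0 := by nlinarith
        calc ((l * μ - Real.log Ml : ℝ) : EReal) ≤ ((u:ℝ) : EReal) := by
              exact_mod_cast le_trans hterm hu0.le
          _ ≤ -L := huL
    · have hlint_top : ∫⁻ y, ENNReal.ofReal (Real.exp (l * y)) ∂F = ⊤ := by
        by_contra h
        refine hlint ⟨(Measurable.aestronglyMeasurable (by fun_prop)), ?_⟩
        rwa [hasFiniteIntegral_iff_ofReal (ae_of_all _ fun x => (Real.exp_pos _).le),
          lt_top_iff_ne_top]
      rw [hlint_top, ENNReal.log_top, EReal.sub_top]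
      exact bot_le
  have hfin : max (u : EReal) (Legendre F μ) ≤ -L := max_le huL hLeg
  exact EReal.le_neg_of_le_neg hfin
end

section
/- Let F be a probability measure supported in (-∞,1] with finite moment generating function near 0. Then for every μ with E(F) < μ < 1, the map μ' ↦ D̃_inf(F,μ') is differentiable at μ, its derivative equals ν*(F,μ), the unique maximizer of L(·;F,μ) over [0,1/(1−μ)], and in particular this derivative is at most 1/(1−μ). -/
open MeasureTheory ProbabilityTheory Set Filter
open scoped ENNReal NNReal Classical BoundedContinuousFunction
open Topology

set_option linter.unusedVariables false
set_option linter.unusedSectionVars false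

noncomputable section
namespace Stmt7Aux

/-- `qf μ' s x = (1-s)(1-μ') + s(1-x)`, so that `1 - (x-μ')·(s/(1-μ')) = qf/(1-μ')`. -/
def qf (μ' s x : ℝ) : ℝ := (1 - s) * (1 - μ') + s * (1 - x)

def KK (F : Measure ℝ) (μ' s : ℝ) : ℝ :=
  (∫ x, Real.log (qf μ' s x) ∂F) - Real.log (1 - μ')

def hhf (F : Measure ℝ) (μ' s : ℝ) : ℝ :=
  (∫ x, (s - 1) / qf μ' s x ∂F) + (1 - μ')⁻¹

lemma qf_key {μ' : ℝ} (h : μ' ≠ 1) (s x : ℝ) :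
    1 - (x - μ') * (s * (1 - μ')⁻¹) = qf μ' s x / (1 - μ') := by
  have h1 : (1:ℝ) - μ' ≠ 0 := sub_ne_zero.2 (Ne.symm h)
  field_simp [qf]
  simp only [qf]
  ring

lemma qf_lb1 {μ' s x : ℝ} (hx : x ≤ 1) (hs : 0 ≤ s) : (1 - s) * (1 - μ') ≤ qf μ' s x := by
  have : 0 ≤ s * (1 - x) := mul_nonneg hs (by linarith)
  simp only [qf]; linarith

lemma qf_lb2 {μ' s x : ℝ} (hμ' : μ' ≤ 1) (hs : s ≤ 1) : s * (1 - x) ≤ qf μ' s x := by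
  have : 0 ≤ (1 - s) * (1 - μ') := mul_nonneg (by linarith) (by linarith)
  simp only [qf]; linarith

lemma qf_pos {μ' s x : ℝ} (hx : x ≤ 1) (hμ' : μ' < 1) (hs0 : 0 ≤ s) (hs1 : s < 1) :
    0 < qf μ' s x :=
  lt_of_lt_of_le (by nlinarith) (qf_lb1 hx hs0)

lemma qf_pos' {μ' s x : ℝ} (hx : x < 1) (hμ' : μ' < 1) (hs0 : 0 ≤ s) (hs1 : s ≤ 1) :
    0 < qf μ' s x := by
  rcases lt_or_eq_of_le hs1 with h | h
  · exact qf_pos hx.le hμ' hs0 h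
  · subst h; simp only [qf]; nlinarith

lemma qf_min_le {μ' s x : ℝ} (hs0 : 0 ≤ s) (hs1 : s ≤ 1) :
    min (1 - μ') (1 - x) ≤ qf μ' s x := by
  have h1 : min (1 - μ') (1 - x) ≤ 1 - μ' := min_le_left _ _
  have h2 : min (1 - μ') (1 - x) ≤ 1 - x := min_le_right _ _
  simp only [qf]; nlinarith

lemma qf_ub {μ' s x B : ℝ} (hx : x ≤ 1) (hs0 : 0 ≤ s) (hs1 : s ≤ 1) (hμ' : 1 - μ' ≤ B) :
    qf μ' s x ≤ (1 - s) * B + (1 - x) := by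
  have h1 : (1 - s) * (1 - μ') ≤ (1 - s) * B := by nlinarith
  have h2 : s * (1 - x) ≤ 1 * (1 - x) := by nlinarith
  simp only [qf]; linarith

lemma qf_meas (μ' s : ℝ) : Measurable (qf μ' s) := by
  unfold qf; fun_prop

lemma log_qf_meas (μ' s : ℝ) : Measurable (fun x => Real.log (qf μ' s x)) :=
  Real.measurable_log.comp (qf_meas μ' s)

/-- `|log t| ≤ |log c| + t` for `0 < c ≤ t`. -/
lemma abs_log_le {c t : ℝ} (hc : 0 < c) (hct : c ≤ t) : |Real.log t| ≤ |Real.log c| + t := by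
  have ht : 0 < t := lt_of_lt_of_le hc hct
  have h1 : Real.log t ≤ t := (Real.log_le_sub_one_of_pos ht).trans (by linarith)
  have h2 : Real.log c ≤ Real.log t := Real.log_le_log hc hct
  rw [abs_le]; constructor
  · have : -|Real.log c| ≤ Real.log c := neg_abs_le _
    nlinarith [ht.le]
  · have : 0 ≤ |Real.log c| := abs_nonneg _
    linarith

variable {F : Measure ℝ} [IsProbabilityMeasure F]

omit [IsProbabilityMeasure F] in
lemma ae_le_one (hsupp : F (Set.Ioi 1) = 0) : ∀ᵐ x ∂F, x ≤ 1 := by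
  rw [ae_iff]
  convert hsupp using 2
  ext x; simp [not_le]

omit [IsProbabilityMeasure F] in
lemma ae_lt_one (hsupp : F (Set.Ioi 1) = 0) (h1 : F {x : ℝ | 1 ≤ x} = 0) :
    ∀ᵐ x ∂F, x < 1 := by
  rw [ae_iff]
  convert h1 using 2
  ext x; simp [not_lt]

lemma integrable_abs_of_mgf (hmgf : MGFNearZero F) :
    Integrable (fun x : ℝ => |x|) F ∧ Integrable (fun x : ℝ => x ^ 2) F := by
  obtain ⟨ε, hε, h⟩ := hmgf
  set a := ε / 2 with ha
  have ha0 : 0 < a := by positivity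
  have h1 : Integrable (fun x => Real.exp (a * x)) F :=
    h a (by rw [abs_of_pos ha0]; simp [ha]; linarith)
  have h2 : Integrable (fun x => Real.exp (-a * x)) F :=
    h (-a) (by rw [abs_neg, abs_of_pos ha0]; simp [ha]; linarith)
  have hsum : Integrable (fun x => Real.exp (a * x) + Real.exp (-a * x)) F := h1.add h2
  have key : ∀ x : ℝ, Real.exp (a * |x|) ≤ Real.exp (a * x) + Real.exp (-a * x) := by
    intro x
    rcases abs_cases x with ⟨hx, _⟩ | ⟨hx, _⟩
    · rw [hx]; nlinarith [Real.exp_pos (-a * x)]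
    · rw [hx, show a * -x = -a * x by ring]; nlinarith [Real.exp_pos (a * x)]
  have hsq_exp : ∀ u : ℝ, 0 ≤ u → u ^ 2 ≤ 4 * Real.exp u := by
    intro u hu
    have e1 : u / 2 + 1 ≤ Real.exp (u / 2) := Real.add_one_le_exp _
    have e2 : Real.exp (u / 2) * Real.exp (u / 2) = Real.exp u := by
      rw [← Real.exp_add]; ring_nf
    nlinarith [Real.exp_pos (u / 2)]
  constructor
  · apply (hsum.const_mul (1 / a)).mono' measurable_abs.aestronglyMeasurable
    filter_upwards with x
    have hx1 : a * |x| ≤ Real.exp (a * |x|) := by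
      nlinarith [Real.add_one_le_exp (a * |x|)]
    have h3 := key x
    rw [Real.norm_eq_abs, abs_abs, div_mul_eq_mul_div, le_div_iff₀ ha0]
    nlinarith
  · apply (hsum.const_mul (4 / a ^ 2)).mono'
      ((measurable_id.pow_const 2).aestronglyMeasurable)
    filter_upwards with x
    have hx1 : (a * |x|) ^ 2 ≤ 4 * Real.exp (a * |x|) := hsq_exp _ (by positivity)
    have h3 := key x
    rw [Real.norm_eq_abs, show (4 / a ^ 2) * (Real.exp (a*x) + Real.exp (-a*x))
      = 4 * (Real.exp (a*x) + Real.exp (-a*x)) / a ^ 2 by ring,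
      le_div_iff₀ (by positivity : (0:ℝ) < a ^ 2)]
    simp only [id]
    rw [abs_pow]
    nlinarith

lemma null_qf (hsupp : F (Set.Ioi 1) = 0) {μ' s : ℝ} (hμ' : μ' < 1) (hs0 : 0 ≤ s)
    (hs1 : s < 1) : F {x | qf μ' s x ≤ 0} = 0 := by
  apply measure_mono_null _ hsupp
  intro x hx
  simp only [mem_setOf_eq] at hx
  simp only [mem_Ioi]
  by_contra h
  push_neg at h
  exact absurd hx (not_le.2 (qf_pos h hμ' hs0 hs1))

lemma int_log_qf (hsupp : F (Set.Ioi 1) = 0) (habs : Integrable (fun x : ℝ => |x|) F)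
    {μ' s : ℝ} (hμ' : μ' < 1) (hs0 : 0 ≤ s) (hs1 : s < 1) :
    Integrable (fun x => Real.log (qf μ' s x)) F := by
  set c := (1 - s) * (1 - μ') with hcdef
  have hc0 : 0 < c := by nlinarith
  apply Integrable.mono' ((integrable_const (|Real.log c| + (1 - μ') + 1)).add habs)
    (log_qf_meas μ' s).aestronglyMeasurable
  filter_upwards [ae_le_one hsupp] with x hx
  rw [Real.norm_eq_abs]
  have h1 : c ≤ qf μ' s x := qf_lb1 hx hs0
  have h2 : |Real.log (qf μ' s x)| ≤ |Real.log c| + qf μ' s x := abs_log_le hc0 h1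
  have h3 : qf μ' s x ≤ (1 - μ') + (1 + |x|) := by
    have e1 : (1 - s) * (1 - μ') ≤ 1 - μ' := by nlinarith
    have e2 : s * (1 - x) ≤ 1 + |x| := by
      have := neg_abs_le x
      nlinarith [abs_nonneg x]
    simp only [qf]; linarith
  simp only [Pi.add_apply]
  linarith

/-- Bridge between `LL` and the reparametrized objects. -/
lemma LL_eq {μ' : ℝ} (hμ' : μ' < 1) (s : ℝ) :
    LL F μ' (s * (1 - μ')⁻¹) =
      if Integrable (fun x => Real.log (qf μ' s x)) F ∧ F {x | qf μ' s x ≤ 0} = 0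
      then ((KK F μ' s : ℝ) : EReal) else ⊥ := by
  have h1μ : (0:ℝ) < 1 - μ' := by linarith
  have hne : μ' ≠ 1 := ne_of_lt hμ'
  have hset : {x : ℝ | 1 - (x - μ') * (s * (1 - μ')⁻¹) ≤ 0} = {x | qf μ' s x ≤ 0} := by
    ext x
    simp only [mem_setOf_eq, qf_key hne s x]
    rw [div_nonpos_iff]
    constructor
    · rintro (⟨h1, h2⟩ | ⟨h1, h2⟩)
      · linarith
      · exact h1
    · intro h; right; exact ⟨h, h1μ.le⟩
  by_cases hnull : F {x | qf μ' s x ≤ 0} = 0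
  · have hae : ∀ᵐ x ∂F, 0 < qf μ' s x := by
      rw [ae_iff]
      convert hnull using 2
      ext x; simp [not_lt]
    have hcongr : (fun x => Real.log (1 - (x - μ') * (s * (1 - μ')⁻¹)))
        =ᵐ[F] fun x => Real.log (qf μ' s x) - Real.log (1 - μ') := by
      filter_upwards [hae] with x hx
      rw [qf_key hne s x, Real.log_div (ne_of_gt hx) (ne_of_gt h1μ)]
    have hIntIff : Integrable (fun x => Real.log (1 - (x - μ') * (s * (1 - μ')⁻¹))) F ↔
        Integrable (fun x => Real.log (qf μ' s x)) F := by
      rw [integrable_congr hcongr]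
      constructor
      · intro h
        have h2 := h.add (integrable_const (Real.log (1 - μ')))
        have heq : ((fun x => Real.log (qf μ' s x) - Real.log (1 - μ'))
            + fun _ => Real.log (1 - μ')) = fun x => Real.log (qf μ' s x) := by
          funext x; simp
        rwa [heq] at h2
      · intro h; exact h.sub (integrable_const _)
    by_cases hint : Integrable (fun x => Real.log (qf μ' s x)) F
    · simp only [LL]
      rw [if_pos ⟨hIntIff.2 hint, by rw [hset]; exact hnull⟩, if_pos ⟨hint, hnull⟩]
      norm_cast
      rw [integral_congr_ae hcongr, integral_sub hint (integrable_const _), integral_const]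
      simp [KK]
    · simp only [LL]
      rw [if_neg, if_neg]
      · exact fun hc => hint hc.1
      · exact fun hc => hint (hIntIff.1 hc.1)
  · simp only [LL]
    rw [if_neg, if_neg]
    · exact fun hc => hnull hc.2
    · exact fun hc => hnull (by rw [← hset]; exact hc.2)

lemma Dtilde_eq_sup {μ' : ℝ} (hμ' : μ' < 1) :
    Dtilde F μ' = ⨆ s ∈ Set.Icc (0:ℝ) 1, LL F μ' (s * (1 - μ')⁻¹) := by
  have h1μ : (0:ℝ) < 1 - μ' := by linarith
  unfold Dtilde
  apply le_antisymm
  · refine iSup₂_le fun ν hν => ?_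
    have hmem : ν * (1 - μ') ∈ Set.Icc (0:ℝ) 1 := by
      constructor
      · exact mul_nonneg hν.1 h1μ.le
      · have := hν.2
        calc ν * (1 - μ') ≤ (1 - μ')⁻¹ * (1 - μ') := by nlinarith
          _ = 1 := inv_mul_cancel₀ (ne_of_gt h1μ)
    have heq : ν * (1 - μ') * (1 - μ')⁻¹ = ν := by field_simp
    refine le_trans (le_of_eq ?_)
      (le_iSup₂ (f := fun s (_ : s ∈ Set.Icc (0:ℝ) 1) => LL F μ' (s * (1 - μ')⁻¹))
        (ν * (1 - μ')) hmem)
    rw [heq]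
  · refine iSup₂_le fun s hs => ?_
    have hmem : s * (1 - μ')⁻¹ ∈ Set.Icc (0:ℝ) (1 - μ')⁻¹ := by
      constructor
      · exact mul_nonneg hs.1 (inv_nonneg.2 h1μ.le)
      · nlinarith [hs.2, inv_pos.2 h1μ, hs.1]
    exact le_iSup₂ (f := fun ν (_ : ν ∈ Set.Icc (0:ℝ) (1 - μ')⁻¹) => LL F μ' ν)
      (s * (1 - μ')⁻¹) hmem

lemma KK_zero (μ' : ℝ) : KK F μ' 0 = 0 := by
  have : (fun x => Real.log (qf μ' 0 x)) = fun _ => Real.log (1 - μ') := by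
    funext x; simp [qf]
  simp [KK, this, integral_const]

omit [IsProbabilityMeasure F] in
lemma hhf_one (μ' : ℝ) : hhf F μ' 1 = (1 - μ')⁻¹ := by
  have : (fun x => ((1:ℝ) - 1) / qf μ' 1 x) = fun _ => (0:ℝ) := by
    funext x; simp
  simp [hhf, this]

section Core

variable {μ σ δ : ℝ} {D : ℝ → ℝ}

/-- The continuity/differentiability package hypotheses. -/
structure Pack (F : Measure ℝ) (μ σ δ : ℝ) (D : ℝ → ℝ) : Prop where
  hσ0 : 0 < σ
  hσ1 : σ ≤ 1
  hδ : 0 < δ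
  hδle : δ ≤ (1 - μ) / 2
  hD : Integrable D F
  hP1 : ∀ᵐ x ∂F, ∀ s ∈ Set.Icc (0:ℝ) σ, ∀ μ' ∈ Metric.ball μ δ, 0 < qf μ' s x
  hP2 : ∀ᵐ x ∂F, ∀ s ∈ Set.Icc (0:ℝ) σ, ∀ μ' ∈ Metric.ball μ δ, |Real.log (qf μ' s x)| ≤ D x
  hcond : ∀ μ' ∈ Metric.ball μ δ, ∀ s ∈ Set.Icc (0:ℝ) σ,
    Integrable (fun x => Real.log (qf μ' s x)) F ∧ F {x | qf μ' s x ≤ 0} = 0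

lemma Pack.hμ1 (P : Pack F μ σ δ D) : μ < 1 := by
  have h1 := P.hδ
  have h2 := P.hδle
  linarith

lemma Pack.ball_lt_one (P : Pack F μ σ δ D) {μ' : ℝ} (h : μ' ∈ Metric.ball μ δ) :
    δ < 1 - μ' := by
  rw [Metric.mem_ball, Real.dist_eq, abs_lt] at h
  have h1 := P.hδ
  have h2 := P.hδle
  linarith [h.2]

lemma Pack.div_bound (P : Pack F μ σ δ D) (hsupp : F (Set.Ioi 1) = 0) :
    ∀ μ' ∈ Metric.ball μ δ, ∀ s ∈ Set.Icc (0:ℝ) σ,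
      ∀ᵐ x ∂F, |(s - 1) / qf μ' s x| ≤ 1 / δ := by
  intro μ' hμ'mem s hs
  have hδ0 := P.hδ
  have h1t : δ < 1 - μ' := P.ball_lt_one hμ'mem
  filter_upwards [ae_le_one hsupp] with x hx
  by_cases h : s = 1
  · subst h; simp; positivity
  · have hs1 : s < 1 := lt_of_le_of_ne (hs.2.trans P.hσ1) h
    have hq : 0 < qf μ' s x := qf_pos hx (by linarith) hs.1 hs1
    have hqlb : (1 - s) * (1 - μ') ≤ qf μ' s x := qf_lb1 hx hs.1
    rw [abs_div, abs_of_nonpos (by linarith : s - 1 ≤ 0), abs_of_pos hq,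
      div_le_div_iff₀ hq hδ0]
    nlinarith

lemma Pack.KKcont (P : Pack F μ σ δ D) :
    ContinuousOn (fun p : ℝ × ℝ => KK F p.1 p.2) (Metric.ball μ δ ×ˢ Set.Icc (0:ℝ) σ) := by
  have hint : ContinuousOn (fun p : ℝ × ℝ => ∫ x, Real.log (qf p.1 p.2 x) ∂F)
      (Metric.ball μ δ ×ˢ Set.Icc (0:ℝ) σ) := by
    apply continuousOn_of_dominated (bound := D)
    · exact fun p _ => (log_qf_meas p.1 p.2).aestronglyMeasurable
    · intro p hp
      rw [Set.mem_prod] at hp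
      filter_upwards [P.hP2] with x hx
      rw [Real.norm_eq_abs]
      exact hx p.2 hp.2 p.1 hp.1
    · exact P.hD
    · filter_upwards [P.hP1] with x hx
      intro p hp
      rw [Set.mem_prod] at hp
      have hq : 0 < qf p.1 p.2 x := hx p.2 hp.2 p.1 hp.1
      have hc : Continuous (fun p : ℝ × ℝ => qf p.1 p.2 x) := by unfold qf; fun_prop
      exact hc.continuousWithinAt.log (ne_of_gt hq)
  have hlog : ContinuousOn (fun p : ℝ × ℝ => Real.log (1 - p.1))
      (Metric.ball μ δ ×ˢ Set.Icc (0:ℝ) σ) := by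
    intro p hp
    rw [Set.mem_prod] at hp
    have hpos : (0:ℝ) < 1 - p.1 := lt_trans P.hδ (P.ball_lt_one hp.1)
    exact ((by fun_prop : Continuous fun p : ℝ × ℝ => 1 - p.1)).continuousWithinAt.log
      (ne_of_gt hpos)
  exact hint.sub hlog

lemma Pack.KKderiv (P : Pack F μ σ δ D) (hsupp : F (Set.Ioi 1) = 0) :
    ∀ s ∈ Set.Icc (0:ℝ) σ, ∀ μ' ∈ Metric.ball μ δ,
      HasDerivAt (fun t => KK F t s) (hhf F μ' s) μ' := by
  intro s hs μ' hμ'mem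
  have hδ0 := P.hδ
  rw [Metric.mem_ball] at hμ'mem
  have hε : 0 < δ - dist μ' μ := by linarith
  have hball : Metric.ball μ' (δ - dist μ' μ) ⊆ Metric.ball μ δ :=
    Metric.ball_subset_ball' (by linarith)
  have hμ'mem' : μ' ∈ Metric.ball μ δ := Metric.mem_ball.2 hμ'mem
  have key := hasDerivAt_integral_of_dominated_loc_of_deriv_le (μ := F) (x₀ := μ')
      (F := fun t x => Real.log (qf t s x)) (F' := fun t x => (s - 1) / qf t s x)
      (bound := fun _ => 1 / δ) (Metric.ball_mem_nhds _ hε)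
      (Eventually.of_forall fun t => (log_qf_meas t s).aestronglyMeasurable)
      ((P.hcond μ' hμ'mem' s hs).1)
      ((measurable_const.div (qf_meas μ' s)).aestronglyMeasurable)
      ?_ (integrable_const _) ?_
  · have hlog : HasDerivAt (fun t : ℝ => Real.log (1 - t)) (-(1 - μ')⁻¹) μ' := by
      have h1 : (0:ℝ) < 1 - μ' := lt_trans P.hδ (P.ball_lt_one hμ'mem')
      have hd : HasDerivAt (fun t : ℝ => 1 - t) (-1 : ℝ) μ' := by
        simpa using (hasDerivAt_id μ').const_sub 1
      have := (Real.hasDerivAt_log (ne_of_gt h1)).comp μ' hd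
      convert this using 1 <;> try rfl
      field_simp
    have := key.2.sub hlog
    simp only [KK, hhf]
    convert this using 1 <;> try rfl
    ring
  · filter_upwards [ae_le_one hsupp] with x hx t ht
    have h1t : δ < 1 - t := P.ball_lt_one (hball ht)
    rw [Real.norm_eq_abs]
    by_cases h : s = 1
    · subst h; simp; positivity
    · have hs1 : s < 1 := lt_of_le_of_ne (hs.2.trans P.hσ1) h
      have hq : 0 < qf t s x := qf_pos hx (by linarith) hs.1 hs1
      have hqlb : (1 - s) * (1 - t) ≤ qf t s x := qf_lb1 hx hs.1
      rw [abs_div, abs_of_nonpos (by linarith : s - 1 ≤ 0), abs_of_pos hq,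
        div_le_div_iff₀ hq hδ0]
      nlinarith
  · filter_upwards [P.hP1] with x hx t ht
    have hq : 0 < qf t s x := hx s hs t (hball ht)
    have hq' : HasDerivAt (fun t => qf t s x) (s - 1) t := by
      have hd : HasDerivAt (fun t : ℝ => (1 - s) * (1 - t) + s * (1 - x)) (s - 1) t := by
        have h1 : HasDerivAt (fun t : ℝ => 1 - t) (-1 : ℝ) t := by
          simpa using (hasDerivAt_id t).const_sub 1
        have h2 := (h1.const_mul (1 - s)).add_const (s * (1 - x))
        convert h2 using 1 <;> try rfl
        ring
      exact hd
    have hcomp := (Real.hasDerivAt_log (ne_of_gt hq)).comp t hq'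
    convert hcomp using 1 <;> try rfl
    field_simp [mul_comm]

lemma Pack.hhf_bound (P : Pack F μ σ δ D) (hsupp : F (Set.Ioi 1) = 0) :
    ∀ μ' ∈ Metric.ball μ δ, ∀ s ∈ Set.Icc (0:ℝ) σ, |hhf F μ' s| ≤ 2 / δ := by
  intro μ' hμ'mem s hs
  have hδ0 := P.hδ
  have h1t : δ < 1 - μ' := P.ball_lt_one hμ'mem
  have hb := P.div_bound hsupp μ' hμ'mem s hs
  have h1 : |∫ x, (s - 1) / qf μ' s x ∂F| ≤ 1 / δ := by
    have := norm_integral_le_of_norm_le (integrable_const (1 / δ))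
      (by filter_upwards [hb] with x hx; rwa [Real.norm_eq_abs])
    rwa [Real.norm_eq_abs, integral_const, probReal_univ, one_smul] at this
  have h2 : |(1 - μ')⁻¹| ≤ 1 / δ := by
    rw [abs_of_pos (inv_pos.2 (by linarith : (0:ℝ) < 1 - μ')), one_div]
    exact inv_anti₀ hδ0 h1t.le
  calc |hhf F μ' s| ≤ |∫ x, (s - 1) / qf μ' s x ∂F| + |(1 - μ')⁻¹| := abs_add_le _ _
    _ ≤ 1 / δ + 1 / δ := add_le_add h1 h2
    _ = 2 / δ := by ring

lemma Pack.hhfcont (P : Pack F μ σ δ D) (hsupp : F (Set.Ioi 1) = 0) :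
    ContinuousOn (fun p : ℝ × ℝ => hhf F p.1 p.2)
      (Metric.ball μ δ ×ˢ Set.Icc (0:ℝ) σ) := by
  have hint : ContinuousOn (fun p : ℝ × ℝ => ∫ x, (p.2 - 1) / qf p.1 p.2 x ∂F)
      (Metric.ball μ δ ×ˢ Set.Icc (0:ℝ) σ) := by
    apply continuousOn_of_dominated (bound := fun _ => 1 / δ)
    · exact fun p _ => (measurable_const.div (qf_meas p.1 p.2)).aestronglyMeasurable
    · intro p hp
      rw [Set.mem_prod] at hp
      filter_upwards [P.div_bound hsupp p.1 hp.1 p.2 hp.2] with x hx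
      rwa [Real.norm_eq_abs]
    · exact integrable_const _
    · filter_upwards [P.hP1] with x hx
      intro p hp
      rw [Set.mem_prod] at hp
      have hq : 0 < qf p.1 p.2 x := hx p.2 hp.2 p.1 hp.1
      have hc : Continuous (fun p : ℝ × ℝ => qf p.1 p.2 x) := by unfold qf; fun_prop
      exact ((by fun_prop : Continuous fun p : ℝ × ℝ => p.2 - 1)).continuousWithinAt.div
        hc.continuousWithinAt (ne_of_gt hq)
  have hinv : ContinuousOn (fun p : ℝ × ℝ => (1 - p.1)⁻¹)
      (Metric.ball μ δ ×ˢ Set.Icc (0:ℝ) σ) := by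
    intro p hp
    rw [Set.mem_prod] at hp
    have hpos : (0:ℝ) < 1 - p.1 := lt_trans P.hδ (P.ball_lt_one hp.1)
    exact ((by fun_prop : Continuous fun p : ℝ × ℝ => 1 - p.1)).continuousWithinAt.inv₀
      (ne_of_gt hpos)
  exact hint.add hinv

/-- First-order condition: at an interior maximizer, `hhf F μ s* = s*/(1-μ)`. -/
lemma Pack.foc (P : Pack F μ σ δ D) (hsupp : F (Set.Ioi 1) = 0)
    (habs : Integrable (fun x : ℝ => |x|) F)
    {sm : ℝ} (hsm0 : 0 < sm) (hsm1 : sm < 1) (hsmσ : sm < σ)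
    (hmax : ∀ s ∈ Set.Icc (0:ℝ) σ, KK F μ s ≤ KK F μ sm) :
    hhf F μ sm = sm * (1 - μ)⁻¹ := by
  have hμ1 : μ < 1 := P.hμ1
  have hμball : μ ∈ Metric.ball μ δ := Metric.mem_ball_self P.hδ
  have hsm : sm ∈ Set.Icc (0:ℝ) σ := ⟨hsm0.le, hsmσ.le⟩
  set s₁ := (1 + sm) / 2 with hs₁def
  have hs₁1 : s₁ < 1 := by simp only [hs₁def]; linarith
  have hsm_lt : sm < s₁ := by simp only [hs₁def]; linarith
  set ε := min sm (min (s₁ - sm) (σ - sm)) with hεdef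
  have hε : 0 < ε := by
    simp only [hεdef, lt_min_iff]
    exact ⟨hsm0, by constructor <;> linarith⟩
  set c : ℝ := (1 - s₁) * (1 - μ) with hcdef
  have hc : 0 < c := by nlinarith
  have htfacts : ∀ t ∈ Metric.ball sm ε, 0 < t ∧ t < s₁ ∧ t < σ := by
    intro t ht
    rw [Metric.mem_ball, Real.dist_eq, abs_lt] at ht
    have e1 : ε ≤ sm := min_le_left _ _
    have e2 : ε ≤ s₁ - sm := le_trans (min_le_right _ _) (min_le_left _ _)
    have e3 : ε ≤ σ - sm := le_trans (min_le_right _ _) (min_le_right _ _)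
    exact ⟨by linarith [ht.1], by linarith [ht.2], by linarith [ht.2]⟩
  have key := hasDerivAt_integral_of_dominated_loc_of_deriv_le (μ := F) (x₀ := sm)
      (F := fun t x => Real.log (qf μ t x)) (F' := fun t x => (μ - x) / qf μ t x)
      (bound := fun x => (|μ| + |x|) / c) (Metric.ball_mem_nhds _ hε)
      (Eventually.of_forall fun t => (log_qf_meas μ t).aestronglyMeasurable)
      ((P.hcond μ hμball sm hsm).1)
      (((measurable_const.sub measurable_id).div (qf_meas μ sm)).aestronglyMeasurable)
      ?hbnd (((integrable_const |μ|).add habs).div_const c) ?hdiff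
  case hbnd =>
    filter_upwards [ae_le_one hsupp] with x hx t ht
    obtain ⟨ht0, ht1, htσ⟩ := htfacts t ht
    have hq : 0 < qf μ t x := qf_pos hx hμ1 ht0.le (by linarith)
    have hqlb : c ≤ qf μ t x := by
      have := qf_lb1 (μ' := μ) (s := t) hx ht0.le
      nlinarith
    have hnum : |μ - x| ≤ |μ| + |x| := by
      have h1 := le_abs_self μ; have h2 := neg_abs_le μ
      have h3 := le_abs_self x; have h4 := neg_abs_le x
      rw [abs_le]; constructor <;> linarith
    rw [Real.norm_eq_abs, abs_div, abs_of_pos hq]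
    exact div_le_div₀ (by positivity) hnum hc hqlb
  case hdiff =>
    filter_upwards [ae_le_one hsupp] with x hx t ht
    obtain ⟨ht0, ht1, htσ⟩ := htfacts t ht
    have hq : 0 < qf μ t x := qf_pos hx hμ1 ht0.le (by linarith)
    have hq' : HasDerivAt (fun t => qf μ t x) (μ - x) t := by
      have h1 : HasDerivAt (fun t : ℝ => 1 - t) (-1 : ℝ) t := by
        simpa using (hasDerivAt_id t).const_sub 1
      have h2 := (h1.mul_const (1 - μ)).add ((hasDerivAt_id t).mul_const (1 - x))
      convert h2 using 1 <;> try rfl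
      ring
    have hcomp := (Real.hasDerivAt_log (ne_of_gt hq)).comp t hq'
    convert hcomp using 1 <;> try rfl
    field_simp [mul_comm]
  -- derivative of s ↦ KK F μ s at sm is zero
  have hKd : HasDerivAt (fun t => KK F μ t) (∫ x, (μ - x) / qf μ sm x ∂F) sm := by
    simpa [KK] using key.2.sub_const (Real.log (1 - μ))
  have hloc : IsLocalMax (fun s => KK F μ s) sm := by
    have hnhds : Set.Icc (0:ℝ) σ ∈ 𝓝 sm := Icc_mem_nhds hsm0 hsmσ
    filter_upwards [hnhds] with s hs using hmax s hs
  have hpp0 : ∫ x, (μ - x) / qf μ sm x ∂F = 0 := hloc.hasDerivAt_eq_zero hKd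
  -- integral identities
  set c' : ℝ := (1 - sm) * (1 - μ) with hc'def
  have hc' : 0 < c' := by nlinarith
  have hqposae : ∀ᵐ x ∂F, c' ≤ qf μ sm x ∧ 0 < qf μ sm x := by
    filter_upwards [ae_le_one hsupp] with x hx
    have h1 : c' ≤ qf μ sm x := qf_lb1 hx hsm0.le
    exact ⟨h1, lt_of_lt_of_le hc' h1⟩
  have hint_inv : Integrable (fun x => (qf μ sm x)⁻¹) F := by
    apply (integrable_const (c'⁻¹)).mono' (qf_meas μ sm).inv.aestronglyMeasurable
    filter_upwards [hqposae] with x hx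
    rw [Real.norm_eq_abs, Pi.inv_apply, abs_of_pos (inv_pos.2 hx.2)]
    exact inv_anti₀ hc' hx.1
  have hsm_ne : sm ≠ 0 := ne_of_gt hsm0
  have hcong : (fun x => (μ - x) / qf μ sm x)
      =ᵐ[F] fun x => sm⁻¹ * (1 - (1 - μ) * (qf μ sm x)⁻¹) := by
    filter_upwards [hqposae] with x hx
    have hq0 : qf μ sm x ≠ 0 := ne_of_gt hx.2
    field_simp
    simp only [qf]
    ring
  have hval : (0:ℝ) = sm⁻¹ * (1 - (1 - μ) * ∫ x, (qf μ sm x)⁻¹ ∂F) := by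
    rw [← hpp0, integral_congr_ae hcong, integral_const_mul]
    congr 1
    rw [integral_sub (integrable_const 1) (hint_inv.const_mul (1 - μ)),
      integral_const, integral_const_mul]
    simp
  have hq_int_eq : ∫ x, (qf μ sm x)⁻¹ ∂F = (1 - μ)⁻¹ := by
    have h2 : 1 - (1 - μ) * ∫ x, (qf μ sm x)⁻¹ ∂F = 0 := by
      by_contra hne
      have := mul_ne_zero (inv_ne_zero hsm_ne) hne
      exact this hval.symm
    have h3 : (1 - μ) ≠ 0 := by linarith
    field_simp at h2 ⊢
    linarith
  have hfin : ∫ x, (sm - 1) / qf μ sm x ∂F = (sm - 1) * (1 - μ)⁻¹ := by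
    have heq : (fun x => (sm - 1) / qf μ sm x) = fun x => (sm - 1) * (qf μ sm x)⁻¹ := by
      funext x; rw [div_eq_mul_inv]
    rw [heq, integral_const_mul, hq_int_eq]
  simp only [hhf]
  rw [hfin]
  ring

/-- The maximum of `KK F μ` on `[0,σ]` is positive somewhere, so `0` is not a maximizer. -/
lemma Pack.exists_pos (P : Pack F μ σ δ D) (hsupp : F (Set.Ioi 1) = 0)
    (habs : Integrable (fun x : ℝ => |x|) F) (hsq : Integrable (fun x : ℝ => x ^ 2) F)
    (hEF : ∫ x, x ∂F < μ) :
    ∃ s ∈ Set.Icc (0:ℝ) σ, 0 < KK F μ s := by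
  have hμ1 : μ < 1 := P.hμ1
  have h1μ : (0:ℝ) < 1 - μ := by linarith
  have hμball : μ ∈ Metric.ball μ δ := Metric.mem_ball_self P.hδ
  have hid : Integrable (fun x : ℝ => x) F :=
    habs.mono' measurable_id.aestronglyMeasurable (Eventually.of_forall fun x => by simp)
  set y : ℝ → ℝ := fun x => (μ - x) * (1 - μ)⁻¹ with hydef
  have hy_int : Integrable y F := ((integrable_const μ).sub hid).mul_const _
  have hysq_int : Integrable (fun x => y x ^ 2) F := by
    have heq : (fun x => y x ^ 2)
        = fun x => (μ ^ 2 - 2 * μ * x + x ^ 2) * ((1 - μ)⁻¹) ^ 2 := by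
      funext x; simp only [hydef]; ring
    rw [heq]
    exact (((integrable_const (μ ^ 2)).sub (hid.const_mul (2 * μ))).add hsq).mul_const _
  set m : ℝ := ∫ x, y x ∂F with hmdef
  have hm_eq : m = (μ - ∫ x, x ∂F) * (1 - μ)⁻¹ := by
    simp only [hmdef, hydef]
    rw [integral_mul_const, integral_sub (integrable_const μ) hid, integral_const]
    simp
  have hm : 0 < m := by
    rw [hm_eq]
    have : 0 < μ - ∫ x, x ∂F := by linarith
    positivity
  set Y : ℝ := ∫ x, y x ^ 2 ∂F with hYdef
  have hY0 : 0 ≤ Y := integral_nonneg fun x => sq_nonneg _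
  set s : ℝ := min σ (min (1 / 2) (m / (2 * Y + 1))) with hsdef
  have hs0 : 0 < s := by
    simp only [hsdef, lt_min_iff]
    refine ⟨P.hσ0, by norm_num, by positivity⟩
  have hsσ : s ≤ σ := min_le_left _ _
  have hs_half : s ≤ 1 / 2 := le_trans (min_le_right _ _) (min_le_left _ _)
  have hs_m : s ≤ m / (2 * Y + 1) := le_trans (min_le_right _ _) (min_le_right _ _)
  have hsmem : s ∈ Set.Icc (0:ℝ) σ := ⟨hs0.le, hsσ⟩
  refine ⟨s, hsmem, ?_⟩
  have hint := (P.hcond μ hμball s hsmem).1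
  have hbound : ∀ᵐ x ∂F, s * y x - 2 * s ^ 2 * y x ^ 2
      ≤ Real.log (qf μ s x) - Real.log (1 - μ) := by
    filter_upwards [ae_le_one hsupp] with x hx
    have hy_lb : -1 ≤ y x := by
      have h1 : -(1 - μ) ≤ μ - x := by linarith
      have h2 := mul_le_mul_of_nonneg_right h1 (inv_nonneg.2 h1μ.le)
      rwa [neg_mul, mul_inv_cancel₀ (ne_of_gt h1μ)] at h2
    set t := s * y x with htdef
    have ht_lb : -(1 / 2) ≤ t := by
      have : s * (-1) ≤ s * y x := mul_le_mul_of_nonneg_left hy_lb hs0.le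
      nlinarith
    have h1pt : 0 < 1 + t := by linarith
    have hqf_eq : (1 - μ) * (1 + t) = qf μ s x := by
      simp only [htdef, hydef, qf]
      field_simp
      ring
    have hlog_eq : Real.log (qf μ s x) - Real.log (1 - μ) = Real.log (1 + t) := by
      rw [← hqf_eq, Real.log_mul (ne_of_gt h1μ) (ne_of_gt h1pt)]
      ring
    rw [hlog_eq]
    have hstep : t - 2 * t ^ 2 ≤ Real.log (1 + t) := by
      have hinv : Real.log (1 + t)⁻¹ ≤ (1 + t)⁻¹ - 1 :=
        Real.log_le_sub_one_of_pos (inv_pos.2 h1pt)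
      rw [Real.log_inv] at hinv
      have h2 : 1 - (1 + t)⁻¹ ≤ Real.log (1 + t) := by linarith
      have h3 : 1 - (1 + t)⁻¹ = t / (1 + t) := by field_simp; ring
      have h4 : t - 2 * t ^ 2 ≤ t / (1 + t) := by
        rw [le_div_iff₀ h1pt]
        nlinarith [sq_nonneg t]
      linarith
    calc s * y x - 2 * s ^ 2 * y x ^ 2 = t - 2 * t ^ 2 := by rw [htdef]; ring
      _ ≤ Real.log (1 + t) := hstep
  have hlhs_int : Integrable (fun x => s * y x - 2 * s ^ 2 * y x ^ 2) F :=
    (hy_int.const_mul s).sub (hysq_int.const_mul (2 * s ^ 2))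
  have hmono := integral_mono_ae hlhs_int (hint.sub (integrable_const _)) hbound
  simp only [Pi.sub_apply] at hmono
  have hlhs : ∫ x, (s * y x - 2 * s ^ 2 * y x ^ 2) ∂F = s * m - 2 * s ^ 2 * Y := by
    rw [integral_sub (hy_int.const_mul s) (hysq_int.const_mul (2 * s ^ 2)),
      integral_const_mul, integral_const_mul]
  have hrhs : ∫ x, (Real.log (qf μ s x) - Real.log (1 - μ)) ∂F = KK F μ s := by
    rw [integral_sub hint (integrable_const _), integral_const, KK]
    simp
  rw [hlhs, hrhs] at hmono
  have hkey : 2 * s * Y < m := by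
    have h1 : s * (2 * Y + 1) ≤ m := by
      have h2 := hs_m
      rwa [le_div_iff₀ (by positivity : (0:ℝ) < 2 * Y + 1)] at h2
    nlinarith
  calc (0:ℝ) < s * (m - 2 * s * Y) := by nlinarith
    _ = s * m - 2 * s ^ 2 * Y := by ring
    _ ≤ KK F μ s := hmono

/-- Uniqueness of the maximizer via strict concavity. -/
lemma Pack.uniq (P : Pack F μ σ δ D) (hEF : ∫ x, x ∂F < μ)
    {s₁ s₂ : ℝ} (h₁ : s₁ ∈ Set.Icc (0:ℝ) σ) (h₂ : s₂ ∈ Set.Icc (0:ℝ) σ)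
    (hm₁ : ∀ s ∈ Set.Icc (0:ℝ) σ, KK F μ s ≤ KK F μ s₁)
    (hm₂ : ∀ s ∈ Set.Icc (0:ℝ) σ, KK F μ s ≤ KK F μ s₂) : s₁ = s₂ := by
  by_contra hne
  have hμ1 : μ < 1 := P.hμ1
  have hμball : μ ∈ Metric.ball μ δ := Metric.mem_ball_self P.hδ
  set m := (s₁ + s₂) / 2 with hmdef
  have hm : m ∈ Set.Icc (0:ℝ) σ :=
    ⟨by simp only [hmdef]; linarith [h₁.1, h₂.1], by simp only [hmdef]; linarith [h₁.2, h₂.2]⟩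
  have hint1 := (P.hcond μ hμball s₁ h₁).1
  have hint2 := (P.hcond μ hμball s₂ h₂).1
  have hintm := (P.hcond μ hμball m hm).1
  have hqpos : ∀ᵐ x ∂F, 0 < qf μ s₁ x ∧ 0 < qf μ s₂ x ∧ 0 < qf μ m x := by
    filter_upwards [P.hP1] with x hx
    exact ⟨hx s₁ h₁ μ hμball, hx s₂ h₂ μ hμball, hx m hm μ hμball⟩
  set g := fun x => Real.log (qf μ m x)
    - (Real.log (qf μ s₁ x) + Real.log (qf μ s₂ x)) / 2 with hgdef
  have hg_int : Integrable g F := hintm.sub ((hint1.add hint2).div_const 2)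
  have hmid : ∀ x, (1/2 : ℝ) * qf μ s₁ x + (1/2 : ℝ) * qf μ s₂ x = qf μ m x := by
    intro x; simp only [qf, hmdef]; ring
  have hg_nonneg : 0 ≤ᵐ[F] g := by
    filter_upwards [hqpos] with x hx
    obtain ⟨hq1, hq2, hqm⟩ := hx
    have hconc := strictConcaveOn_log_Ioi.concaveOn.2 (Set.mem_Ioi.2 hq1)
      (Set.mem_Ioi.2 hq2) (by norm_num : (0:ℝ) ≤ 1/2) (by norm_num : (0:ℝ) ≤ 1/2)
      (by norm_num)
    simp only [smul_eq_mul] at hconc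
    rw [hmid x] at hconc
    simp only [hgdef, Pi.zero_apply]
    linarith
  have hM : KK F μ s₁ = KK F μ s₂ :=
    le_antisymm (hm₂ s₁ h₁) (hm₁ s₂ h₂)
  have hgint_le : ∫ x, g x ∂F ≤ 0 := by
    have hhalf : Integrable (fun x => (Real.log (qf μ s₁ x) + Real.log (qf μ s₂ x)) / 2) F :=
      (hint1.add hint2).div_const 2
    have e1a : ∫ x, g x ∂F = (∫ x, Real.log (qf μ m x) ∂F)
        - ∫ x, (Real.log (qf μ s₁ x) + Real.log (qf μ s₂ x)) / 2 ∂F :=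
      integral_sub hintm hhalf
    have e1b : ∫ x, (Real.log (qf μ s₁ x) + Real.log (qf μ s₂ x)) / 2 ∂F
        = ((∫ x, Real.log (qf μ s₁ x) ∂F) + ∫ x, Real.log (qf μ s₂ x) ∂F) / 2 := by
      rw [integral_div, integral_add hint1 hint2]
    have e1 : ∫ x, g x ∂F = (∫ x, Real.log (qf μ m x) ∂F)
        - ((∫ x, Real.log (qf μ s₁ x) ∂F) + ∫ x, Real.log (qf μ s₂ x) ∂F) / 2 := by
      rw [e1a, e1b]
    have e2 := hm₁ m hm
    simp only [KK] at e2 hM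
    rw [e1]
    linarith
  have hzero : ∫ x, g x ∂F = 0 :=
    le_antisymm hgint_le (integral_nonneg_of_ae hg_nonneg)
  have hg0 : g =ᵐ[F] 0 := (integral_eq_zero_iff_of_nonneg_ae hg_nonneg hg_int).1 hzero
  have hxμ : ∀ᵐ x ∂F, x = μ := by
    filter_upwards [hg0, hqpos] with x hgx hq
    obtain ⟨hq1, hq2, hqm⟩ := hq
    by_contra hxne
    have hq12 : qf μ s₁ x ≠ qf μ s₂ x := by
      simp only [qf]
      intro h
      have h2 : (s₁ - s₂) * (μ - x) = 0 := by linear_combination h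
      rcases mul_eq_zero.1 h2 with h3 | h3
      · exact hne (by linarith)
      · exact hxne (by linarith)
    have hstrict := strictConcaveOn_log_Ioi.2 (Set.mem_Ioi.2 hq1) (Set.mem_Ioi.2 hq2)
      hq12 (by norm_num : (0:ℝ) < 1/2) (by norm_num : (0:ℝ) < 1/2) (by norm_num)
    simp only [smul_eq_mul] at hstrict
    rw [hmid x] at hstrict
    have : g x = 0 := hgx
    simp only [hgdef] at this
    linarith
  have hEμ : ∫ x, x ∂F = μ := by
    have : (fun x : ℝ => x) =ᵐ[F] fun _ => μ := hxμ
    rw [integral_congr_ae this, integral_const]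
    simp
  linarith

/-- Tail bound hypothesis: values of `LL` on `(σ,1]` do not matter. -/
def TailSmall (F : Measure ℝ) (μ σ δ : ℝ) : Prop :=
  ∀ μ' ∈ Metric.ball μ δ, ∀ s ∈ Set.Ioc σ (1:ℝ), LL F μ' (s * (1 - μ')⁻¹) ≤ (0 : EReal)

lemma Pack.dtilde_eq (P : Pack F μ σ δ D) (htail : TailSmall F μ σ δ)
    {μ' : ℝ} (hμ' : μ' ∈ Metric.ball μ δ) :
    Dtilde F μ' = ((sSup (KK F μ' '' Set.Icc (0:ℝ) σ) : ℝ) : EReal) := by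
  have hμ'1 : μ' < 1 := by
    have h1 := P.ball_lt_one hμ'
    have h2 := P.hδ
    linarith
  have hKc : ContinuousOn (KK F μ') (Set.Icc (0:ℝ) σ) := by
    have hc1 := P.KKcont
    have hc2 : ContinuousOn (fun s => ((μ', s) : ℝ × ℝ)) (Set.Icc (0:ℝ) σ) :=
      (Continuous.prodMk_right μ').continuousOn
    exact hc1.comp hc2 fun s hs => Set.mk_mem_prod hμ' hs
  have hcompact : IsCompact (Set.Icc (0:ℝ) σ) := isCompact_Icc
  have hne : (Set.Icc (0:ℝ) σ).Nonempty := Set.nonempty_Icc.2 P.hσ0.le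
  obtain ⟨s0, hs0mem, hs0max⟩ := hcompact.exists_isMaxOn hne hKc
  have hs0max' := isMaxOn_iff.1 hs0max
  have hgreat : IsGreatest (KK F μ' '' Set.Icc (0:ℝ) σ) (KK F μ' s0) :=
    ⟨Set.mem_image_of_mem _ hs0mem, by rintro v ⟨s, hs, rfl⟩; exact hs0max' s hs⟩
  have hsup_eq : sSup (KK F μ' '' Set.Icc (0:ℝ) σ) = KK F μ' s0 := hgreat.csSup_eq
  have hzero_le : (0:ℝ) ≤ KK F μ' s0 := by
    have := hs0max' 0 ⟨le_refl 0, P.hσ0.le⟩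
    rwa [KK_zero] at this
  rw [Dtilde_eq_sup hμ'1, hsup_eq]
  apply le_antisymm
  · refine iSup₂_le fun s hs => ?_
    by_cases hsσ : s ≤ σ
    · rw [LL_eq hμ'1 s, if_pos (P.hcond μ' hμ' s ⟨hs.1, hsσ⟩)]
      exact_mod_cast hs0max' s ⟨hs.1, hsσ⟩
    · refine le_trans (htail μ' hμ' s ⟨lt_of_not_ge hsσ, hs.2⟩) ?_
      exact_mod_cast hzero_le
  · have heq : ((KK F μ' s0 : ℝ) : EReal) = LL F μ' (s0 * (1 - μ')⁻¹) := by
      rw [LL_eq hμ'1 s0, if_pos (P.hcond μ' hμ' s0 hs0mem)]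
    rw [heq]
    exact le_iSup₂ (f := fun s (_ : s ∈ Set.Icc (0:ℝ) 1) => LL F μ' (s * (1 - μ')⁻¹))
      s0 ⟨hs0mem.1, hs0mem.2.trans P.hσ1⟩

end Core

lemma div_le_div_of_nonneg_right' {a b c : ℝ} (h : a ≤ b) (hc : 0 < c) : a / c ≤ b / c := by
  gcongr

/-- Abstract Danskin / envelope theorem. -/
lemma danskin {K h : ℝ → ℝ → ℝ} {σ δ C sm μ : ℝ}
    (hσ : 0 < σ) (hδ : 0 < δ)
    (hKd : ∀ s ∈ Set.Icc (0:ℝ) σ, ∀ μ' ∈ Metric.ball μ δ,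
      HasDerivAt (fun t => K t s) (h μ' s) μ')
    (hCb : ∀ μ' ∈ Metric.ball μ δ, ∀ s ∈ Set.Icc (0:ℝ) σ, |h μ' s| ≤ C)
    (hKc : ∀ μ' ∈ Metric.ball μ δ, ContinuousOn (K μ') (Set.Icc (0:ℝ) σ))
    (hhc : ContinuousWithinAt (fun p : ℝ × ℝ => h p.1 p.2)
      (Metric.ball μ δ ×ˢ Set.Icc (0:ℝ) σ) (μ, sm))
    (hsm : sm ∈ Set.Icc (0:ℝ) σ)
    (hmax : ∀ s ∈ Set.Icc (0:ℝ) σ, K μ s ≤ K μ sm)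
    (huniq : ∀ s ∈ Set.Icc (0:ℝ) σ, K μ sm ≤ K μ s → s = sm) :
    HasDerivAt (fun μ' => sSup (K μ' '' Set.Icc (0:ℝ) σ)) (h μ sm) μ := by
  set A := Set.Icc (0:ℝ) σ with hAdef
  set U := Metric.ball μ δ with hUdef
  have hμU : μ ∈ U := Metric.mem_ball_self hδ
  have hAc : IsCompact A := isCompact_Icc
  have hAne : A.Nonempty := Set.nonempty_Icc.2 hσ.le
  -- selection of maximizers
  have hsel0 : ∀ μ' : ℝ, μ' ∈ U → ∃ s, s ∈ A ∧ ∀ s' ∈ A, K μ' s' ≤ K μ' s := by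
    intro μ' hμ'
    obtain ⟨s0, hs0, hmax0⟩ := hAc.exists_isMaxOn hAne (hKc μ' hμ')
    exact ⟨s0, hs0, fun s' hs' => isMaxOn_iff.1 hmax0 s' hs'⟩
  choose! sel hselA hselmax using hsel0
  set g := fun μ' => sSup (K μ' '' A) with hgdef
  have hgval : ∀ μ' ∈ U, g μ' = K μ' (sel μ') := by
    intro μ' hμ'
    exact IsGreatest.csSup_eq ⟨Set.mem_image_of_mem _ (hselA μ' hμ'),
      by rintro v ⟨s, hs, rfl⟩; exact hselmax μ' hμ' s hs⟩
  have hgμ : g μ = K μ sm := by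
    rw [hgval μ hμU]
    have h1 := hselmax μ hμU sm hsm
    have h2 := hmax (sel μ) (hselA μ hμU)
    linarith
  have hC0 : 0 ≤ C := le_trans (abs_nonneg _) (hCb μ hμU sm hsm)
  have hlip : ∀ s ∈ A, ∀ μ₁ ∈ U, ∀ μ₂ ∈ U, |K μ₁ s - K μ₂ s| ≤ C * |μ₁ - μ₂| := by
    intro s hs μ₁ h1 μ₂ h2
    have hres := Convex.norm_image_sub_le_of_norm_hasDerivWithin_le
      (f := fun t => K t s) (f' := fun t => h t s) (s := U)
      (fun t ht => (hKd s hs t ht).hasDerivWithinAt)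
      (fun t ht => by rw [Real.norm_eq_abs]; exact hCb t ht s hs)
      (convex_ball μ δ) h2 h1
    simpa [Real.norm_eq_abs] using hres
  have hselconv : ∀ ε > (0:ℝ), ∃ ρ > (0:ℝ), ∀ μ' ∈ U, |μ' - μ| < ρ → |sel μ' - sm| < ε := by
    intro ε hε
    by_cases hBne : (A ∩ {s | ε ≤ |s - sm|}).Nonempty
    · have hBc : IsCompact (A ∩ {s | ε ≤ |s - sm|}) :=
        hAc.inter_right (isClosed_le continuous_const (continuous_id.sub continuous_const).abs)
      obtain ⟨sb, hsb, hsbmax⟩ := hBc.exists_isMaxOn hBne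
        ((hKc μ hμU).mono Set.inter_subset_left)
      have hsbmax' := isMaxOn_iff.1 hsbmax
      have hηpos : 0 < K μ sm - K μ sb := by
        rcases lt_or_eq_of_le (hmax sb hsb.1) with hcase | hcase
        · linarith
        · exfalso
          have hsbm := huniq sb hsb.1 (le_of_eq hcase.symm)
          have h2 := hsb.2
          rw [hsbm] at h2
          simp only [mem_setOf_eq, sub_self, abs_zero] at h2
          linarith
      set η := K μ sm - K μ sb with hηdef
      refine ⟨η / (3 * (C + 1)), by positivity, ?_⟩
      intro μ' hμ'U hclose
      by_contra hfar
      push_neg at hfar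
      have hselB : sel μ' ∈ A ∩ {s | ε ≤ |s - sm|} := ⟨hselA μ' hμ'U, hfar⟩
      have e1 := abs_le.1 (hlip _ (hselA μ' hμ'U) μ' hμ'U μ hμU)
      have e2 := abs_le.1 (hlip sm hsm μ' hμ'U μ hμU)
      have e3 : K μ (sel μ') ≤ K μ sb := hsbmax' _ hselB
      have e4 : K μ' sm ≤ K μ' (sel μ') := hselmax μ' hμ'U sm hsm
      have eC : C * |μ' - μ| ≤ C * (η / (3 * (C + 1))) :=
        mul_le_mul_of_nonneg_left hclose.le hC0
      have eC3 : C * (η / (3 * (C + 1))) ≤ η / 3 := by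
        rw [mul_div_assoc']
        rw [div_le_div_iff₀ (by positivity) (by norm_num)]
        nlinarith
      linarith [e1.1, e1.2, e2.1, e2.2]
    · refine ⟨1, one_pos, fun μ' hμ'U _ => ?_⟩
      by_contra hfar
      push_neg at hfar
      exact hBne ⟨sel μ', hselA μ' hμ'U, hfar⟩
  rw [hasDerivAt_iff_tendsto_slope]
  have hΨ : Tendsto (slope (fun t => K t sm) μ) (𝓝[≠] μ) (𝓝 (h μ sm)) :=
    hasDerivAt_iff_tendsto_slope.1 (hKd sm hsm μ hμU)
  have hΦ : Tendsto (fun μ' => slope (fun t => K t (sel μ')) μ μ') (𝓝[≠] μ)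
      (𝓝 (h μ sm)) := by
    rw [Metric.tendsto_nhdsWithin_nhds]
    intro ε hε
    obtain ⟨ρ, hρ, hcont⟩ := Metric.continuousWithinAt_iff.1 hhc ε hε
    obtain ⟨ρ', hρ', hsel'⟩ := hselconv ρ hρ
    refine ⟨min (min ρ ρ') δ, by positivity, ?_⟩
    intro μ' hμ'ne hdist
    have hdμ : dist μ' μ < δ := lt_of_lt_of_le hdist (min_le_right _ _)
    have hμ'U : μ' ∈ U := Metric.mem_ball.2 hdμ
    have hdρ : dist μ' μ < ρ := lt_of_lt_of_le hdist ((min_le_left _ _).trans (min_le_left _ _))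
    have hdρ' : dist μ' μ < ρ' := lt_of_lt_of_le hdist ((min_le_left _ _).trans (min_le_right _ _))
    have hselnear : |sel μ' - sm| < ρ := hsel' μ' hμ'U (by rwa [← Real.dist_eq])
    have hμ'neμ : μ' ≠ μ := hμ'ne
    have hdμ' : |μ' - μ| < δ := by rwa [Real.dist_eq] at hdμ
    have hsubU : ∀ t, min μ' μ ≤ t → t ≤ max μ' μ → t ∈ U := by
      intro t h1 h2
      rw [hUdef, Metric.mem_ball, Real.dist_eq, abs_lt]
      rw [abs_lt] at hdμ'
      rcases le_total μ' μ with hc | hc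
      · rw [min_eq_left hc] at h1; rw [max_eq_right hc] at h2
        constructor <;> linarith
      · rw [min_eq_right hc] at h1; rw [max_eq_left hc] at h2
        constructor <;> linarith
    have hρμ' : |μ' - μ| < ρ := by rwa [Real.dist_eq] at hdρ
    have hsubρ : ∀ t, min μ' μ ≤ t → t ≤ max μ' μ → dist t μ < ρ := by
      intro t h1 h2
      rw [Real.dist_eq, abs_lt]
      rw [abs_lt] at hρμ'
      rcases le_total μ' μ with hc | hc
      · rw [min_eq_left hc] at h1; rw [max_eq_right hc] at h2
        constructor <;> linarith
      · rw [min_eq_right hc] at h1; rw [max_eq_left hc] at h2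
        constructor <;> linarith
    have main : ∃ ξ : ℝ, ξ ∈ U ∧ dist ξ μ < ρ ∧
        slope (fun t => K t (sel μ')) μ μ' = h ξ (sel μ') := by
      rcases lt_or_gt_of_ne hμ'neμ with hlt | hgt
      · have hminmax : min μ' μ = μ' ∧ max μ' μ = μ :=
          ⟨min_eq_left hlt.le, max_eq_right hlt.le⟩
        have hcont' : ContinuousOn (fun t => K t (sel μ')) (Set.Icc μ' μ) := by
          intro t ht
          have htU : t ∈ U := hsubU t (by rw [hminmax.1]; exact ht.1)
            (by rw [hminmax.2]; exact ht.2)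
          exact ((hKd (sel μ') (hselA μ' hμ'U) t htU).continuousAt).continuousWithinAt
        have hderiv' : ∀ t ∈ Set.Ioo μ' μ,
            HasDerivAt (fun t => K t (sel μ')) (h t (sel μ')) t := fun t ht =>
          hKd (sel μ') (hselA μ' hμ'U) t (hsubU t (by rw [hminmax.1]; exact ht.1.le)
            (by rw [hminmax.2]; exact ht.2.le))
        obtain ⟨ξ, hξ, hξeq⟩ := exists_hasDerivAt_eq_slope _ _ hlt hcont' hderiv'
        refine ⟨ξ, hsubU ξ (by rw [hminmax.1]; exact hξ.1.le) (by rw [hminmax.2]; exact hξ.2.le),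
          hsubρ ξ (by rw [hminmax.1]; exact hξ.1.le) (by rw [hminmax.2]; exact hξ.2.le), ?_⟩
        rw [slope_def_field, hξeq]
        rw [← neg_sub (K μ (sel μ')) (K μ' (sel μ')), ← neg_sub μ μ', neg_div_neg_eq]
      · have hminmax : min μ' μ = μ ∧ max μ' μ = μ' :=
          ⟨min_eq_right hgt.le, max_eq_left hgt.le⟩
        have hcont' : ContinuousOn (fun t => K t (sel μ')) (Set.Icc μ μ') := by
          intro t ht
          have htU : t ∈ U := hsubU t (by rw [hminmax.1]; exact ht.1)
            (by rw [hminmax.2]; exact ht.2)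
          exact ((hKd (sel μ') (hselA μ' hμ'U) t htU).continuousAt).continuousWithinAt
        have hderiv' : ∀ t ∈ Set.Ioo μ μ',
            HasDerivAt (fun t => K t (sel μ')) (h t (sel μ')) t := fun t ht =>
          hKd (sel μ') (hselA μ' hμ'U) t (hsubU t (by rw [hminmax.1]; exact ht.1.le)
            (by rw [hminmax.2]; exact ht.2.le))
        obtain ⟨ξ, hξ, hξeq⟩ := exists_hasDerivAt_eq_slope _ _ hgt hcont' hderiv'
        refine ⟨ξ, hsubU ξ (by rw [hminmax.1]; exact hξ.1.le) (by rw [hminmax.2]; exact hξ.2.le),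
          hsubρ ξ (by rw [hminmax.1]; exact hξ.1.le) (by rw [hminmax.2]; exact hξ.2.le), ?_⟩
        rw [slope_def_field, hξeq]
    obtain ⟨ξ, hξU, hξρ, hslope⟩ := main
    rw [hslope]
    have hmemprod : (ξ, sel μ') ∈ U ×ˢ A := Set.mk_mem_prod hξU (hselA μ' hμ'U)
    have hdprod : dist ((ξ, sel μ') : ℝ × ℝ) ((μ, sm) : ℝ × ℝ) < ρ := by
      rw [Prod.dist_eq]
      exact max_lt hξρ (by rw [Real.dist_eq]; exact hselnear)
    exact hcont hmemprod hdprod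
  -- sandwich the slope of g between the slopes Φ and Ψ on each side
  have hUev : ∀ᶠ μ' in 𝓝 μ, μ' ∈ U := Metric.ball_mem_nhds μ hδ
  have hleft : Tendsto (slope g μ) (𝓝[<] μ) (𝓝 (h μ sm)) := by
    have hsub : Set.Iio μ ⊆ {μ}ᶜ := fun x hx => ne_of_lt hx
    apply tendsto_of_tendsto_of_tendsto_of_le_of_le'
      (hΦ.mono_left (nhdsWithin_mono μ hsub)) (hΨ.mono_left (nhdsWithin_mono μ hsub))
    · filter_upwards [hUev.filter_mono nhdsWithin_le_nhds, self_mem_nhdsWithin]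
        with μ' hμ'U hμ'lt
      rw [slope_def_field, slope_def_field]
      apply div_le_div_of_nonpos_of_le (by simp only [Set.mem_Iio] at hμ'lt; linarith)
      have e1 : g μ' = K μ' (sel μ') := hgval μ' hμ'U
      have e2 : K μ (sel μ') ≤ g μ := by rw [hgμ]; exact hmax (sel μ') (hselA μ' hμ'U)
      linarith
    · filter_upwards [hUev.filter_mono nhdsWithin_le_nhds, self_mem_nhdsWithin]
        with μ' hμ'U hμ'lt
      rw [slope_def_field, slope_def_field]
      apply div_le_div_of_nonpos_of_le (by simp only [Set.mem_Iio] at hμ'lt; linarith)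
      have e1 : g μ' = K μ' (sel μ') := hgval μ' hμ'U
      have e2 : K μ' sm ≤ K μ' (sel μ') := hselmax μ' hμ'U sm hsm
      rw [hgμ]
      linarith
  have hright : Tendsto (slope g μ) (𝓝[>] μ) (𝓝 (h μ sm)) := by
    have hsub : Set.Ioi μ ⊆ {μ}ᶜ := fun x hx => (ne_of_gt hx)
    apply tendsto_of_tendsto_of_tendsto_of_le_of_le'
      (hΨ.mono_left (nhdsWithin_mono μ hsub)) (hΦ.mono_left (nhdsWithin_mono μ hsub))
    · filter_upwards [hUev.filter_mono nhdsWithin_le_nhds, self_mem_nhdsWithin]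
        with μ' hμ'U hμ'gt
      rw [slope_def_field, slope_def_field]
      have hpos : (0:ℝ) < μ' - μ := by simp only [Set.mem_Ioi] at hμ'gt; linarith
      have e1 : g μ' = K μ' (sel μ') := hgval μ' hμ'U
      have e2 : K μ' sm ≤ K μ' (sel μ') := hselmax μ' hμ'U sm hsm
      have hnum : K μ' sm - K μ sm ≤ g μ' - g μ := by rw [hgμ]; linarith
      exact div_le_div_of_nonneg_right' hnum hpos
    · filter_upwards [hUev.filter_mono nhdsWithin_le_nhds, self_mem_nhdsWithin]
        with μ' hμ'U hμ'gt
      rw [slope_def_field, slope_def_field]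
      have hpos : (0:ℝ) < μ' - μ := by simp only [Set.mem_Ioi] at hμ'gt; linarith
      have e1 : g μ' = K μ' (sel μ') := hgval μ' hμ'U
      have e2 : K μ (sel μ') ≤ g μ := by rw [hgμ]; exact hmax (sel μ') (hselA μ' hμ'U)
      have hnum : g μ' - g μ ≤ K μ' (sel μ') - K μ (sel μ') := by linarith
      exact div_le_div_of_nonneg_right' hnum hpos
  rw [show (𝓝[≠] μ) = (𝓝[<] μ) ⊔ (𝓝[>] μ) from (nhdsLT_sup_nhdsGT μ).symm,
    tendsto_sup]
  exact ⟨hleft, hright⟩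

/-- Construction of the truncation `σ` in the degenerate-endpoint case. -/
lemma tail_construction (hsupp : F (Set.Ioi 1) = 0) (habs : Integrable (fun x : ℝ => |x|) F)
    {μ δ : ℝ} (hμ : μ < 1) (hδ : 0 < δ) (hδle : δ ≤ (1 - μ) / 2)
    (hbad : ¬ (F {x : ℝ | 1 ≤ x} = 0 ∧ Integrable (fun x : ℝ => Real.log (1 - x)) F)) :
    ∃ σ : ℝ, 0 < σ ∧ σ < 1 ∧
      ∀ μ' ∈ Metric.ball μ δ, ∀ s ∈ Set.Ico σ (1:ℝ), KK F μ' s ≤ -1 := by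
  set B : ℝ := 1 - μ + δ with hBdef
  have hB0 : 0 < B := by simp only [hBdef]; linarith
  have hball1 : ∀ μ' ∈ Metric.ball μ δ, δ < 1 - μ' ∧ 1 - μ' ≤ B := by
    intro μ' hm
    rw [Metric.mem_ball, Real.dist_eq, abs_lt] at hm
    constructor
    · linarith [hm.2]
    · simp only [hBdef]; linarith [hm.1]
  set φ : ℕ → ℝ → ℝ := fun M x => Real.log (max (1 - x) (Real.exp (-(M:ℝ)))) with hφdef
  have hφmeas : ∀ M, Measurable (φ M) := fun M =>
    Real.measurable_log.comp ((measurable_const.sub measurable_id).max measurable_const)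
  have hφanti : ∀ (M : ℕ) x, φ M x ≤ φ 0 x := by
    intro M x
    apply Real.log_le_log (lt_of_lt_of_le (Real.exp_pos _) (le_max_right _ _))
    apply max_le_max le_rfl
    apply Real.exp_le_exp.2
    simp
  have hφ0 : ∀ x : ℝ, φ 0 x = Real.log (max (1 - x) 1) := by
    intro x; simp [hφdef]
  have hφ0nonneg : ∀ x : ℝ, 0 ≤ φ 0 x := fun x => by
    rw [hφ0]; exact Real.log_nonneg (le_max_right _ _)
  have hφint : ∀ M, Integrable (φ M) F := by
    intro M
    apply Integrable.mono' ((integrable_const ((M:ℝ) + 1)).add habs)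
      (hφmeas M).aestronglyMeasurable
    filter_upwards with x
    have hmax_lb : Real.exp (-(M:ℝ)) ≤ max (1 - x) (Real.exp (-(M:ℝ))) := le_max_right _ _
    have h1 := abs_log_le (Real.exp_pos (-(M:ℝ))) hmax_lb
    rw [Real.log_exp, abs_neg, Nat.abs_cast] at h1
    have h2 : max (1 - x) (Real.exp (-(M:ℝ))) ≤ 1 + |x| := by
      apply max_le
      · linarith [neg_abs_le x]
      · have he : Real.exp (-(M:ℝ)) ≤ 1 := Real.exp_le_one_iff.2 (by simp)
        linarith [abs_nonneg x]
    rw [Real.norm_eq_abs]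
    simp only [Pi.add_apply]
    simp only [hφdef] at h1 ⊢
    linarith
  have hdiv : ∀ R : ℝ, ∃ M : ℕ, ∫ x, φ M x ∂F ≤ R := by
    set ρ : ℕ → ℝ → ℝ := fun M x => φ 0 x - φ M x with hρdef
    have hρmeas : ∀ M : ℕ, Measurable fun x => ENNReal.ofReal (ρ M x) := fun M =>
      ENNReal.measurable_ofReal.comp ((hφmeas 0).sub (hφmeas M))
    have hρmono : Monotone fun M : ℕ => fun x => ENNReal.ofReal (ρ M x) := by
      intro M N hMN
      intro x
      apply ENNReal.ofReal_le_ofReal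
      simp only [hρdef]
      have : φ N x ≤ φ M x := by
        apply Real.log_le_log (lt_of_lt_of_le (Real.exp_pos _) (le_max_right _ _))
        apply max_le_max le_rfl
        apply Real.exp_le_exp.2
        simp only [neg_le_neg_iff, Nat.cast_le]
        exact hMN
      linarith
    have hsup := lintegral_iSup (μ := F) hρmeas hρmono
    have htop : ∫⁻ x, ⨆ M : ℕ, ENNReal.ofReal (ρ M x) ∂F = ∞ := by
      by_cases h1 : F {x : ℝ | 1 ≤ x} = 0
      · have hni : ¬ Integrable (fun x : ℝ => Real.log (1 - x)) F := fun h => hbad ⟨h1, h⟩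
        have hlt1 : ∀ᵐ x ∂F, x < 1 := ae_lt_one hsupp h1
        have hmeas_log : Measurable fun x : ℝ => Real.log (1 - x) :=
          Real.measurable_log.comp (measurable_const.sub measurable_id)
        have hpos_fin : ∫⁻ x, ENNReal.ofReal (Real.log (1 - x)) ∂F < ∞ := by
          have hb : ∀ᵐ x ∂F, ENNReal.ofReal (Real.log (1 - x)) ≤
              ENNReal.ofReal (1 + |x|) := by
            filter_upwards [hlt1] with x hx
            apply ENNReal.ofReal_le_ofReal
            have h1x : 0 < 1 - x := by linarith
            have := Real.log_le_sub_one_of_pos h1x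
            linarith [neg_abs_le x, abs_nonneg x]
          calc ∫⁻ x, ENNReal.ofReal (Real.log (1 - x)) ∂F
              ≤ ∫⁻ x, ENNReal.ofReal (1 + |x|) ∂F := lintegral_mono_ae hb
            _ < ∞ := ((integrable_const (1:ℝ)).add habs).lintegral_lt_top
        have htot : ∫⁻ x, ENNReal.ofReal |Real.log (1 - x)| ∂F = ∞ := by
          by_contra hne'
          apply hni
          refine ⟨hmeas_log.aestronglyMeasurable, ?_⟩
          rw [hasFiniteIntegral_iff_norm]
          simp only [Real.norm_eq_abs]
          exact lt_top_iff_ne_top.2 hne'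
        have hneg_top : ∫⁻ x, ENNReal.ofReal (-Real.log (1 - x)) ∂F = ∞ := by
          by_contra hne'
          have hsplit : ∀ x : ℝ, ENNReal.ofReal |Real.log (1 - x)| ≤
              ENNReal.ofReal (Real.log (1 - x)) + ENNReal.ofReal (-Real.log (1 - x)) := by
            intro x
            rcases le_total 0 (Real.log (1 - x)) with hc | hc
            · rw [abs_of_nonneg hc]; exact le_self_add
            · rw [abs_of_nonpos hc]; exact le_add_self
          have hle := lintegral_mono (μ := F) hsplit
          rw [lintegral_add_left hmeas_log.ennreal_ofReal] at hle
          rw [htot] at hle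
          have : (∞ : ℝ≥0∞) < ∞ := lt_of_le_of_lt hle
            (ENNReal.add_lt_top.2 ⟨hpos_fin, lt_top_iff_ne_top.2 hne'⟩)
          exact absurd this (lt_irrefl _)
        rw [eq_top_iff, ← hneg_top]
        apply lintegral_mono_ae
        filter_upwards [hlt1] with x hx
        obtain ⟨M, hM⟩ := exists_nat_ge (-Real.log (1 - x))
        have h1x : 0 < 1 - x := by linarith
        have hexp : Real.exp (-(M:ℝ)) ≤ 1 - x := by
          rw [← Real.exp_log h1x]
          exact Real.exp_le_exp.2 (by linarith)
        have hφM : φ M x = Real.log (1 - x) := by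
          simp only [hφdef]
          rw [max_eq_left hexp]
        calc ENNReal.ofReal (-Real.log (1 - x)) ≤ ENNReal.ofReal (ρ M x) := by
              apply ENNReal.ofReal_le_ofReal
              simp only [hρdef, hφM]
              linarith [hφ0nonneg x]
          _ ≤ ⨆ M : ℕ, ENNReal.ofReal (ρ M x) :=
              le_iSup (fun M : ℕ => ENNReal.ofReal (ρ M x)) M
      · have hS : MeasurableSet {x : ℝ | 1 ≤ x} := measurableSet_le measurable_const measurable_id
        have hval : ∀ x ∈ {x : ℝ | 1 ≤ x}, (⨆ M : ℕ, ENNReal.ofReal (ρ M x)) = ∞ := by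
          intro x hx
          simp only [mem_setOf_eq] at hx
          rw [iSup_eq_top]
          intro b hb
          obtain ⟨M, hM⟩ := exists_nat_gt b.toReal
          refine ⟨M, ?_⟩
          have hφMx : φ M x = -(M:ℝ) := by
            simp only [hφdef]
            rw [max_eq_right (le_trans (by linarith) (Real.exp_pos _).le), Real.log_exp]
          have hφ0x : φ 0 x = 0 := by
            rw [hφ0, max_eq_right (by linarith : 1 - x ≤ 1), Real.log_one]
          have hρval : ρ M x = M := by simp [hρdef, hφMx, hφ0x]
          rw [hρval]
          calc b = ENNReal.ofReal b.toReal := (ENNReal.ofReal_toReal hb.ne).symm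
            _ < ENNReal.ofReal M := by
                rw [ENNReal.ofReal_lt_ofReal_iff (lt_of_le_of_lt ENNReal.toReal_nonneg hM)]
                exact hM
        rw [eq_top_iff]
        calc (∞:ℝ≥0∞) = ∞ * F {x : ℝ | 1 ≤ x} := (ENNReal.top_mul h1).symm
          _ = ∫⁻ x in {x : ℝ | 1 ≤ x}, ∞ ∂F := (setLIntegral_const _ _).symm
          _ = ∫⁻ x in {x : ℝ | 1 ≤ x}, ⨆ M : ℕ, ENNReal.ofReal (ρ M x) ∂F := by
              exact setLIntegral_congr_fun hS (fun x hx => (hval x hx).symm)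
          _ ≤ ∫⁻ x, ⨆ M : ℕ, ENNReal.ofReal (ρ M x) ∂F := setLIntegral_le_lintegral _ _
    intro R
    have hsup_top : ⨆ M : ℕ, ∫⁻ x, ENNReal.ofReal (ρ M x) ∂F = ∞ := by
      rw [← hsup]; exact htop
    have hc : ENNReal.ofReal (∫ x, φ 0 x ∂F - R) < ⨆ M : ℕ, ∫⁻ x, ENNReal.ofReal (ρ M x) ∂F := by
      rw [hsup_top]; exact ENNReal.ofReal_lt_top
    obtain ⟨M, hM⟩ := lt_iSup_iff.1 hc
    refine ⟨M, ?_⟩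
    have hρint : Integrable (fun x => ρ M x) F := (hφint 0).sub (hφint M)
    have hρnn : 0 ≤ᵐ[F] fun x => ρ M x := ae_of_all _ fun x => by
      simp only [hρdef, Pi.zero_apply, sub_nonneg]
      exact hφanti M x
    have hρval2 : ∫ x, ρ M x ∂F = (∫⁻ x, ENNReal.ofReal (ρ M x) ∂F).toReal :=
      integral_eq_lintegral_of_nonneg_ae hρnn hρint.aestronglyMeasurable
    have hfin : ∫⁻ x, ENNReal.ofReal (ρ M x) ∂F ≠ ∞ := hρint.lintegral_lt_top.ne
    have hsubval : ∫ x, ρ M x ∂F = ∫ x, φ 0 x ∂F - ∫ x, φ M x ∂F :=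
      integral_sub (hφint 0) (hφint M)
    rcases le_or_gt (∫ x, φ 0 x ∂F - R) 0 with hc0 | hc0
    · have hnn := integral_nonneg_of_ae hρnn
      linarith
    · have hlt := (ENNReal.ofReal_lt_iff_lt_toReal hc0.le hfin).1 hM
      rw [← hρval2] at hlt
      linarith
  set C₁ : ℝ := -Real.log δ with hC₁def
  obtain ⟨M₀, hM₀⟩ := hdiv (-1 - Real.log 2 - C₁)
  set u₀ : ℝ := Real.exp (-(M₀:ℝ)) / 2 with hu₀def
  have hu₀pos : 0 < u₀ := by positivity
  set σ : ℝ := max (1 - u₀ / B) (1/2) with hσdef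
  have hσ1 : σ < 1 := by
    apply max_lt
    · have : 0 < u₀ / B := by positivity
      linarith
    · norm_num
  have hσ0 : 0 < σ := lt_of_lt_of_le (by norm_num) (le_max_right _ _)
  refine ⟨σ, hσ0, hσ1, ?_⟩
  intro μ' hμ'mem s hs
  obtain ⟨hδ1μ', hBμ'⟩ := hball1 μ' hμ'mem
  have hμ'1 : μ' < 1 := by linarith
  have hs1 : s < 1 := hs.2
  have hs0 : 0 ≤ s := le_trans hσ0.le hs.1
  set u : ℝ := (1 - s) * B with hudef
  have hu_pos : 0 < u := by
    have : 0 < 1 - s := by linarith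
    positivity
  have hu_le : u ≤ u₀ := by
    have h1 : 1 - u₀ / B ≤ σ := le_max_left _ _
    have h2 : 1 - s ≤ u₀ / B := by linarith [hs.1]
    calc u = (1 - s) * B := rfl
      _ ≤ (u₀ / B) * B := by nlinarith
      _ = u₀ := by field_simp
  have hptwise : ∀ᵐ x ∂F, Real.log (qf μ' s x) ≤ φ M₀ x + Real.log 2 := by
    filter_upwards [ae_le_one hsupp] with x hx
    have hq_pos : 0 < qf μ' s x := qf_pos hx hμ'1 hs0 hs1
    have hq_ub : qf μ' s x ≤ u + (1 - x) := qf_ub hx hs0 hs1.le hBμ'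
    have h2u : 2 * u ≤ Real.exp (-(M₀:ℝ)) := by
      rw [hu₀def] at hu_le; linarith
    have hmax_pos : 0 < max (1 - x) (Real.exp (-(M₀:ℝ))) :=
      lt_of_lt_of_le (Real.exp_pos _) (le_max_right _ _)
    have harg : qf μ' s x ≤ 2 * max (1 - x) (Real.exp (-(M₀:ℝ))) := by
      rcases le_total u (1 - x) with hc | hc
      · have := le_max_left (1 - x) (Real.exp (-(M₀:ℝ)))
        linarith
      · have := le_max_right (1 - x) (Real.exp (-(M₀:ℝ)))
        linarith
    calc Real.log (qf μ' s x) ≤ Real.log (2 * max (1 - x) (Real.exp (-(M₀:ℝ)))) :=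
          Real.log_le_log hq_pos harg
      _ = Real.log 2 + φ M₀ x := by
          rw [Real.log_mul two_ne_zero (ne_of_gt hmax_pos)]
      _ = φ M₀ x + Real.log 2 := by ring
  have hint_s : Integrable (fun x => Real.log (qf μ' s x)) F :=
    int_log_qf hsupp habs hμ'1 hs0 hs1
  have hmono := integral_mono_ae hint_s ((hφint M₀).add (integrable_const (Real.log 2))) hptwise
  simp only [Pi.add_apply] at hmono
  have hrint : ∫ x, (φ M₀ x + Real.log 2) ∂F = ∫ x, φ M₀ x ∂F + Real.log 2 := by
    rw [integral_add (hφint M₀) (integrable_const _), integral_const]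
    simp
  have hlogμ' : -Real.log (1 - μ') ≤ C₁ := by
    simp only [hC₁def, neg_le_neg_iff]
    exact Real.log_le_log hδ hδ1μ'.le
  simp only [KK]
  have hm2 : ∫ x, Real.log (qf μ' s x) ∂F ≤ ∫ x, φ M₀ x ∂F + Real.log 2 := by
    rw [← hrint]; exact hmono
  linarith [hM₀]

end Stmt7Aux
end

set_option maxHeartbeats 1000000 in
/-- (Lemma `lem_bibun`.) For `E(F) < μ < 1` the map
`μ' ↦ D̃_inf(F,μ')` is differentiable at `μ` with derivative `ν*(F,μ)`, the unique
maximizer of `L(·;F,μ)` on `[0,1/(1-μ)]`; in particular the derivative is at most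
`1/(1-μ)`. -/
theorem stmt7 (F : Measure ℝ) [IsProbabilityMeasure F] (hsupp : F (Set.Ioi 1) = 0)
    (hmgf : MGFNearZero F) (μ : ℝ) (hEF : ∫ x, x ∂F < μ) (hμ : μ < 1) :
    ∃ ν' ∈ Set.Icc (0 : ℝ) (1 - μ)⁻¹,
      (∀ ν ∈ Set.Icc (0 : ℝ) (1 - μ)⁻¹, LL F μ ν ≤ LL F μ ν') ∧
      (∀ ν'' ∈ Set.Icc (0 : ℝ) (1 - μ)⁻¹,
        (∀ ν ∈ Set.Icc (0 : ℝ) (1 - μ)⁻¹, LL F μ ν ≤ LL F μ ν'') → ν'' = ν') ∧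
      HasDerivAt (fun μ' => (Dtilde F μ').toReal) ν' μ ∧ ν' ≤ (1 - μ)⁻¹ := by
  classical
  obtain ⟨habs, hsq⟩ := Stmt7Aux.integrable_abs_of_mgf hmgf
  set δ : ℝ := (1 - μ) / 2 with hδdef
  have hδ0 : 0 < δ := by simp only [hδdef]; linarith
  have hδle : δ ≤ (1 - μ) / 2 := le_refl _
  set B : ℝ := 1 - μ + δ with hBdef
  have hB0 : 0 < B := by simp only [hBdef]; linarith
  have hball_facts : ∀ μ' ∈ Metric.ball μ δ, μ' < 1 ∧ δ < 1 - μ' ∧ 1 - μ' ≤ B := by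
    intro μ' hm
    rw [Metric.mem_ball, Real.dist_eq, abs_lt] at hm
    refine ⟨by simp only [hδdef] at hm ⊢; linarith [hm.2], ?_, ?_⟩
    · simp only [hδdef] at hm ⊢; linarith [hm.2]
    · simp only [hBdef]; linarith [hm.1]
  have key : ∃ σ D, Stmt7Aux.Pack F μ σ δ D ∧ Stmt7Aux.TailSmall F μ σ δ ∧
      (σ < 1 → Stmt7Aux.KK F μ σ ≤ -1) := by
    by_cases hgood : F {x : ℝ | 1 ≤ x} = 0 ∧ Integrable (fun x : ℝ => Real.log (1 - x)) F
    · -- endpoint-finite case: σ = 1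
      refine ⟨1, fun x => |Real.log (1 - x)| + ((|Real.log δ| + B + 1) + |x|), ?_, ?_, ?_⟩
      · refine ⟨one_pos, le_refl 1, hδ0, hδle, ?_, ?_, ?_, ?_⟩
        · exact hgood.2.abs.add ((integrable_const _).add habs)
        · filter_upwards [Stmt7Aux.ae_lt_one hsupp hgood.1] with x hx
          intro s hs μ' hμ'
          exact Stmt7Aux.qf_pos' hx (hball_facts μ' hμ').1 hs.1 hs.2
        · filter_upwards [Stmt7Aux.ae_lt_one hsupp hgood.1] with x hx
          intro s hs μ' hμ'
          obtain ⟨hμ'1, hδ1, hB1⟩ := hball_facts μ' hμ'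
          have hq_pos := Stmt7Aux.qf_pos' hx hμ'1 hs.1 hs.2
          have hub := Stmt7Aux.qf_ub (le_of_lt hx) hs.1 hs.2 hB1
          have hup : Real.log (Stmt7Aux.qf μ' s x) ≤ B + 1 + |x| := by
            have h1 := Real.log_le_sub_one_of_pos hq_pos
            have h2 : (1 - s) * B ≤ B := by nlinarith [hs.1, hs.2]
            have h3 : 1 - x ≤ 1 + |x| := by linarith [neg_abs_le x]
            linarith
          have hlb := Stmt7Aux.qf_min_le (μ' := μ') (x := x) hs.1 hs.2
          have hlow : -(|Real.log (1 - x)| + |Real.log δ|) ≤ Real.log (Stmt7Aux.qf μ' s x) := by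
            rcases le_total (1 - μ') (1 - x) with hc | hc
            · rw [min_eq_left hc] at hlb
              have e1 : Real.log (1 - μ') ≤ Real.log (Stmt7Aux.qf μ' s x) :=
                Real.log_le_log (by linarith) hlb
              have e2 : Real.log δ ≤ Real.log (1 - μ') := Real.log_le_log hδ0 hδ1.le
              have e3 := neg_abs_le (Real.log δ)
              have e4 := abs_nonneg (Real.log (1 - x))
              linarith
            · rw [min_eq_right hc] at hlb
              have e1 : Real.log (1 - x) ≤ Real.log (Stmt7Aux.qf μ' s x) :=
                Real.log_le_log (by linarith) hlb
              have e3 := neg_abs_le (Real.log (1 - x))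
              have e4 := abs_nonneg (Real.log δ)
              linarith
          rw [abs_le]
          constructor
          · have := abs_nonneg x
            linarith
          · have e4 := abs_nonneg (Real.log (1 - x))
            have e5 := abs_nonneg (Real.log δ)
            linarith
        · intro μ' hμ' s hs
          obtain ⟨hμ'1, hδ1, hB1⟩ := hball_facts μ' hμ'
          rcases lt_or_eq_of_le hs.2 with h | h
          · exact ⟨Stmt7Aux.int_log_qf hsupp habs hμ'1 hs.1 h,
              Stmt7Aux.null_qf hsupp hμ'1 hs.1 h⟩
          · subst h
            constructor
            · have heq : (fun x => Real.log (Stmt7Aux.qf μ' 1 x))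
                  = fun x => Real.log (1 - x) := by
                funext x; simp [Stmt7Aux.qf]
              rw [heq]; exact hgood.2
            · have hset : {x : ℝ | Stmt7Aux.qf μ' 1 x ≤ 0} = {x : ℝ | 1 ≤ x} := by
                ext x
                simp only [Stmt7Aux.qf, Set.mem_setOf_eq]
                constructor <;> intro h <;> nlinarith
              rw [hset]; exact hgood.1
      · intro μ' _ s hs
        exact absurd hs.2 (not_le.2 hs.1)
      · intro h; exact absurd h (lt_irrefl 1)
    · -- degenerate-endpoint case
      obtain ⟨σ, hσ0, hσ1, htb⟩ := Stmt7Aux.tail_construction hsupp habs hμ hδ0 hδle hgood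
      have hqf1 : ∀ μ' x : ℝ, Stmt7Aux.qf μ' 1 x = 1 - x := by
        intro μ' x; simp [Stmt7Aux.qf]
      refine ⟨σ, fun x => (|Real.log ((1 - σ) * δ)| + B + 1) + |x|, ?_, ?_, ?_⟩
      · refine ⟨hσ0, hσ1.le, hδ0, hδle, (integrable_const _).add habs, ?_, ?_, ?_⟩
        · filter_upwards [Stmt7Aux.ae_le_one hsupp] with x hx
          intro s hs μ' hμ'
          exact Stmt7Aux.qf_pos hx (hball_facts μ' hμ').1 hs.1 (lt_of_le_of_lt hs.2 hσ1)
        · filter_upwards [Stmt7Aux.ae_le_one hsupp] with x hx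
          intro s hs μ' hμ'
          obtain ⟨hμ'1, hδ1, hB1⟩ := hball_facts μ' hμ'
          have hcpos : 0 < (1 - σ) * δ := by nlinarith
          have hcq : (1 - σ) * δ ≤ Stmt7Aux.qf μ' s x := by
            have h1 := Stmt7Aux.qf_lb1 (μ' := μ') (s := s) hx hs.1
            nlinarith [hs.2]
          have h2 := Stmt7Aux.abs_log_le hcpos hcq
          have hub := Stmt7Aux.qf_ub hx hs.1 (hs.2.trans hσ1.le) hB1
          have h3 : 1 - x ≤ 1 + |x| := by linarith [neg_abs_le x]
          have h4 : (1 - s) * B ≤ B := by nlinarith [hs.1, hs.2.trans hσ1.le]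
          linarith
        · intro μ' hμ' s hs
          obtain ⟨hμ'1, hδ1, hB1⟩ := hball_facts μ' hμ'
          have hs1 : s < 1 := lt_of_le_of_lt hs.2 hσ1
          exact ⟨Stmt7Aux.int_log_qf hsupp habs hμ'1 hs.1 hs1,
            Stmt7Aux.null_qf hsupp hμ'1 hs.1 hs1⟩
      · intro μ' hμ' s hs
        obtain ⟨hμ'1, hδ1, hB1⟩ := hball_facts μ' hμ'
        rcases lt_or_eq_of_le hs.2 with h | h
        · have hbd := htb μ' hμ' s ⟨hs.1.le, h⟩
          rw [Stmt7Aux.LL_eq hμ'1 s, if_pos ⟨Stmt7Aux.int_log_qf hsupp habs hμ'1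
            (hσ0.le.trans hs.1.le) h, Stmt7Aux.null_qf hsupp hμ'1 (hσ0.le.trans hs.1.le) h⟩]
          have : Stmt7Aux.KK F μ' s ≤ 0 := le_trans hbd (by norm_num)
          exact_mod_cast this
        · subst h
          rw [Stmt7Aux.LL_eq hμ'1 1, if_neg]
          · exact bot_le
          · rintro ⟨hint, hnull⟩
            apply hgood
            constructor
            · have hset : {x : ℝ | Stmt7Aux.qf μ' 1 x ≤ 0} = {x : ℝ | 1 ≤ x} := by
                ext x
                simp only [hqf1, Set.mem_setOf_eq]
                constructor <;> intro h <;> linarith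
              rw [← hset]; exact hnull
            · have heq : (fun x => Real.log (Stmt7Aux.qf μ' 1 x))
                  = fun x => Real.log (1 - x) := by
                funext x; rw [hqf1]
              rw [← heq]; exact hint
      · intro _
        exact htb μ (Metric.mem_ball_self hδ0) σ ⟨le_refl σ, hσ1⟩
  obtain ⟨σ, D, P, htail, hσKK⟩ := key
  have hμball : μ ∈ Metric.ball μ δ := Metric.mem_ball_self P.hδ
  have hKc : ContinuousOn (Stmt7Aux.KK F μ) (Set.Icc (0:ℝ) σ) :=
    P.KKcont.comp (Continuous.prodMk_right μ).continuousOn fun s hs => Set.mk_mem_prod hμball hs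
  obtain ⟨sm, hsmmem, hsmmax⟩ := isCompact_Icc.exists_isMaxOn
    (Set.nonempty_Icc.2 P.hσ0.le) hKc
  have hsmmax' := isMaxOn_iff.1 hsmmax
  have hpos : 0 < Stmt7Aux.KK F μ sm := by
    obtain ⟨s₀, hs₀, hval⟩ := P.exists_pos hsupp habs hsq hEF
    exact lt_of_lt_of_le hval (hsmmax' s₀ hs₀)
  have hsm0 : 0 < sm := by
    rcases lt_or_eq_of_le hsmmem.1 with h | h
    · exact h
    · exfalso
      rw [← h, Stmt7Aux.KK_zero] at hpos
      exact lt_irrefl 0 hpos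
  have h1μ : (0:ℝ) < 1 - μ := by linarith
  set ν' : ℝ := sm * (1 - μ)⁻¹ with hν'def
  have hν'mem : ν' ∈ Set.Icc (0:ℝ) (1 - μ)⁻¹ := by
    constructor
    · exact mul_nonneg hsm0.le (inv_nonneg.2 h1μ.le)
    · have hsm1' : sm ≤ 1 := hsmmem.2.trans P.hσ1
      nlinarith [inv_pos.2 h1μ]
  have hderiv_val : Stmt7Aux.hhf F μ sm = ν' := by
    rcases lt_or_eq_of_le (hsmmem.2.trans P.hσ1) with hsm1 | hsm1
    · have hsmσ : sm < σ := by
        rcases lt_or_eq_of_le hsmmem.2 with h | h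
        · exact h
        · exfalso
          have hσlt1 : σ < 1 := by rw [← h]; exact hsm1
          have := hσKK hσlt1
          rw [← h] at this
          linarith
      exact P.foc hsupp habs hsm0 hsm1 hsmσ hsmmax'
    · rw [hsm1, Stmt7Aux.hhf_one, hν'def, hsm1, one_mul]
  have huniqK : ∀ s ∈ Set.Icc (0:ℝ) σ, Stmt7Aux.KK F μ sm ≤ Stmt7Aux.KK F μ s → s = sm := by
    intro s hs hle
    exact P.uniq hEF hs hsmmem (fun t ht => le_trans (hsmmax' t ht) hle) hsmmax'
  have hdanskin := Stmt7Aux.danskin (C := 2 / δ) P.hσ0 P.hδ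
    (P.KKderiv hsupp) (P.hhf_bound hsupp)
    (fun μ' hμ' => P.KKcont.comp (Continuous.prodMk_right μ').continuousOn
      fun s hs => Set.mk_mem_prod hμ' hs)
    ((P.hhfcont hsupp) (μ, sm) (Set.mk_mem_prod hμball hsmmem))
    hsmmem hsmmax' huniqK
  rw [hderiv_val] at hdanskin
  have hev : (fun μ' => (Dtilde F μ').toReal)
      =ᶠ[𝓝 μ] fun μ' => sSup (Stmt7Aux.KK F μ' '' Set.Icc (0:ℝ) σ) := by
    filter_upwards [Metric.ball_mem_nhds μ P.hδ] with μ' hμ'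
    rw [P.dtilde_eq htail hμ']
    simp
  have hD : HasDerivAt (fun μ' => (Dtilde F μ').toReal) ν' μ :=
    hdanskin.congr_of_eventuallyEq hev
  have hcond_sm := P.hcond μ hμball sm hsmmem
  have hLLν' : LL F μ ν' = ((Stmt7Aux.KK F μ sm : ℝ) : EReal) := by
    rw [hν'def, Stmt7Aux.LL_eq hμ sm, if_pos hcond_sm]
  have hmaxLL : ∀ ν ∈ Set.Icc (0:ℝ) (1 - μ)⁻¹, LL F μ ν ≤ LL F μ ν' := by
    intro ν hν
    have hseq : ν * (1 - μ) * (1 - μ)⁻¹ = ν := by field_simp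
    have hsmem : ν * (1 - μ) ∈ Set.Icc (0:ℝ) 1 := by
      constructor
      · exact mul_nonneg hν.1 h1μ.le
      · have := hν.2
        calc ν * (1 - μ) ≤ (1 - μ)⁻¹ * (1 - μ) := by nlinarith
          _ = 1 := inv_mul_cancel₀ (ne_of_gt h1μ)
    rw [← hseq, hLLν']
    by_cases hsσ : ν * (1 - μ) ≤ σ
    · rw [Stmt7Aux.LL_eq hμ (ν * (1 - μ)), if_pos (P.hcond μ hμball _ ⟨hsmem.1, hsσ⟩)]
      exact_mod_cast hsmmax' _ ⟨hsmem.1, hsσ⟩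
    · refine le_trans (htail μ hμball _ ⟨lt_of_not_ge hsσ, hsmem.2⟩) ?_
      exact_mod_cast hpos.le
  have huniqLL : ∀ ν'' ∈ Set.Icc (0:ℝ) (1 - μ)⁻¹,
      (∀ ν ∈ Set.Icc (0:ℝ) (1 - μ)⁻¹, LL F μ ν ≤ LL F μ ν'') → ν'' = ν' := by
    intro ν'' hν'' hmax''
    have hseq : ν'' * (1 - μ) * (1 - μ)⁻¹ = ν'' := by field_simp
    have hs''mem : ν'' * (1 - μ) ∈ Set.Icc (0:ℝ) 1 := by
      constructor
      · exact mul_nonneg hν''.1 h1μ.le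
      · have := hν''.2
        calc ν'' * (1 - μ) ≤ (1 - μ)⁻¹ * (1 - μ) := by nlinarith
          _ = 1 := inv_mul_cancel₀ (ne_of_gt h1μ)
    have hge : LL F μ ν' ≤ LL F μ ν'' := hmax'' ν' hν'mem
    rw [hLLν'] at hge
    by_cases hsσ : ν'' * (1 - μ) ≤ σ
    · have hc := P.hcond μ hμball _ ⟨hs''mem.1, hsσ⟩
      rw [← hseq, Stmt7Aux.LL_eq hμ (ν'' * (1 - μ)), if_pos hc] at hge
      have hKKge : Stmt7Aux.KK F μ sm ≤ Stmt7Aux.KK F μ (ν'' * (1 - μ)) := by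
        exact_mod_cast hge
      have heq := huniqK _ ⟨hs''mem.1, hsσ⟩ hKKge
      rw [← hseq, heq, hν'def]
    · exfalso
      have h1 := htail μ hμball _ ⟨lt_of_not_ge hsσ, hs''mem.2⟩
      rw [← hseq] at hge
      have h2 : ((Stmt7Aux.KK F μ sm : ℝ) : EReal) ≤ (0 : EReal) := le_trans hge h1
      have h3 : Stmt7Aux.KK F μ sm ≤ 0 := by exact_mod_cast h2
      linarith
  exact ⟨ν', hν'mem, hmaxLL, huniqLL, hD, hν'mem.2⟩
end
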